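/- arXiv:1111.3159 — 6 statements merged into one kernel-verified Lean document; each statement's English description precedes it below -/
import Mathlib

section
/- Let X = {X_ij : 1 ≤ i,j ≤ n} be an n×n array of independent real random variables with n ≥ 2, E X_ij = c_ij, Var X_ij = σ_ij² ≥ 0 and E|X_ij|³ < ∞, and suppose Σ_{j=1}^n c_ij = 0 for every i and Σ_{i=1}^n c_ij = 0 for every j. Let π be a uniformly random permutation of {1,…,n} independent of X and let W = Σ_{i=1}^n X_{iπ(i)}. Then Var(W) = (1/n) Σ_{i,j=1}^n σ_ij² + (1/(n−1)) Σ_{i,j=1}^n c_ij². -/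
open Finset

variable {n : ℕ}

lemma fiber_card_single (i j k : Fin n) :
    (univ.filter fun σ : Equiv.Perm (Fin n) => σ i = j).card
      = (univ.filter fun σ : Equiv.Perm (Fin n) => σ i = k).card := by
  apply Finset.card_bij' (fun σ _ => Equiv.swap j k * σ) (fun σ _ => Equiv.swap j k * σ)
  · intro σ hσ
    simp only [mem_filter, mem_univ, true_and] at hσ ⊢
    simp [hσ]
  · intro σ hσ
    simp only [mem_filter, mem_univ, true_and] at hσ ⊢
    simp [hσ, Equiv.swap_apply_right]
  · intro σ _; simp [← mul_assoc]
  · intro σ _; simp [← mul_assoc]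

lemma mul_card_fiber_single (i j : Fin n) :
    n * (univ.filter fun σ : Equiv.Perm (Fin n) => σ i = j).card = n.factorial := by
  have h := Finset.card_eq_sum_card_fiberwise
    (f := fun σ : Equiv.Perm (Fin n) => σ i) (s := univ) (t := univ) (fun x _ => mem_univ _)
  have h2 : ∀ k : Fin n, (univ.filter fun σ : Equiv.Perm (Fin n) => σ i = k).card
      = (univ.filter fun σ : Equiv.Perm (Fin n) => σ i = j).card :=
    fun k => fiber_card_single i k j
  rw [Finset.sum_congr rfl (fun k _ => h2 k), Finset.sum_const] at h
  simp only [card_univ, Fintype.card_fin, Fintype.card_perm, smul_eq_mul] at h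
  omega

lemma sum_perm_eval (i : Fin n) (g : Fin n → ℝ) :
    (n : ℝ) * ∑ σ : Equiv.Perm (Fin n), g (σ i)
      = (n.factorial : ℝ) * ∑ j, g j := by
  rw [← Finset.sum_fiberwise_of_maps_to (g := fun σ : Equiv.Perm (Fin n) => σ i)
    (t := univ) (fun x _ => mem_univ _) (fun σ => g (σ i))]
  rw [Finset.mul_sum, Finset.mul_sum]
  refine Finset.sum_congr rfl fun j _ => ?_
  have : ∀ σ ∈ univ.filter fun σ : Equiv.Perm (Fin n) => σ i = j, g (σ i) = g j := by
    intro σ hσ; simp only [mem_filter, mem_univ, true_and] at hσ; rw [hσ]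
  rw [Finset.sum_congr rfl this, Finset.sum_const, nsmul_eq_mul, ← mul_assoc,
    ← Nat.cast_mul, mul_card_fiber_single i j]

lemma exists_perm_pair {j j' k k' : Fin n} (h1 : j ≠ j') (h2 : k ≠ k') :
    ∃ τ : Equiv.Perm (Fin n), τ j = k ∧ τ j' = k' := by
  refine ⟨Equiv.swap (Equiv.swap j k j') k' * Equiv.swap j k, ?_, ?_⟩
  · simp only [Equiv.Perm.mul_apply, Equiv.swap_apply_left]
    have hm : Equiv.swap j k j' ≠ k := by
      intro h; apply h1
      have := (Equiv.swap j k).injective (h.trans (Equiv.swap_apply_left j k).symm)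
      exact this.symm ▸ rfl
    rw [Equiv.swap_apply_of_ne_of_ne (Ne.symm hm) h2]
  · simp [Equiv.Perm.mul_apply, Equiv.swap_apply_left]

lemma fiber_card_pair (i i' : Fin n) {j j' k k' : Fin n} (h1 : j ≠ j') (h2 : k ≠ k') :
    (univ.filter fun σ : Equiv.Perm (Fin n) => σ i = j ∧ σ i' = j').card
      = (univ.filter fun σ : Equiv.Perm (Fin n) => σ i = k ∧ σ i' = k').card := by
  obtain ⟨τ, hτ1, hτ2⟩ := exists_perm_pair h1 h2
  apply Finset.card_bij' (fun σ _ => τ * σ) (fun σ _ => τ⁻¹ * σ)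
  · intro σ hσ
    simp only [mem_filter, mem_univ, true_and] at hσ ⊢
    simp [hσ.1, hσ.2, hτ1, hτ2]
  · intro σ hσ
    simp only [mem_filter, mem_univ, true_and] at hσ ⊢
    constructor
    · have : τ (τ⁻¹ (σ i)) = τ j := by rw [hσ.1, hτ1]; simp
      exact τ.injective (by simpa using this)
    · have : τ (τ⁻¹ (σ i')) = τ j' := by rw [hσ.2, hτ2]; simp
      exact τ.injective (by simpa using this)
  · intro σ _; simp [← mul_assoc]
  · intro σ _; simp [← mul_assoc]

lemma mul_card_fiber_pair (i i' : Fin n) (hii : i ≠ i') {j j' : Fin n} (hjj : j ≠ j') :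
    (n * n - n) * (univ.filter fun σ : Equiv.Perm (Fin n) => σ i = j ∧ σ i' = j').card
      = n.factorial := by
  have h := Finset.card_eq_sum_card_fiberwise
    (f := fun σ : Equiv.Perm (Fin n) => (σ i, σ i')) (s := univ)
    (t := (univ : Finset (Fin n)).offDiag)
    (fun σ _ => Finset.mem_offDiag.mpr ⟨mem_univ _, mem_univ _, fun h => hii (σ.injective h)⟩)
  have h2 : ∀ p ∈ (univ : Finset (Fin n)).offDiag,
      (univ.filter fun σ : Equiv.Perm (Fin n) => (σ i, σ i') = p).card
        = (univ.filter fun σ : Equiv.Perm (Fin n) => σ i = j ∧ σ i' = j').card := by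
    intro p hp
    rw [Finset.mem_offDiag] at hp
    have := fiber_card_pair (n := n) i i' (j := p.1) (j' := p.2) hp.2.2 hjj
    rw [← this]
    congr 1
    ext σ
    simp [Prod.ext_iff]
  rw [Finset.sum_congr rfl h2, Finset.sum_const, smul_eq_mul, Finset.offDiag_card] at h
  simp only [card_univ, Fintype.card_fin, Fintype.card_perm] at h
  omega

lemma sum_perm_eval_pair (i i' : Fin n) (hii : i ≠ i') (f : Fin n → Fin n → ℝ) :
    ((n * n - n : ℕ) : ℝ) * ∑ σ : Equiv.Perm (Fin n), f (σ i) (σ i')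
      = (n.factorial : ℝ) * ∑ p ∈ (univ : Finset (Fin n)).offDiag, f p.1 p.2 := by
  rw [← Finset.sum_fiberwise_of_maps_to (g := fun σ : Equiv.Perm (Fin n) => (σ i, σ i'))
    (t := (univ : Finset (Fin n)).offDiag)
    (fun σ _ => Finset.mem_offDiag.mpr ⟨mem_univ _, mem_univ _, fun h => hii (σ.injective h)⟩)
    (fun σ => f (σ i) (σ i'))]
  rw [Finset.mul_sum, Finset.mul_sum]
  refine Finset.sum_congr rfl fun p hp => ?_
  rw [Finset.mem_offDiag] at hp
  have : ∀ σ ∈ univ.filter fun σ : Equiv.Perm (Fin n) => (σ i, σ i') = p,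
      f (σ i) (σ i') = f p.1 p.2 := by
    intro σ hσ
    simp only [mem_filter, mem_univ, true_and, Prod.ext_iff] at hσ
    rw [hσ.1, hσ.2]
  rw [Finset.sum_congr rfl this, Finset.sum_const, nsmul_eq_mul, ← mul_assoc,
    ← Nat.cast_mul]
  have hfilt : (univ.filter fun σ : Equiv.Perm (Fin n) => (σ i, σ i') = p)
      = univ.filter fun σ : Equiv.Perm (Fin n) => σ i = p.1 ∧ σ i' = p.2 := by
    apply Finset.filter_congr; intro σ _; simp [Prod.ext_iff]
  rw [hfilt, mul_card_fiber_pair i i' hii hp.2.2]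

open MeasureTheory ProbabilityTheory
open scoped ENNReal

noncomputable instance (n : ℕ) : MeasurableSpace (Equiv.Perm (Fin n)) := ⊤

lemma sum_offDiag_real {n : ℕ} (f : Fin n × Fin n → ℝ) :
    ∑ p ∈ (univ : Finset (Fin n)).offDiag, f p
      = (∑ p ∈ univ ×ˢ univ, f p) - ∑ a, f (a, a) := by
  have h := Finset.sum_union (s₁ := (univ : Finset (Fin n)).diag)
    (s₂ := (univ : Finset (Fin n)).offDiag) (f := f) (Finset.disjoint_diag_offDiag _)
  rw [Finset.diag_union_offDiag, Finset.sum_diag] at h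
  linarith

lemma integral_perm_decomp {Ω : Type*} [MeasureSpace Ω] [IsProbabilityMeasure (ℙ : Measure Ω)]
    {n : ℕ} (π : Ω → Equiv.Perm (Fin n)) (hπmeas : Measurable π)
    (G : Equiv.Perm (Fin n) → Ω → ℝ) (hGint : ∀ σ, Integrable (G σ) ℙ)
    (hindepG : ∀ σ, IndepFun (fun ω => if π ω = σ then (1 : ℝ) else 0) (G σ) ℙ) :
    ∫ ω, G (π ω) ω ∂ℙ
      = ∑ σ : Equiv.Perm (Fin n), (ℙ {ω | π ω = σ}).toReal * ∫ ω, G σ ω ∂ℙ := by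
  classical
  have hA : ∀ σ : Equiv.Perm (Fin n), MeasurableSet {ω | π ω = σ} := fun σ =>
    hπmeas (MeasurableSpace.measurableSet_top (s := ({σ} : Set (Equiv.Perm (Fin n)))))
  have hdecomp : (fun ω => G (π ω) ω)
      = fun ω => ∑ σ : Equiv.Perm (Fin n), {ω' | π ω' = σ}.indicator (G σ) ω := by
    funext ω
    have : ∀ σ : Equiv.Perm (Fin n), {ω' | π ω' = σ}.indicator (G σ) ω
        = if π ω = σ then G σ ω else 0 := by
      intro σ; rw [Set.indicator_apply]; rfl
    rw [Finset.sum_congr rfl (fun σ _ => this σ), Finset.sum_ite_eq, if_pos (mem_univ _)]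
  rw [hdecomp, integral_finset_sum _ (fun σ _ => (hGint σ).indicator (hA σ))]
  refine Finset.sum_congr rfl fun σ _ => ?_
  have h1 : ∫ ω, {ω' | π ω' = σ}.indicator (G σ) ω ∂ℙ
      = ∫ ω, (fun ω => if π ω = σ then (1 : ℝ) else 0) ω * G σ ω ∂ℙ := by
    refine integral_congr_ae (Filter.Eventually.of_forall fun ω => ?_)
    rw [Set.indicator_apply]
    by_cases h : π ω = σ <;> simp [h]
  rw [h1]
  have h2 : ∫ ω, (fun ω => if π ω = σ then (1 : ℝ) else 0) ω * G σ ω ∂ℙ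
      = (∫ ω, (if π ω = σ then (1 : ℝ) else 0) ∂ℙ) * ∫ ω, G σ ω ∂ℙ := by
    exact (hindepG σ).integral_mul_eq_mul_integral
      (((measurable_from_top (f := fun τ : Equiv.Perm (Fin n) =>
        if τ = σ then (1 : ℝ) else 0)).comp hπmeas)).aestronglyMeasurable
      (hGint σ).aestronglyMeasurable
  rw [h2]
  congr 1
  have : (fun ω => if π ω = σ then (1 : ℝ) else 0)
      = {ω' | π ω' = σ}.indicator (fun _ => (1 : ℝ)) := by
    funext ω; rw [Set.indicator_apply]; rfl
  rw [show ∫ ω, (if π ω = σ then (1 : ℝ) else 0) ∂ℙ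
      = ∫ ω, {ω' | π ω' = σ}.indicator (fun _ => (1 : ℝ)) ω ∂ℙ from by rw [← this],
    integral_indicator_const (1 : ℝ) (hA σ), smul_eq_mul, mul_one, measureReal_def]

/-- **Combinatorial CLT, variance formula.**
Given an `n × n` array of independent random variables `X i j` (`n ≥ 2`) with means
`c i j`, variances `σ2 i j`, finite third absolute moments, all row and column sums of the
means zero, and a uniform random permutation `π` independent of the array, the variance of
`W = ∑ i, X i (π i)` equals `(1/n) ∑ σ2 + (1/(n-1)) ∑ c²`. -/
theorem variance_of_combinatorial_sum
    {Ω : Type*} [MeasureSpace Ω] [IsProbabilityMeasure (ℙ : Measure Ω)]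
    (n : ℕ) (hn : 2 ≤ n)
    (X : Fin n → Fin n → Ω → ℝ) (c σ2 : Fin n → Fin n → ℝ)
    (hmeas : ∀ i j, Measurable (X i j))
    (hmom : ∀ i j, MemLp (X i j) 3 ℙ)
    (hindep : iIndepFun (fun p : Fin n × Fin n => X p.1 p.2) ℙ)
    (hmean : ∀ i j, ∫ ω, X i j ω ∂ℙ = c i j)
    (hvar : ∀ i j, variance (X i j) ℙ = σ2 i j)
    (hrow : ∀ i, ∑ j, c i j = 0)
    (hcol : ∀ j, ∑ i, c i j = 0)
    (π : Ω → Equiv.Perm (Fin n)) (hπmeas : Measurable π)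
    (hπunif : ∀ σ : Equiv.Perm (Fin n), ℙ {ω | π ω = σ} = 1 / (n.factorial : ℝ≥0∞))
    (hπindep : IndepFun π (fun ω (p : Fin n × Fin n) => X p.1 p.2 ω) ℙ) :
    variance (fun ω => ∑ i, X i (π ω i) ω) ℙ
      = (1 / (n : ℝ)) * (∑ i, ∑ j, σ2 i j)
        + (1 / ((n : ℝ) - 1)) * (∑ i, ∑ j, c i j ^ 2) := by
  classical
  set S : Equiv.Perm (Fin n) → Ω → ℝ := fun σ ω => ∑ i, X i (σ i) ω with hSdef
  -- basic integrability
  have hmem2 : ∀ i j, MemLp (X i j) 2 ℙ := fun i j =>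
    (hmom i j).mono_exponent (by norm_num)
  have hint : ∀ i j, Integrable (X i j) ℙ := fun i j =>
    (hmom i j).integrable (by norm_num)
  have hSmem2 : ∀ σ, MemLp (S σ) 2 ℙ := fun σ =>
    memLp_finset_sum _ (fun i _ => hmem2 i (σ i))
  have hSint : ∀ σ, Integrable (S σ) ℙ := fun σ => (hSmem2 σ).integrable one_le_two
  -- expectations and variances of S σ
  have hES : ∀ σ, ∫ ω, S σ ω ∂ℙ = ∑ i, c i (σ i) := by
    intro σ
    rw [hSdef, integral_finset_sum _ (fun i _ => hint i (σ i))]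
    exact Finset.sum_congr rfl fun i _ => hmean i (σ i)
  have hvarS : ∀ σ, variance (S σ) ℙ = ∑ i, σ2 i (σ i) := by
    intro σ
    have hrepr : S σ = ∑ i : Fin n, (fun ω => X i (σ i) ω) := by
      funext ω; rw [Finset.sum_apply]
    rw [hrepr, IndepFun.variance_sum (fun i _ => hmem2 i (σ i))
      (fun i _ i' hi' hii => hindep.indepFun
        (show (i, σ i) ≠ (i', σ i') by simp [Prod.ext_iff]; intro h; exact absurd h hii))]
    exact Finset.sum_congr rfl fun i _ => hvar i (σ i)
  have hESsq : ∀ σ, ∫ ω, S σ ω ^ 2 ∂ℙ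
      = (∑ i, σ2 i (σ i)) + (∑ i, c i (σ i)) ^ 2 := by
    intro σ
    have h := variance_eq_sub (hSmem2 σ)
    simp only [Pi.pow_apply] at h
    rw [hvarS σ, hES σ] at h
    linarith
  -- independence of the indicator of {π = σ} against S σ and (S σ)^2
  have hindS : ∀ σ, IndepFun (fun ω => if π ω = σ then (1 : ℝ) else 0) (S σ) ℙ := by
    intro σ
    have h := hπindep.comp (φ := fun τ : Equiv.Perm (Fin n) => if τ = σ then (1 : ℝ) else 0)
      (ψ := fun x : Fin n × Fin n → ℝ => ∑ i, x (i, σ i)) measurable_from_top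
      (Finset.measurable_sum univ fun i _ => measurable_pi_apply (i, σ i))
    exact h
  have hindS2 : ∀ σ, IndepFun (fun ω => if π ω = σ then (1 : ℝ) else 0)
      (fun ω => S σ ω ^ 2) ℙ := by
    intro σ
    have h := hπindep.comp (φ := fun τ : Equiv.Perm (Fin n) => if τ = σ then (1 : ℝ) else 0)
      (ψ := fun x : Fin n × Fin n → ℝ => (∑ i, x (i, σ i)) ^ 2) measurable_from_top
      ((Finset.measurable_sum univ fun i _ => measurable_pi_apply (i, σ i)).pow_const 2)
    exact h
  -- probability weights
  have hfacne : (n.factorial : ℝ≥0∞) ≠ 0 := by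
    simp [Nat.factorial_ne_zero]
  have hP : ∀ σ : Equiv.Perm (Fin n), (ℙ {ω | π ω = σ}).toReal = (n.factorial : ℝ)⁻¹ := by
    intro σ
    rw [hπunif σ, one_div, ENNReal.toReal_inv]; simp
  -- the two integrals
  have hEW : ∫ ω, S (π ω) ω ∂ℙ
      = ∑ σ : Equiv.Perm (Fin n), (n.factorial : ℝ)⁻¹ * (∑ i, c i (σ i)) := by
    rw [integral_perm_decomp π hπmeas S hSint hindS]
    exact Finset.sum_congr rfl fun σ _ => by rw [hP σ, hES σ]
  have hEW2 : ∫ ω, S (π ω) ω ^ 2 ∂ℙ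
      = ∑ σ : Equiv.Perm (Fin n),
          (n.factorial : ℝ)⁻¹ * ((∑ i, σ2 i (σ i)) + (∑ i, c i (σ i)) ^ 2) := by
    rw [integral_perm_decomp π hπmeas (fun σ ω => S σ ω ^ 2)
      (fun σ => (hSmem2 σ).integrable_sq) hindS2]
    exact Finset.sum_congr rfl fun σ _ => by rw [hP σ, hESsq σ]
  -- MemLp of W
  have hA : ∀ σ : Equiv.Perm (Fin n), MeasurableSet {ω | π ω = σ} := fun σ =>
    hπmeas (MeasurableSpace.measurableSet_top (s := ({σ} : Set (Equiv.Perm (Fin n)))))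
  have hWeq : (fun ω => ∑ i, X i (π ω i) ω)
      = fun ω => ∑ σ : Equiv.Perm (Fin n), {ω' | π ω' = σ}.indicator (S σ) ω := by
    funext ω
    have : ∀ σ : Equiv.Perm (Fin n), {ω' | π ω' = σ}.indicator (S σ) ω
        = if π ω = σ then S σ ω else 0 := by
      intro σ; rw [Set.indicator_apply]; rfl
    rw [Finset.sum_congr rfl (fun σ _ => this σ), Finset.sum_ite_eq, if_pos (mem_univ _)]
  have hWmem2 : MemLp (fun ω => ∑ i, X i (π ω i) ω) 2 ℙ := by
    rw [hWeq]
    exact memLp_finset_sum _ fun σ _ => (hSmem2 σ).indicator (hA σ)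
  -- variance formula
  rw [variance_eq_sub hWmem2]
  have hWsq : ∫ x, ((fun ω => ∑ i, X i (π ω i) ω) ^ 2) x ∂ℙ = ∫ ω, S (π ω) ω ^ 2 ∂ℙ := rfl
  have hW1 : ∫ x, (∑ i, X i (π x i) x) ∂ℙ = ∫ ω, S (π ω) ω ∂ℙ := rfl
  rw [hWsq, hW1, hEW, hEW2]
  -- real-number abbreviations
  have hnR : (2 : ℝ) ≤ (n : ℝ) := by exact_mod_cast hn
  have hn0 : (n : ℝ) ≠ 0 := by linarith
  have hn1 : (n : ℝ) - 1 ≠ 0 := by intro h; linarith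
  have hfne : (n.factorial : ℝ) ≠ 0 := by exact_mod_cast Nat.factorial_ne_zero n
  have hnn : ((n * n - n : ℕ) : ℝ) = (n : ℝ) * (n : ℝ) - (n : ℝ) := by
    have : n ≤ n * n := Nat.le_mul_of_pos_left n (by omega)
    push_cast [Nat.cast_sub this]; ring
  have hnn0 : (n : ℝ) * (n : ℝ) - (n : ℝ) ≠ 0 := by nlinarith
  -- the mean is zero
  have hmean0 : ∑ σ : Equiv.Perm (Fin n), (n.factorial : ℝ)⁻¹ * (∑ i, c i (σ i)) = 0 := by
    rw [← Finset.mul_sum, Finset.sum_comm]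
    have : ∀ i : Fin n, ∑ σ : Equiv.Perm (Fin n), c i (σ i) = 0 := by
      intro i
      have h := sum_perm_eval (n := n) i (fun j => c i j)
      rw [hrow i, mul_zero] at h
      exact (mul_eq_zero.mp h).resolve_left hn0
    rw [Finset.sum_congr rfl fun i _ => this i, Finset.sum_const_zero, mul_zero]
  -- diagonal variance term
  have hT1 : ∑ σ : Equiv.Perm (Fin n), (∑ i, σ2 i (σ i))
      = (n.factorial : ℝ) / n * (∑ i, ∑ j, σ2 i j) := by
    rw [Finset.sum_comm]
    have : ∀ i : Fin n, ∑ σ : Equiv.Perm (Fin n), σ2 i (σ i)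
        = (n.factorial : ℝ) / n * ∑ j, σ2 i j := by
      intro i
      have h := sum_perm_eval (n := n) i (fun j => σ2 i j)
      field_simp
      linarith [h]
    rw [Finset.sum_congr rfl fun i _ => this i, ← Finset.mul_sum]
  -- squared-mean term
  have hT2 : ∑ σ : Equiv.Perm (Fin n), (∑ i, c i (σ i)) ^ 2
      = ((n.factorial : ℝ) / n + (n.factorial : ℝ) / ((n : ℝ) * n - n))
          * (∑ i, ∑ j, c i j ^ 2) := by
    have hsq : ∀ σ : Equiv.Perm (Fin n), (∑ i, c i (σ i)) ^ 2
        = ∑ i, ∑ i', c i (σ i) * c i' (σ i') := by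
      intro σ; rw [sq, Finset.sum_mul_sum]
    rw [Finset.sum_congr rfl fun σ _ => hsq σ, Finset.sum_comm]
    have hswap : ∀ i : Fin n, ∑ σ : Equiv.Perm (Fin n), ∑ i', c i (σ i) * c i' (σ i')
        = ∑ i', ∑ σ : Equiv.Perm (Fin n), c i (σ i) * c i' (σ i') :=
      fun i => Finset.sum_comm
    rw [Finset.sum_congr rfl fun i _ => hswap i]
    have hDd : ∀ i : Fin n, ∑ σ : Equiv.Perm (Fin n), c i (σ i) * c i (σ i)
        = (n.factorial : ℝ) / n * ∑ j, c i j ^ 2 := by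
      intro i
      have h := sum_perm_eval (n := n) i (fun j => c i j * c i j)
      have hx : ∑ σ : Equiv.Perm (Fin n), c i (σ i) * c i (σ i)
          = ((n.factorial : ℝ) * ∑ j, c i j * c i j) / (n : ℝ) := by
        rw [eq_div_iff hn0]; linear_combination h
      rw [hx, show (∑ j, c i j * c i j) = ∑ j, c i j ^ 2 from
        Finset.sum_congr rfl fun j _ => (sq _).symm]
      ring
    have hD : ∀ i i' : Fin n, i ≠ i' → ∑ σ : Equiv.Perm (Fin n), c i (σ i) * c i' (σ i')
        = -((n.factorial : ℝ) / ((n : ℝ) * n - n)) * ∑ j, c i j * c i' j := by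
      intro i i' hii
      have h := sum_perm_eval_pair (n := n) i i' hii (fun j j' => c i j * c i' j')
      rw [hnn] at h
      have hOD : ∑ p ∈ (univ : Finset (Fin n)).offDiag, c i p.1 * c i' p.2
          = - ∑ j, c i j * c i' j := by
        rw [sum_offDiag_real (fun p => c i p.1 * c i' p.2)]
        have hz : ∑ p ∈ (univ : Finset (Fin n)) ×ˢ univ, c i p.1 * c i' p.2 = 0 := by
          rw [Finset.sum_product]
          simp only [← Finset.mul_sum, hrow i', mul_zero, Finset.sum_const_zero]
        rw [hz]; ring
      rw [hOD] at h
      have hx : ∑ σ : Equiv.Perm (Fin n), c i (σ i) * c i' (σ i')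
          = ((n.factorial : ℝ) * (- ∑ j, c i j * c i' j)) / ((n : ℝ) * n - n) := by
        rw [eq_div_iff hnn0]; linear_combination h
      rw [hx]; ring
    have key : ∀ i : Fin n, ∑ i', ∑ σ : Equiv.Perm (Fin n), c i (σ i) * c i' (σ i')
        = ((n.factorial : ℝ) / n + (n.factorial : ℝ) / ((n : ℝ) * n - n))
            * ∑ j, c i j ^ 2 := by
      intro i
      rw [← Finset.add_sum_erase _ _ (mem_univ i), hDd i]
      have h1 : ∀ i' ∈ univ.erase i, ∑ σ : Equiv.Perm (Fin n), c i (σ i) * c i' (σ i')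
          = -((n.factorial : ℝ) / ((n : ℝ) * n - n)) * ∑ j, c i j * c i' j :=
        fun i' hi' => hD i i' (Ne.symm (Finset.ne_of_mem_erase hi'))
      rw [Finset.sum_congr rfl h1, ← Finset.mul_sum]
      have he : ∑ i' ∈ univ.erase i, ∑ j, c i j * c i' j = - ∑ j, c i j ^ 2 := by
        rw [Finset.sum_comm]
        have hj : ∀ j : Fin n, ∑ i' ∈ univ.erase i, c i j * c i' j = -(c i j ^ 2) := by
          intro j
          rw [← Finset.mul_sum, Finset.sum_erase_eq_sub (mem_univ i), hcol j]
          ring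
        rw [Finset.sum_congr rfl fun j _ => hj j, Finset.sum_neg_distrib]
      rw [he]; ring
    rw [Finset.sum_congr rfl fun i _ => key i, ← Finset.mul_sum]
  rw [hmean0]
  have hsplit : ∑ σ : Equiv.Perm (Fin n),
        (n.factorial : ℝ)⁻¹ * ((∑ i, σ2 i (σ i)) + (∑ i, c i (σ i)) ^ 2)
      = (n.factorial : ℝ)⁻¹ * ((∑ σ : Equiv.Perm (Fin n), ∑ i, σ2 i (σ i))
          + ∑ σ : Equiv.Perm (Fin n), (∑ i, c i (σ i)) ^ 2) := by
    rw [← Finset.mul_sum, Finset.sum_add_distrib]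
  rw [hsplit, hT1, hT2]
  field_simp
  ring
end

section
/- Suppose (S,S') is an exchangeable pair of square-integrable real random variables satisfying E(S'−S | S) = −λS + R for some λ > 0 and some random variable R, and suppose E S² − E|SR|/λ − 1/2 > 0. Set δ = E|S'−S|³ / λ. Then for all a < b, P(S ∈ [a,b]) ≤ (E|S| + E|R|/λ) ((b−a)/2 + δ) / (E S² − E|SR|/λ − 1/2) + sqrt( Var( E( (1/(2λ))(S'−S)² 1{|S'−S| ≤ δ} | S ) ) ) / (E S² − E|SR|/λ − 1/2). -/
open MeasureTheory ProbabilityTheory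
open scoped ENNReal NNReal

/-- **Concentration inequality for exchangeable pairs (Lemma 2.1).**
If `(S, S')` is an exchangeable pair of square-integrable random variables with
`E(S' - S | S) = -λ S + R`, `λ > 0`, and `E S² - E|SR|/λ - 1/2 > 0`, then with
`δ = E|S' - S|³ / λ`, for all `a < b`,
`P(S ∈ [a,b]) ≤ (E|S| + E|R|/λ)((b-a)/2 + δ)/D + sqrt(Var(E((1/(2λ))(S'-S)² 1{|S'-S|≤δ} | S)))/D`
where `D = E S² - E|SR|/λ - 1/2`. -/
theorem concentration_exchangeable_pair
    {Ω : Type*} [MeasureSpace Ω] [IsProbabilityMeasure (ℙ : Measure Ω)]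
    (S S' R : Ω → ℝ) (hS : Measurable S) (hS' : Measurable S')
    (hS2 : MemLp S 2 ℙ) (hS'2 : MemLp S' 2 ℙ)
    (hexch : IdentDistrib (fun ω => (S ω, S' ω)) (fun ω => (S' ω, S ω)) ℙ ℙ)
    (lam : ℝ) (hlam : 0 < lam)
    (hRint : Integrable R ℙ)
    (hSRint : Integrable (fun ω => S ω * R ω) ℙ)
    (hlin : ℙ[fun ω => S' ω - S ω | MeasurableSpace.comap S inferInstance]
      =ᵐ[ℙ] fun ω => -lam * S ω + R ω)
    (hcube : Integrable (fun ω => |S' ω - S ω| ^ 3) ℙ)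
    (δ : ℝ) (hδ : δ = (∫ ω, |S' ω - S ω| ^ 3 ∂ℙ) / lam)
    (D : ℝ)
    (hD : D = ∫ ω, (S ω) ^ 2 ∂ℙ - (∫ ω, |S ω * R ω| ∂ℙ) / lam - 1 / 2)
    (hDpos : 0 < D) :
    ∀ a b : ℝ, a < b →
      (ℙ {ω | S ω ∈ Set.Icc a b}).toReal
        ≤ ((∫ ω, |S ω| ∂ℙ) + (∫ ω, |R ω| ∂ℙ) / lam) / D * ((b - a) / 2 + δ)
          + (Real.sqrt (variance
              (ℙ[fun ω => (1 / (2 * lam)) * (S' ω - S ω) ^ 2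
                    * (if |S' ω - S ω| ≤ δ then (1 : ℝ) else 0)
                  | MeasurableSpace.comap S inferInstance] ) ℙ)) / D := by
  intro a b hab
  have hm : MeasurableSpace.comap S inferInstance ≤ (inferInstance : MeasurableSpace Ω) :=
    hS.comap_le
  have hSmm : Measurable[MeasurableSpace.comap S inferInstance] S :=
    Measurable.of_comap_le le_rfl
  have hSm : StronglyMeasurable[MeasurableSpace.comap S inferInstance] S :=
    hSmm.stronglyMeasurable
  -- basic integrabilities
  have hSint : Integrable S ℙ := hS2.integrable one_le_two
  have hS'int : Integrable S' ℙ := hS'2.integrable one_le_two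
  have hΔint : Integrable (fun ω => S' ω - S ω) ℙ := hS'int.sub hSint
  have hSsq : Integrable (fun ω => S ω ^ 2) ℙ := hS2.integrable_sq
  have hS'sq : Integrable (fun ω => S' ω ^ 2) ℙ := hS'2.integrable_sq
  have hΔsq : Integrable (fun ω => (S' ω - S ω) ^ 2) ℙ := (hS'2.sub hS2).integrable_sq
  have hSS' : Integrable (fun ω => S ω * S' ω) ℙ := by
    have h12 : (1 : ℝ≥0∞) / 1 = 1 / 2 + 1 / 2 := by
      rw [ENNReal.div_add_div_same, one_div_one]
      norm_num
      rw [ENNReal.div_self two_ne_zero ENNReal.ofNat_ne_top]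
    haveI : ENNReal.HolderTriple 2 2 1 := ⟨by simpa [one_div] using h12.symm⟩
    have := hS'2.smul (φ := S) (r := 1) hS2
    exact memLp_one_iff_integrable.mp this
  have hSΔ : Integrable (fun ω => S ω * (S' ω - S ω)) ℙ := by
    have h := hSS'.sub hSsq
    exact h.congr (Filter.Eventually.of_forall fun ω => by simp only [Pi.sub_apply]; ring)
  -- generic pull-out lemma
  have pull : ∀ (φ X : Ω → ℝ), StronglyMeasurable[MeasurableSpace.comap S inferInstance] φ →
      Integrable (fun ω => φ ω * X ω) ℙ → Integrable X ℙ →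
      ∫ ω, φ ω * X ω ∂ℙ
        = ∫ ω, φ ω * (ℙ[X|MeasurableSpace.comap S inferInstance]) ω ∂ℙ := by
    intro φ X hφ hprod hX
    have h1 : ℙ[φ * X|MeasurableSpace.comap S inferInstance]
        =ᵐ[ℙ] (φ * ℙ[X|MeasurableSpace.comap S inferInstance] : Ω → ℝ) :=
      condExp_mul_of_stronglyMeasurable_left hφ hprod hX
    calc ∫ ω, φ ω * X ω ∂ℙ = ∫ ω, (φ * X) ω ∂ℙ := rfl
      _ = ∫ ω, (ℙ[φ * X|MeasurableSpace.comap S inferInstance]) ω ∂ℙ :=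
          (integral_condExp hm).symm
      _ = ∫ ω, (φ * MeasureTheory.condExp (MeasurableSpace.comap S inferInstance) ℙ X) ω ∂ℙ :=
          integral_congr_ae h1
      _ = ∫ ω, φ ω * (ℙ[X|MeasurableSpace.comap S inferInstance]) ω ∂ℙ := rfl
  -- second moment identity
  have hIdSS' : IdentDistrib S S' ℙ ℙ := by
    have := hexch.comp (u := Prod.fst) measurable_fst
    simpa [Function.comp_def] using this
  have hS'sq_eq : ∫ ω, S' ω ^ 2 ∂ℙ = ∫ ω, S ω ^ 2 ∂ℙ := by
    have := (hIdSS'.comp (u := fun x : ℝ => x ^ 2) (measurable_id.pow_const 2)).integral_eq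
    simpa using this.symm
  have hSΔ_eq : ∫ ω, S ω * (S' ω - S ω) ∂ℙ
      = -lam * ∫ ω, S ω ^ 2 ∂ℙ + ∫ ω, S ω * R ω ∂ℙ := by
    rw [pull S (fun ω => S' ω - S ω) hSm hSΔ hΔint]
    have h2 : ∫ ω, S ω * (ℙ[fun ω => S' ω - S ω|MeasurableSpace.comap S inferInstance]) ω ∂ℙ
        = ∫ ω, S ω * (-lam * S ω + R ω) ∂ℙ := by
      refine integral_congr_ae ?_
      filter_upwards [hlin] with ω hω
      rw [hω]
    rw [h2]
    have h3 : ∀ ω, S ω * (-lam * S ω + R ω) = -lam * S ω ^ 2 + S ω * R ω := fun ω => by ring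
    simp_rw [h3]
    rw [integral_add (hSsq.const_mul (-lam)) hSRint, integral_const_mul]
  have hEΔ2 : ∫ ω, (S' ω - S ω) ^ 2 ∂ℙ
      = 2 * lam * ∫ ω, S ω ^ 2 ∂ℙ - 2 * ∫ ω, S ω * R ω ∂ℙ := by
    have e1 : Integrable (fun ω => S' ω ^ 2 - S ω ^ 2) ℙ := hS'sq.sub hSsq
    have e2 : Integrable (fun ω => 2 * (S ω * (S' ω - S ω))) ℙ := hSΔ.const_mul 2
    have expand : ∀ ω, (S' ω - S ω) ^ 2
        = S' ω ^ 2 - S ω ^ 2 - 2 * (S ω * (S' ω - S ω)) := fun ω => by ring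
    calc ∫ ω, (S' ω - S ω) ^ 2 ∂ℙ
        = ∫ ω, (S' ω ^ 2 - S ω ^ 2 - 2 * (S ω * (S' ω - S ω))) ∂ℙ := by simp_rw [expand]
      _ = (∫ ω, (S' ω ^ 2 - S ω ^ 2) ∂ℙ) - ∫ ω, 2 * (S ω * (S' ω - S ω)) ∂ℙ :=
          integral_sub e1 e2
      _ = (∫ ω, S' ω ^ 2 ∂ℙ) - (∫ ω, S ω ^ 2 ∂ℙ) - 2 * ∫ ω, S ω * (S' ω - S ω) ∂ℙ := by
          rw [integral_sub hS'sq hSsq, integral_const_mul]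
      _ = 2 * lam * ∫ ω, S ω ^ 2 ∂ℙ - 2 * ∫ ω, S ω * R ω ∂ℙ := by
          rw [hS'sq_eq, hSΔ_eq]; ring
  have hSR_le : ∫ ω, S ω * R ω ∂ℙ ≤ ∫ ω, |S ω * R ω| ∂ℙ :=
    integral_mono hSRint hSRint.abs fun ω => le_abs_self _
  -- δ is positive
  have hδnn : 0 ≤ δ := by
    rw [hδ]
    exact div_nonneg (integral_nonneg fun ω => by positivity) hlam.le
  have hδpos : 0 < δ := by
    rcases hδnn.lt_or_eq with h | h
    · exact h
    · exfalso
      have hI : ∫ ω, |S' ω - S ω| ^ 3 ∂ℙ = 0 := by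
        have h5 : δ * lam = ∫ ω, |S' ω - S ω| ^ 3 ∂ℙ := by
          rw [hδ]; field_simp
        rw [← h5, ← h, zero_mul]
      have hae : (fun ω => |S' ω - S ω| ^ 3) =ᵐ[ℙ] 0 :=
        (integral_eq_zero_iff_of_nonneg (fun ω => by positivity) hcube).mp hI
      have hΔ0 : ∫ ω, (S' ω - S ω) ^ 2 ∂ℙ = 0 := by
        rw [integral_eq_zero_iff_of_nonneg (fun ω => sq_nonneg _) hΔsq]
        filter_upwards [hae] with ω hω
        have h6 : |S' ω - S ω| = 0 := by
          have := pow_eq_zero_iff (n := 3) (by norm_num) |>.mp hω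
          exact this
        have h0 : S' ω - S ω = 0 := abs_eq_zero.mp h6
        simp only [Pi.zero_apply]
        rw [h0]; ring
      rw [hΔ0] at hEΔ2
      have h7 : (∫ ω, S ω * R ω ∂ℙ) / lam ≤ (∫ ω, |S ω * R ω| ∂ℙ) / lam := by gcongr
      rw [hD] at hDpos
      have h8 : ∫ ω, S ω ^ 2 ∂ℙ = (∫ ω, S ω * R ω ∂ℙ) / lam := by
        field_simp
        linarith
      rw [h8] at hDpos
      linarith
  -- helper: bounded measurable functions are integrable
  have intBdd : ∀ (h : Ω → ℝ) (C : ℝ), Measurable h → (∀ ω, |h ω| ≤ C) → Integrable h ℙ :=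
    fun h C hh hC => memLp_one_iff_integrable.mp
      (MemLp.of_bound hh.aestronglyMeasurable C
        (Filter.Eventually.of_forall fun ω => by rw [Real.norm_eq_abs]; exact hC ω))
  -- the test function f
  set c : ℝ := (b - a) / 2 + δ with hc_def
  have hcpos : 0 < c := by have := hab; simp only [hc_def]; linarith
  set mid : ℝ := (a + b) / 2 with hmid_def
  set f : ℝ → ℝ := fun x => max (-c) (min c (x - mid)) with hf_def
  have hfmono : Monotone f := fun x y hxy =>
    max_le_max le_rfl (min_le_min le_rfl (by linarith))
  have hfbd : ∀ x, |f x| ≤ c := by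
    intro x
    rw [abs_le]
    constructor
    · exact le_trans (by linarith) (le_max_left _ _)
    · exact max_le (by linarith) (min_le_left _ _)
  have hfid : ∀ x, a - δ ≤ x → x ≤ b + δ → f x = x - mid := by
    intro x h1 h2
    have hxc : x - mid ≤ c := by simp only [hmid_def, hc_def] at *; linarith
    have hxc' : -c ≤ x - mid := by simp only [hmid_def, hc_def] at *; linarith
    simp only [hf_def]
    rw [min_eq_right hxc, max_eq_right hxc']
  have hfmeas : Measurable f :=
    measurable_const.max (measurable_const.min (measurable_id.sub_const mid))
  have hfSm : StronglyMeasurable[MeasurableSpace.comap S inferInstance] (fun ω => f (S ω)) :=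
    (hfmeas.comp hSmm).stronglyMeasurable
  have hfSabs : ∀ ω, |f (S ω)| ≤ c := fun ω => hfbd _
  -- integrabilities involving f
  have hfSS : Integrable (fun ω => f (S ω) * S ω) ℙ :=
    hSint.bdd_mul (hfmeas.comp hS).aestronglyMeasurable
      (c := c) (Filter.Eventually.of_forall fun ω => by rw [Real.norm_eq_abs]; exact hfbd _)
  have hfSR : Integrable (fun ω => f (S ω) * R ω) ℙ :=
    hRint.bdd_mul (hfmeas.comp hS).aestronglyMeasurable
      (c := c) (Filter.Eventually.of_forall fun ω => by rw [Real.norm_eq_abs]; exact hfbd _)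
  have hfSΔ : Integrable (fun ω => f (S ω) * (S' ω - S ω)) ℙ :=
    hΔint.bdd_mul (hfmeas.comp hS).aestronglyMeasurable
      (c := c) (Filter.Eventually.of_forall fun ω => by rw [Real.norm_eq_abs]; exact hfbd _)
  have hsum_meas : Measurable (fun ω => f (S' ω) + f (S ω)) :=
    (hfmeas.comp hS').add (hfmeas.comp hS)
  have hsumΔ : Integrable (fun ω => (f (S' ω) + f (S ω)) * (S' ω - S ω)) ℙ :=
    hΔint.bdd_mul hsum_meas.aestronglyMeasurable
      (c := 2 * c) (Filter.Eventually.of_forall fun ω => by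
        rw [Real.norm_eq_abs]
        calc |f (S' ω) + f (S ω)| ≤ |f (S' ω)| + |f (S ω)| := abs_add_le _ _
          _ ≤ 2 * c := by have h1 := hfbd (S' ω); have h2 := hfbd (S ω); linarith)
  have hdiffΔ : Integrable (fun ω => (f (S' ω) - f (S ω)) * (S' ω - S ω)) ℙ :=
    hΔint.bdd_mul ((hfmeas.comp hS').sub (hfmeas.comp hS)).aestronglyMeasurable
      (c := 2 * c) (Filter.Eventually.of_forall fun ω => by
        rw [Real.norm_eq_abs]
        calc |f (S' ω) - f (S ω)| ≤ |f (S' ω)| + |f (S ω)| := abs_sub _ _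
          _ ≤ 2 * c := by have h1 := hfbd (S' ω); have h2 := hfbd (S ω); linarith)
  -- exchangeability: antisymmetric integral vanishes
  have hzero : ∫ ω, (f (S' ω) + f (S ω)) * (S' ω - S ω) ∂ℙ = 0 := by
    have hFmeas : Measurable (fun p : ℝ × ℝ => (f p.2 + f p.1) * (p.2 - p.1)) :=
      ((hfmeas.comp measurable_snd).add (hfmeas.comp measurable_fst)).mul
        (measurable_snd.sub measurable_fst)
    have h := (hexch.comp hFmeas).integral_eq
    simp only [Function.comp] at h
    have h2 : ∫ ω, (f (S ω) + f (S' ω)) * (S ω - S' ω) ∂ℙ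
        = -∫ ω, (f (S' ω) + f (S ω)) * (S' ω - S ω) ∂ℙ := by
      rw [← integral_neg]
      exact integral_congr_ae (Filter.Eventually.of_forall fun ω => by ring)
    rw [h2] at h
    linarith
  -- main identity
  have hfSΔ_eq : ∫ ω, f (S ω) * (S' ω - S ω) ∂ℙ
      = -lam * ∫ ω, f (S ω) * S ω ∂ℙ + ∫ ω, f (S ω) * R ω ∂ℙ := by
    rw [pull (fun ω => f (S ω)) (fun ω => S' ω - S ω) hfSm hfSΔ hΔint]
    have h2 : ∫ ω, f (S ω) * (ℙ[fun ω => S' ω - S ω|MeasurableSpace.comap S inferInstance]) ω ∂ℙ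
        = ∫ ω, f (S ω) * (-lam * S ω + R ω) ∂ℙ := by
      refine integral_congr_ae ?_
      filter_upwards [hlin] with ω hω
      rw [hω]
    rw [h2]
    have h3 : ∀ ω, f (S ω) * (-lam * S ω + R ω)
        = -lam * (f (S ω) * S ω) + f (S ω) * R ω := fun ω => by ring
    simp_rw [h3]
    rw [integral_add (hfSS.const_mul (-lam)) hfSR, integral_const_mul]
  have hT : ∫ ω, (f (S' ω) - f (S ω)) * (S' ω - S ω) ∂ℙ
      = 2 * lam * ∫ ω, f (S ω) * S ω ∂ℙ - 2 * ∫ ω, f (S ω) * R ω ∂ℙ := by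
    have expand : ∀ ω, (f (S' ω) - f (S ω)) * (S' ω - S ω)
        = (f (S' ω) + f (S ω)) * (S' ω - S ω) - 2 * (f (S ω) * (S' ω - S ω)) :=
      fun ω => by ring
    calc ∫ ω, (f (S' ω) - f (S ω)) * (S' ω - S ω) ∂ℙ
        = ∫ ω, ((f (S' ω) + f (S ω)) * (S' ω - S ω) - 2 * (f (S ω) * (S' ω - S ω))) ∂ℙ := by
          simp_rw [expand]
      _ = (∫ ω, (f (S' ω) + f (S ω)) * (S' ω - S ω) ∂ℙ)
            - ∫ ω, 2 * (f (S ω) * (S' ω - S ω)) ∂ℙ :=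
          integral_sub hsumΔ (hfSΔ.const_mul 2)
      _ = -(2 * ∫ ω, f (S ω) * (S' ω - S ω) ∂ℙ) := by rw [hzero, integral_const_mul]; ring
      _ = 2 * lam * ∫ ω, f (S ω) * S ω ∂ℙ - 2 * ∫ ω, f (S ω) * R ω ∂ℙ := by
          rw [hfSΔ_eq]; ring
  -- indicators
  set χ : Ω → ℝ := fun ω => if S ω ∈ Set.Icc a b then (1:ℝ) else 0 with hχ_def
  set X : Ω → ℝ := fun ω => (1 / (2 * lam)) * (S' ω - S ω) ^ 2
      * (if |S' ω - S ω| ≤ δ then (1 : ℝ) else 0) with hX_def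
  have hχmeas : Measurable χ :=
    Measurable.ite (hS measurableSet_Icc) measurable_const measurable_const
  have hχbd : ∀ ω, |χ ω| ≤ 1 := by
    intro ω; simp only [hχ_def]; split <;> simp
  have hχnn : ∀ ω, 0 ≤ χ ω := by
    intro ω; simp only [hχ_def]; split <;> norm_num
  have hχm : StronglyMeasurable[MeasurableSpace.comap S inferInstance] χ := by
    refine Measurable.stronglyMeasurable ?_
    refine Measurable.ite ?_ measurable_const measurable_const
    exact hSmm measurableSet_Icc
  have hindmeas : Measurable (fun ω => if |S' ω - S ω| ≤ δ then (1:ℝ) else 0) :=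
    Measurable.ite (measurableSet_le (hS'.sub hS).abs measurable_const)
      measurable_const measurable_const
  have hXmeas : Measurable X :=
    (measurable_const.mul ((hS'.sub hS).pow_const 2)).mul hindmeas
  have hXbd : ∀ ω, |X ω| ≤ 1 / (2 * lam) * δ ^ 2 := by
    intro ω
    simp only [hX_def]
    by_cases h1 : |S' ω - S ω| ≤ δ
    · rw [if_pos h1, mul_one, abs_mul]
      have h2 : (S' ω - S ω) ^ 2 ≤ δ ^ 2 := by
        rw [← sq_abs]
        exact pow_le_pow_left₀ (abs_nonneg _) h1 2
      have h3 : |(1:ℝ) / (2 * lam)| = 1 / (2 * lam) := abs_of_pos (by positivity)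
      rw [h3, abs_of_nonneg (sq_nonneg _)]
      exact mul_le_mul_of_nonneg_left h2 (by positivity)
    · rw [if_neg h1, mul_zero, abs_zero]
      positivity
  have hXint : Integrable X ℙ := intBdd X _ hXmeas hXbd
  have hXnn : ∀ ω, 0 ≤ X ω := by
    intro ω
    simp only [hX_def]
    split <;> positivity
  -- pointwise lower bound
  have hpt : ∀ ω, (S' ω - S ω) ^ 2 * (if |S' ω - S ω| ≤ δ then (1:ℝ) else 0) * χ ω
      ≤ (f (S' ω) - f (S ω)) * (S' ω - S ω) := by
    intro ω
    have hmono0 : 0 ≤ (f (S' ω) - f (S ω)) * (S' ω - S ω) := by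
      rcases le_total (S ω) (S' ω) with h | h
      · exact mul_nonneg (sub_nonneg.mpr (hfmono h)) (sub_nonneg.mpr h)
      · exact mul_nonneg_of_nonpos_of_nonpos (sub_nonpos.mpr (hfmono h)) (sub_nonpos.mpr h)
    by_cases h1 : |S' ω - S ω| ≤ δ
    · by_cases h2 : S ω ∈ Set.Icc a b
      · have hχ1 : χ ω = 1 := by simp only [hχ_def]; rw [if_pos h2]
        rw [if_pos h1, hχ1, mul_one, mul_one]
        obtain ⟨ha2, hb2⟩ := h2
        have habs := abs_le.mp h1
        have hfS : f (S ω) = S ω - mid := hfid _ (by linarith) (by linarith)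
        have hfS' : f (S' ω) = S' ω - mid := hfid _ (by linarith) (by linarith)
        rw [hfS, hfS']
        have : S' ω - mid - (S ω - mid) = S' ω - S ω := by ring
        rw [this, ← sq]
      · have hχ0 : χ ω = 0 := by simp only [hχ_def]; rw [if_neg h2]
        rw [hχ0, mul_zero]
        exact hmono0
    · rw [if_neg h1, mul_zero, zero_mul]
      exact hmono0
  have hprod_int : Integrable
      (fun ω => (S' ω - S ω) ^ 2 * (if |S' ω - S ω| ≤ δ then (1:ℝ) else 0) * χ ω) ℙ := by
    refine hΔsq.mono (((((hS'.sub hS).pow_const 2).mul hindmeas).mul hχmeas)).aestronglyMeasurable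
      (Filter.Eventually.of_forall fun ω => ?_)
    rw [Real.norm_eq_abs, Real.norm_eq_abs, abs_mul, abs_mul]
    have e1 : |(if |S' ω - S ω| ≤ δ then (1:ℝ) else 0)| ≤ 1 := by split <;> simp
    have e2 := hχbd ω
    have e3 : (0:ℝ) ≤ |(S' ω - S ω) ^ 2| := abs_nonneg _
    calc |(S' ω - S ω) ^ 2| * |(if |S' ω - S ω| ≤ δ then (1:ℝ) else 0)| * |χ ω|
        ≤ |(S' ω - S ω) ^ 2| * 1 * 1 := by
          refine mul_le_mul (mul_le_mul le_rfl e1 (abs_nonneg _) e3) (hχbd ω) (abs_nonneg _) ?_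
          positivity
      _ = |(S' ω - S ω) ^ 2| := by ring
  have hlow1 : ∫ ω, (S' ω - S ω) ^ 2 * (if |S' ω - S ω| ≤ δ then (1:ℝ) else 0) * χ ω ∂ℙ
      ≤ ∫ ω, (f (S' ω) - f (S ω)) * (S' ω - S ω) ∂ℙ :=
    integral_mono hprod_int hdiffΔ hpt
  -- rewrite in terms of the conditional expectation
  have hχX : Integrable (fun ω => χ ω * X ω) ℙ :=
    hXint.bdd_mul hχmeas.aestronglyMeasurable
      (c := 1) (Filter.Eventually.of_forall fun ω => by rw [Real.norm_eq_abs]; exact hχbd ω)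
  have hrw2 : ∫ ω, (S' ω - S ω) ^ 2 * (if |S' ω - S ω| ≤ δ then (1:ℝ) else 0) * χ ω ∂ℙ
      = 2 * lam * ∫ ω, χ ω * (ℙ[X|MeasurableSpace.comap S inferInstance]) ω ∂ℙ := by
    have e : ∀ ω, (S' ω - S ω) ^ 2 * (if |S' ω - S ω| ≤ δ then (1:ℝ) else 0) * χ ω
        = 2 * lam * (χ ω * X ω) := by
      intro ω
      simp only [hX_def]
      field_simp
    simp_rw [e]
    rw [integral_const_mul, pull χ X hχm hχX hXint]
  -- the mean of X is at least D
  have hgX : ∫ ω, (ℙ[X|MeasurableSpace.comap S inferInstance]) ω ∂ℙ = ∫ ω, X ω ∂ℙ :=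
    integral_condExp hm
  have hcube_eq : ∫ ω, |S' ω - S ω| ^ 3 ∂ℙ = lam * δ := by
    rw [hδ]; field_simp
  have hXlow : D ≤ ∫ ω, X ω ∂ℙ := by
    have hpt2 : ∀ ω, (1 / (2 * lam)) * ((S' ω - S ω) ^ 2 - |S' ω - S ω| ^ 3 / δ) ≤ X ω := by
      intro ω
      simp only [hX_def]
      by_cases h1 : |S' ω - S ω| ≤ δ
      · rw [if_pos h1, mul_one]
        have h2 : (S' ω - S ω) ^ 2 - |S' ω - S ω| ^ 3 / δ ≤ (S' ω - S ω) ^ 2 := by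
          have : 0 ≤ |S' ω - S ω| ^ 3 / δ := by positivity
          linarith
        exact mul_le_mul_of_nonneg_left h2 (by positivity)
      · rw [if_neg h1, mul_zero]
        push_neg at h1
        have h3 : (S' ω - S ω) ^ 2 - |S' ω - S ω| ^ 3 / δ ≤ 0 := by
          rw [sub_nonpos, le_div_iff₀ hδpos]
          have h4 : δ * |S' ω - S ω| ^ 2 ≤ |S' ω - S ω| * |S' ω - S ω| ^ 2 :=
            mul_le_mul_of_nonneg_right h1.le (by positivity)
          have h5 : |S' ω - S ω| ^ 3 = |S' ω - S ω| * |S' ω - S ω| ^ 2 := by ring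
          have h6 : (S' ω - S ω) ^ 2 = |S' ω - S ω| ^ 2 := (sq_abs _).symm
          rw [h5, h6]
          linarith
        have h7 : (0:ℝ) ≤ 1 / (2 * lam) := by positivity
        exact mul_nonpos_of_nonneg_of_nonpos h7 h3 |>.trans_eq rfl
    have hint2 : Integrable (fun ω => (1 / (2 * lam)) * ((S' ω - S ω) ^ 2
        - |S' ω - S ω| ^ 3 / δ)) ℙ := ((hΔsq.sub (hcube.div_const δ)).const_mul _)
    have hmono2 := integral_mono hint2 hXint hpt2
    have heval : ∫ ω, (1 / (2 * lam)) * ((S' ω - S ω) ^ 2 - |S' ω - S ω| ^ 3 / δ) ∂ℙ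
        = (1 / (2 * lam)) * ((∫ ω, (S' ω - S ω) ^ 2 ∂ℙ) - lam) := by
      rw [integral_const_mul, integral_sub hΔsq (hcube.div_const δ), integral_div, hcube_eq,
        mul_div_assoc, div_self hδpos.ne', mul_one]
    rw [heval, hEΔ2] at hmono2
    have harith : D ≤ 1 / (2 * lam) * (2 * lam * ∫ ω, S ω ^ 2 ∂ℙ - 2 * (∫ ω, S ω * R ω ∂ℙ) - lam) := by
      have h9 : 1 / (2 * lam) * (2 * lam * ∫ ω, S ω ^ 2 ∂ℙ - 2 * (∫ ω, S ω * R ω ∂ℙ) - lam)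
          = (∫ ω, S ω ^ 2 ∂ℙ) - (∫ ω, S ω * R ω ∂ℙ) / lam - 1 / 2 := by
        field_simp
      have h10 : (∫ ω, S ω * R ω ∂ℙ) / lam ≤ (∫ ω, |S ω * R ω| ∂ℙ) / lam := by gcongr
      rw [h9, hD]
      linarith
    linarith
  -- the conditional expectation g
  set g : Ω → ℝ := ℙ[X|MeasurableSpace.comap S inferInstance] with hg_def
  have hgint : Integrable g ℙ := integrable_condExp
  have hgbd : ∀ᵐ ω ∂ℙ, |g ω| ≤ ((⟨1 / (2 * lam) * δ ^ 2, by positivity⟩ : ℝ≥0) : ℝ) := by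
    refine ae_bdd_condExp_of_ae_bdd (Filter.Eventually.of_forall fun ω => ?_)
    exact hXbd ω
  have hg2 : MemLp g 2 ℙ :=
    MemLp.of_bound hgint.aestronglyMeasurable _
      (hgbd.mono fun ω h => by rw [Real.norm_eq_abs]; exact h)
  set Eg : ℝ := ∫ ω, g ω ∂ℙ with hEg_def
  have hgEint : Integrable (fun ω => g ω - Eg) ℙ := hgint.sub (integrable_const Eg)
  have habsint : Integrable (fun ω => |g ω - Eg|) ℙ := hgEint.abs
  have hvar : ∫ ω, (g ω - Eg) ^ 2 ∂ℙ = variance g ℙ := by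
    rw [variance_eq_integral hg2.1.aemeasurable]
  have hvarnn : 0 ≤ variance g ℙ := variance_nonneg _ _
  have hsq2 : MemLp (fun ω => |g ω - Eg|) 2 ℙ := by
    exact (hg2.sub (memLp_const Eg)).norm
  have hCS : ∫ ω, |g ω - Eg| ∂ℙ ≤ Real.sqrt (variance g ℙ) := by
    have hpq : (2:ℝ).HolderConjugate 2 := .two_two
    have h1 := integral_mul_le_Lp_mul_Lq_of_nonneg hpq
      (Filter.Eventually.of_forall fun ω => abs_nonneg (g ω - Eg))
      (Filter.Eventually.of_forall fun ω => zero_le_one (α := ℝ))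
      (g := fun _ => (1:ℝ))
      (by rw [ENNReal.ofReal_ofNat (n := 2)]; exact hsq2)
      (by rw [ENNReal.ofReal_ofNat (n := 2)]; exact memLp_const 1)
    simp only [mul_one, Real.one_rpow, integral_const, measure_univ, ENNReal.toReal_one, probReal_univ,
      one_smul, Real.one_rpow] at h1
    have h2 : ∀ ω, |g ω - Eg| ^ (2:ℝ) = (g ω - Eg) ^ 2 := by
      intro ω
      rw [Real.rpow_two, sq_abs]
    simp_rw [h2] at h1
    rw [hvar] at h1
    rw [Real.sqrt_eq_rpow]
    exact h1
  have hχgE : Integrable (fun ω => χ ω * (g ω - Eg)) ℙ :=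
    hgEint.bdd_mul hχmeas.aestronglyMeasurable
      (c := 1) (Filter.Eventually.of_forall fun ω => by rw [Real.norm_eq_abs]; exact hχbd ω)
  have hlow2 : -Real.sqrt (variance g ℙ) ≤ ∫ ω, χ ω * (g ω - Eg) ∂ℙ := by
    have hpt3 : ∀ ω, -|g ω - Eg| ≤ χ ω * (g ω - Eg) := by
      intro ω
      simp only [hχ_def]
      split
      · rw [one_mul]; exact neg_abs_le _
      · rw [zero_mul]; exact neg_nonpos_of_nonneg (abs_nonneg _)
    calc -Real.sqrt (variance g ℙ) ≤ -∫ ω, |g ω - Eg| ∂ℙ := neg_le_neg hCS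
      _ = ∫ ω, -|g ω - Eg| ∂ℙ := (integral_neg _).symm
      _ ≤ ∫ ω, χ ω * (g ω - Eg) ∂ℙ := integral_mono habsint.neg hχgE hpt3
  have hχint : Integrable χ ℙ := intBdd χ 1 hχmeas hχbd
  have hsplit : ∫ ω, χ ω * g ω ∂ℙ = (∫ ω, χ ω * (g ω - Eg) ∂ℙ) + Eg * ∫ ω, χ ω ∂ℙ := by
    have e : ∀ ω, χ ω * g ω = χ ω * (g ω - Eg) + Eg * χ ω := fun ω => by ring
    simp_rw [e]
    rw [integral_add hχgE (hχint.const_mul Eg), integral_const_mul]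
  have hχP : ∫ ω, χ ω ∂ℙ = (ℙ {ω | S ω ∈ Set.Icc a b}).toReal := by
    have e : χ = Set.indicator {ω | S ω ∈ Set.Icc a b} (fun _ => (1:ℝ)) := by
      funext ω
      simp [hχ_def, Set.indicator_apply, Set.mem_setOf_eq]
    rw [e, integral_indicator_const (1:ℝ)
      (show MeasurableSet {ω | S ω ∈ Set.Icc a b} from hS measurableSet_Icc)]
    simp [Measure.real]
  set P : ℝ := (ℙ {ω | S ω ∈ Set.Icc a b}).toReal with hP_def
  have hPnn : 0 ≤ P := ENNReal.toReal_nonneg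
  have hEgD : D ≤ Eg := by rw [hEg_def]; exact le_of_le_of_eq hXlow hgX.symm
  -- final assembly
  have hchain : 2 * lam * (D * P - Real.sqrt (variance g ℙ))
      ≤ 2 * lam * ∫ ω, f (S ω) * S ω ∂ℙ - 2 * ∫ ω, f (S ω) * R ω ∂ℙ := by
    have h1 : D * P - Real.sqrt (variance g ℙ) ≤ ∫ ω, χ ω * g ω ∂ℙ := by
      rw [hsplit, hχP]
      have h2 : D * P ≤ Eg * P := mul_le_mul_of_nonneg_right hEgD hPnn
      linarith
    have h3 : 2 * lam * (D * P - Real.sqrt (variance g ℙ)) ≤ 2 * lam * ∫ ω, χ ω * g ω ∂ℙ :=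
      mul_le_mul_of_nonneg_left h1 (by positivity)
    calc 2 * lam * (D * P - Real.sqrt (variance g ℙ))
        ≤ 2 * lam * ∫ ω, χ ω * g ω ∂ℙ := h3
      _ = ∫ ω, (S' ω - S ω) ^ 2 * (if |S' ω - S ω| ≤ δ then (1:ℝ) else 0) * χ ω ∂ℙ :=
          hrw2.symm
      _ ≤ ∫ ω, (f (S' ω) - f (S ω)) * (S' ω - S ω) ∂ℙ := hlow1
      _ = 2 * lam * ∫ ω, f (S ω) * S ω ∂ℙ - 2 * ∫ ω, f (S ω) * R ω ∂ℙ := hT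
  have hb1 : ∫ ω, f (S ω) * S ω ∂ℙ ≤ c * ∫ ω, |S ω| ∂ℙ := by
    calc ∫ ω, f (S ω) * S ω ∂ℙ ≤ ∫ ω, |f (S ω) * S ω| ∂ℙ :=
          integral_mono hfSS hfSS.abs fun ω => le_abs_self _
      _ ≤ ∫ ω, c * |S ω| ∂ℙ := by
          refine integral_mono hfSS.abs (hSint.abs.const_mul c) fun ω => ?_
          rw [abs_mul]
          exact mul_le_mul_of_nonneg_right (hfbd _) (abs_nonneg _)
      _ = c * ∫ ω, |S ω| ∂ℙ := integral_const_mul _ _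
  have hb2 : -∫ ω, f (S ω) * R ω ∂ℙ ≤ c * ∫ ω, |R ω| ∂ℙ := by
    calc -∫ ω, f (S ω) * R ω ∂ℙ = ∫ ω, -(f (S ω) * R ω) ∂ℙ := (integral_neg _).symm
      _ ≤ ∫ ω, |f (S ω) * R ω| ∂ℙ :=
          integral_mono hfSR.neg hfSR.abs fun ω => neg_le_abs _
      _ ≤ ∫ ω, c * |R ω| ∂ℙ := by
          refine integral_mono hfSR.abs (hRint.abs.const_mul c) fun ω => ?_
          rw [abs_mul]
          exact mul_le_mul_of_nonneg_right (hfbd _) (abs_nonneg _)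
      _ = c * ∫ ω, |R ω| ∂ℙ := integral_const_mul _ _
  have hfinal : D * P ≤ Real.sqrt (variance g ℙ) + c * (∫ ω, |S ω| ∂ℙ)
      + c * (∫ ω, |R ω| ∂ℙ) / lam := by
    have h1 : 2 * lam * (D * P - Real.sqrt (variance g ℙ))
        ≤ 2 * lam * (c * ∫ ω, |S ω| ∂ℙ) + 2 * (c * ∫ ω, |R ω| ∂ℙ) := by
      have h2 : 2 * lam * ∫ ω, f (S ω) * S ω ∂ℙ ≤ 2 * lam * (c * ∫ ω, |S ω| ∂ℙ) :=
        mul_le_mul_of_nonneg_left hb1 (by positivity)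
      have h3 : -(2 * ∫ ω, f (S ω) * R ω ∂ℙ) ≤ 2 * (c * ∫ ω, |R ω| ∂ℙ) := by
        have := mul_le_mul_of_nonneg_left hb2 (le_of_lt two_pos)
        linarith
      linarith [hchain]
    have h4 : D * P - Real.sqrt (variance g ℙ)
        ≤ c * (∫ ω, |S ω| ∂ℙ) + c * (∫ ω, |R ω| ∂ℙ) / lam := by
      have h5 : 2 * lam * (c * (∫ ω, |S ω| ∂ℙ) + c * (∫ ω, |R ω| ∂ℙ) / lam)
          = 2 * lam * (c * ∫ ω, |S ω| ∂ℙ) + 2 * (c * ∫ ω, |R ω| ∂ℙ) := by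
        field_simp
      have h7 : 2 * lam * (D * P - Real.sqrt (variance g ℙ))
          ≤ 2 * lam * (c * (∫ ω, |S ω| ∂ℙ) + c * (∫ ω, |R ω| ∂ℙ) / lam) := by
        rw [h5]; exact h1
      exact le_of_mul_le_mul_left h7 (show (0:ℝ) < 2 * lam by positivity)
    linarith
  have hrhs : ((∫ ω, |S ω| ∂ℙ) + (∫ ω, |R ω| ∂ℙ) / lam) / D * c
        + Real.sqrt (variance g ℙ) / D
      = (Real.sqrt (variance g ℙ) + c * (∫ ω, |S ω| ∂ℙ)
          + c * (∫ ω, |R ω| ∂ℙ) / lam) / D := by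
    rw [div_mul_eq_mul_div, ← add_div]
    congr 1
    ring
  rw [hrhs, le_div_iff₀ hDpos]
  linarith [hfinal]
end

section
/- In the setting of the exchangeable pair (S,S') built from the truncated array (remove the last m rows and columns, m ∈ {2,3,4}, n ≥ 6), with λ = 2/(n−m−1), one has E|S'−S|³ ≤ (64n/((n−m)(n−m−1))) γ, and consequently δ := E|S'−S|³/λ ≤ 32nγ/(n−4), where γ = (1/n) Σ_{i,j=1}^n E|X_ij|³. -/
open MeasureTheory ProbabilityTheory
open scoped ENNReal

instance myDiscretePerm (n : ℕ) : DiscreteMeasurableSpace (Equiv.Perm (Fin n)) :=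
  ⟨fun _ => MeasurableSpace.measurableSet_top⟩

private lemma cube2 (a b : ℝ) (ha : 0 ≤ a) (hb : 0 ≤ b) : (a+b)^3 ≤ 4*(a^3+b^3) := by
  nlinarith [mul_nonneg (add_nonneg ha hb) (sq_nonneg (a-b))]

private lemma cube4 (a b c d : ℝ) :
    |c + d - a - b|^3 ≤ 16*(|a|^3+|b|^3+|c|^3+|d|^3) := by
  have h1 : |c + d - a - b| ≤ (|a| + |b|) + (|c| + |d|) := by
    have : c + d - a - b = (c + d) - (a + b) := by ring
    rw [this]
    calc |(c + d) - (a + b)| ≤ |c + d| + |a + b| := abs_sub _ _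
    _ ≤ (|a| + |b|) + (|c| + |d|) := by
        have := abs_add_le c d; have := abs_add_le a b; linarith
  have h2 : |c + d - a - b|^3 ≤ ((|a| + |b|) + (|c| + |d|))^3 :=
    pow_le_pow_left₀ (abs_nonneg _) h1 3
  have h3 := cube2 (|a| + |b|) (|c| + |d|)
    (add_nonneg (abs_nonneg _) (abs_nonneg _)) (add_nonneg (abs_nonneg _) (abs_nonneg _))
  have h4 := cube2 |a| |b| (abs_nonneg _) (abs_nonneg _)
  have h5 := cube2 |c| |d| (abs_nonneg _) (abs_nonneg _)
  linarith

private lemma perm_fiber_card {α : Type*} [Fintype α] [DecidableEq α] (i k : α) :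
    (Finset.univ.filter fun σ : Equiv.Perm α => σ i = k).card
      = (Fintype.card α - 1).factorial := by
  classical
  have hfib : ∀ k' : α, (Finset.univ.filter fun σ : Equiv.Perm α => σ i = k').card
      = (Finset.univ.filter fun σ : Equiv.Perm α => σ i = i).card := by
    intro k'
    apply Finset.card_bij' (fun σ _ => Equiv.swap i k' * σ) (fun σ _ => Equiv.swap i k' * σ)
    · intro σ hσ
      simp only [Finset.mem_filter, Finset.mem_univ, true_and] at hσ ⊢
      simp [Equiv.Perm.mul_apply, hσ]
    · intro σ hσ
      simp only [Finset.mem_filter, Finset.mem_univ, true_and] at hσ ⊢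
      simp [Equiv.Perm.mul_apply, hσ]
    · intro σ _; simp [← mul_assoc]
    · intro σ _; simp [← mul_assoc]
  have hsum : (Finset.univ : Finset (Equiv.Perm α)).card
      = ∑ k' : α, (Finset.univ.filter fun σ : Equiv.Perm α => σ i = k').card :=
    Finset.card_eq_sum_card_fiberwise (fun σ _ => Finset.mem_univ (σ i))
  rw [Finset.card_univ, Fintype.card_perm] at hsum
  simp only [hfib, Finset.sum_const, smul_eq_mul, Finset.card_univ] at hsum
  have hc : 0 < Fintype.card α := Fintype.card_pos_iff.mpr ⟨i⟩
  rw [← Nat.mul_factorial_pred hc.ne'] at hsum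
  have := Nat.eq_of_mul_eq_mul_left hc hsum.symm
  rw [hfib k, ← this]

private lemma perm_sum_apply {α : Type*} [Fintype α] [DecidableEq α] (i : α) (f : α → ℝ) :
    ∑ σ : Equiv.Perm α, f (σ i) = ((Fintype.card α - 1).factorial : ℝ) * ∑ k, f k := by
  classical
  rw [← Finset.sum_fiberwise_of_maps_to (g := fun σ : Equiv.Perm α => σ i)
      (fun σ _ => Finset.mem_univ (σ i)) (fun σ => f (σ i))]
  rw [Finset.mul_sum]
  refine Finset.sum_congr rfl fun k _ => ?_
  rw [Finset.sum_congr rfl (fun σ hσ => ?_), Finset.sum_const, perm_fiber_card i k,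
    nsmul_eq_mul]
  · exact (Finset.mem_filter.mp hσ).2 ▸ rfl

private lemma integrable_abs_cube {Ω : Type*} [MeasurableSpace Ω] {μ : Measure Ω} {f : Ω → ℝ}
    (hf : MemLp f 3 μ) : Integrable (fun ω => |f ω|^3) μ := by
  have h := hf.integrable_norm_rpow (by norm_num) (by norm_num)
  have h2 : (fun ω => ‖f ω‖ ^ (3 : ℝ≥0∞).toReal) = fun ω => |f ω| ^ (3:ℕ) := by
    funext ω
    rw [Real.norm_eq_abs, show (3 : ℝ≥0∞).toReal = ((3:ℕ):ℝ) by norm_num,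
      Real.rpow_natCast]
  rwa [h2] at h

/-- The sum `S = ∑_{i ≤ n-m} X_{i τ(i)}` over the array truncated by removing the last
`m` rows and columns, where `τ` is a permutation of `{1, …, n-m}`. -/
noncomputable def truncS {Ω : Type*} (n m : ℕ) (X : Fin n → Fin n → Ω → ℝ)
    (τ : Ω → Equiv.Perm (Fin (n - m))) (ω : Ω) : ℝ :=
  ∑ i : Fin (n - m),
    X (Fin.castLE (Nat.sub_le n m) i) (Fin.castLE (Nat.sub_le n m) (τ ω i)) ω

/-- `S' = S - X_{I τ(I)} - X_{J τ(J)} + X_{I τ(J)} + X_{J τ(I)}`, where `(I, J) = p`. -/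
noncomputable def truncS' {Ω : Type*} (n m : ℕ) (X : Fin n → Fin n → Ω → ℝ)
    (τ : Ω → Equiv.Perm (Fin (n - m)))
    (p : Ω → Fin (n - m) × Fin (n - m)) (ω : Ω) : ℝ :=
  truncS n m X τ ω
    - X (Fin.castLE (Nat.sub_le n m) (p ω).1)
        (Fin.castLE (Nat.sub_le n m) (τ ω (p ω).1)) ω
    - X (Fin.castLE (Nat.sub_le n m) (p ω).2)
        (Fin.castLE (Nat.sub_le n m) (τ ω (p ω).2)) ω
    + X (Fin.castLE (Nat.sub_le n m) (p ω).1)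
        (Fin.castLE (Nat.sub_le n m) (τ ω (p ω).2)) ω
    + X (Fin.castLE (Nat.sub_le n m) (p ω).2)
        (Fin.castLE (Nat.sub_le n m) (τ ω (p ω).1)) ω

/-- **Third-moment bound for the increment of the truncated exchangeable pair
(equation (2.22)):** `E|S' - S|³ ≤ (64n/((n-m)(n-m-1))) γ` and consequently
`δ = E|S' - S|³ / λ ≤ 32 n γ / (n - 4)`, where `λ = 2/(n-m-1)`. -/
theorem truncated_sum_increment_third_moment
    {Ω : Type*} [MeasureSpace Ω] [IsProbabilityMeasure (ℙ : Measure Ω)]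
    (n m : ℕ) (hn : 6 ≤ n) (hm : m = 2 ∨ m = 3 ∨ m = 4)
    (X : Fin n → Fin n → Ω → ℝ)
    (hmeas : ∀ i j, Measurable (X i j))
    (hmom : ∀ i j, MemLp (X i j) 3 ℙ)
    (hindep : iIndepFun (fun q : Fin n × Fin n => X q.1 q.2) ℙ)
    (τ : Ω → Equiv.Perm (Fin (n - m))) (hτmeas : Measurable τ)
    (hτunif : ∀ σ : Equiv.Perm (Fin (n - m)),
      ℙ {ω | τ ω = σ} = 1 / ((n - m).factorial : ℝ≥0∞))
    (hτindep : IndepFun τ (fun ω (q : Fin n × Fin n) => X q.1 q.2 ω) ℙ)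
    (p : Ω → Fin (n - m) × Fin (n - m)) (hpmeas : Measurable p)
    (hpunif : ∀ i j : Fin (n - m), i ≠ j →
      ℙ {ω | p ω = (i, j)} = 1 / (((n - m) * (n - m - 1) : ℕ) : ℝ≥0∞))
    (hpindep : IndepFun p
      (fun ω => ((fun q : Fin n × Fin n => X q.1 q.2 ω), τ ω)) ℙ)
    (γ : ℝ) (hγ : γ = (1 / (n : ℝ)) * ∑ i, ∑ j, ∫ ω, |X i j ω| ^ 3 ∂ℙ) :
    (∫ ω, |truncS' n m X τ p ω - truncS n m X τ ω| ^ 3 ∂ℙ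
        ≤ (64 * n / (((n : ℝ) - m) * ((n : ℝ) - m - 1))) * γ)
    ∧ (∫ ω, |truncS' n m X τ p ω - truncS n m X τ ω| ^ 3 ∂ℙ) / (2 / ((n : ℝ) - m - 1))
        ≤ 32 * n * γ / ((n : ℝ) - 4) := by
  classical
  have hm4 : m ≤ 4 := by rcases hm with h|h|h <;> omega
  have hN2 : 2 ≤ n - m := by omega
  set c : Fin (n - m) → Fin n := Fin.castLE (Nat.sub_le n m) with hc
  set e : Fin n → Fin n → ℝ := fun a b => ∫ ω, |X a b ω|^3 ∂ℙ with he
  have heInt : ∀ a b, Integrable (fun ω => |X a b ω|^3) ℙ :=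
    fun a b => integrable_abs_cube (hmom a b)
  have he0 : ∀ a b, 0 ≤ e a b :=
    fun a b => integral_nonneg fun ω => by positivity
  set V := (Fin (n - m) × Fin (n - m)) × Equiv.Perm (Fin (n - m)) with hV
  set g : V → Ω → ℝ := fun v ω =>
      16 * (|X (c v.1.1) (c (v.2 v.1.1)) ω|^3 + |X (c v.1.2) (c (v.2 v.1.2)) ω|^3
        + |X (c v.1.1) (c (v.2 v.1.2)) ω|^3 + |X (c v.1.2) (c (v.2 v.1.1)) ω|^3) with hg
  set A : V → Set Ω := fun v => {ω | p ω = v.1 ∧ τ ω = v.2} with hA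
  set Svt : Finset V := Finset.univ.filter (fun v : V => v.1.1 ≠ v.1.2) with hSvt
  set H : Ω → ℝ := fun ω => ∑ v ∈ Svt, Set.indicator (A v) (g v) ω with hH
  have hg0 : ∀ v ω, 0 ≤ g v ω := fun v ω => by rw [hg]; positivity
  have hgInt : ∀ v, Integrable (g v) ℙ := by
    intro v
    exact (((((heInt _ _).add (heInt _ _)).add (heInt _ _)).add (heInt _ _)).const_mul 16)
  have hAmeas : ∀ v, MeasurableSet (A v) := by
    intro v
    exact (hpmeas (measurableSet_singleton v.1)).inter (hτmeas (measurableSet_singleton v.2))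
  have hHInt : Integrable H ℙ :=
    integrable_finset_sum _ (fun v _ => (hgInt v).indicator (hAmeas v))
  -- pointwise bound
  have hpt : ∀ ω, |truncS' n m X τ p ω - truncS n m X τ ω| ^ 3 ≤ H ω := by
    intro ω
    have hH0 : (0:ℝ) ≤ H ω := by
      rw [hH]
      exact Finset.sum_nonneg fun v _ => Set.indicator_nonneg (fun ω' _ => hg0 v ω') ω
    by_cases hp : (p ω).1 = (p ω).2
    · have hD : truncS' n m X τ p ω - truncS n m X τ ω = 0 := by
        simp only [truncS']
        rw [hp]
        ring
      rw [hD]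
      simpa using hH0
    · have hmem : ((p ω, τ ω) : V) ∈ Svt := by
        rw [hSvt]
        simp [hp]
      have hsingle : Set.indicator (A (p ω, τ ω)) (g (p ω, τ ω)) ω ≤ H ω := by
        rw [hH]
        exact Finset.single_le_sum (f := fun v : V => Set.indicator (A v) (g v) ω)
          (fun v _ => Set.indicator_nonneg (fun ω' _ => hg0 v ω') ω) hmem
      have hind : Set.indicator (A (p ω, τ ω)) (g (p ω, τ ω)) ω = g (p ω, τ ω) ω :=
        Set.indicator_of_mem (by rw [hA]; exact ⟨rfl, rfl⟩) _
      have hD : truncS' n m X τ p ω - truncS n m X τ ω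
          = X (c (p ω).1) (c (τ ω (p ω).2)) ω + X (c (p ω).2) (c (τ ω (p ω).1)) ω
            - X (c (p ω).1) (c (τ ω (p ω).1)) ω - X (c (p ω).2) (c (τ ω (p ω).2)) ω := by
        simp only [truncS', hc]
        ring
      rw [hD]
      calc |X (c (p ω).1) (c (τ ω (p ω).2)) ω + X (c (p ω).2) (c (τ ω (p ω).1)) ω
            - X (c (p ω).1) (c (τ ω (p ω).1)) ω - X (c (p ω).2) (c (τ ω (p ω).2)) ω| ^ 3
          ≤ 16 * (|X (c (p ω).1) (c (τ ω (p ω).1)) ω|^3 + |X (c (p ω).2) (c (τ ω (p ω).2)) ω|^3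
            + |X (c (p ω).1) (c (τ ω (p ω).2)) ω|^3 + |X (c (p ω).2) (c (τ ω (p ω).1)) ω|^3) :=
          cube4 _ _ _ _
      _ = g (p ω, τ ω) ω := by rw [hg]
      _ ≤ H ω := hind ▸ hsingle
  have hIle : ∫ ω, |truncS' n m X τ p ω - truncS n m X τ ω| ^ 3 ∂ℙ ≤ ∫ ω, H ω ∂ℙ :=
    integral_mono_of_nonneg (Filter.Eventually.of_forall fun ω => by positivity) hHInt
      (Filter.Eventually.of_forall hpt)
  -- value of each piece
  have hIv : ∀ v ∈ Svt, ∫ ω, Set.indicator (A v) (g v) ω ∂ℙ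
      = ((1 / (((n - m) * (n - m - 1) : ℕ) : ℝ)) * (1 / ((n - m).factorial : ℝ)) * 16) *
        (e (c v.1.1) (c (v.2 v.1.1)) + e (c v.1.2) (c (v.2 v.1.2))
          + e (c v.1.1) (c (v.2 v.1.2)) + e (c v.1.2) (c (v.2 v.1.1))) := by
    rintro ⟨⟨i, j⟩, σ⟩ hv
    have hij : i ≠ j := by
      rw [hSvt] at hv
      simpa using hv
    set XX : Ω → (Fin n × Fin n → ℝ) := fun ω q => X q.1 q.2 ω with hXX
    set Y : Ω → (Fin n × Fin n → ℝ) × Equiv.Perm (Fin (n - m)) :=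
        fun ω => (XX ω, τ ω) with hY
    set φ : Fin (n - m) × Fin (n - m) → ℝ := fun q => if q = (i, j) then 1 else 0 with hφ
    set φ₂ : Equiv.Perm (Fin (n - m)) → ℝ := fun s => if s = σ then 1 else 0 with hφ₂
    set ψ₂ : (Fin n × Fin n → ℝ) → ℝ := fun F =>
        16 * (|F (c i, c (σ i))|^3 + |F (c j, c (σ j))|^3
          + |F (c i, c (σ j))|^3 + |F (c j, c (σ i))|^3) with hψ₂
    set ψ : (Fin n × Fin n → ℝ) × Equiv.Perm (Fin (n - m)) → ℝ := fun y =>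
        φ₂ y.2 * ψ₂ y.1 with hψ
    have hφm : Measurable φ := Measurable.of_discrete
    have hφ₂m : Measurable φ₂ := Measurable.of_discrete
    have hψ₂m : Measurable ψ₂ := by
      have hev : ∀ q : Fin n × Fin n, Measurable (fun F : Fin n × Fin n → ℝ => |F q|^3) :=
        fun q => ((measurable_pi_apply q).abs.pow_const 3)
      exact ((((hev _).add (hev _)).add (hev _)).add (hev _)).const_mul 16
    have hψm : Measurable ψ :=
      (hφ₂m.comp measurable_snd).mul (hψ₂m.comp measurable_fst)
    have hXXm : Measurable XX := measurable_pi_lambda _ fun q => hmeas q.1 q.2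
    have hYm : Measurable Y := hXXm.prodMk hτmeas
    have heq1 : (fun ω => Set.indicator (A ((i, j), σ)) (g ((i, j), σ)) ω)
        = fun ω => φ (p ω) * ψ (Y ω) := by
      funext ω
      by_cases h1 : p ω = (i, j) <;> by_cases h2 : τ ω = σ <;>
        simp [Set.indicator_apply, hA, hφ, hψ, hφ₂, hψ₂, hg, hY, hXX, h1, h2, mul_comm]
    have step1 : ∫ ω, φ (p ω) * ψ (Y ω) ∂ℙ
        = (∫ ω, φ (p ω) ∂ℙ) * ∫ ω, ψ (Y ω) ∂ℙ :=
      (hpindep.comp hφm hψm).integral_fun_mul_eq_mul_integral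
        ((hφm.comp hpmeas).aestronglyMeasurable) ((hψm.comp hYm).aestronglyMeasurable)
    have step2 : ∫ ω, ψ (Y ω) ∂ℙ
        = (∫ ω, φ₂ (τ ω) ∂ℙ) * ∫ ω, ψ₂ (XX ω) ∂ℙ :=
      (hτindep.comp hφ₂m hψ₂m).integral_fun_mul_eq_mul_integral
        ((hφ₂m.comp hτmeas).aestronglyMeasurable) ((hψ₂m.comp hXXm).aestronglyMeasurable)
    have hval1 : ∫ ω, φ (p ω) ∂ℙ = 1 / (((n - m) * (n - m - 1) : ℕ) : ℝ) := by
      have hs : MeasurableSet {ω | p ω = (i, j)} := hpmeas (measurableSet_singleton _)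
      have hrw : (fun ω => φ (p ω)) = Set.indicator {ω | p ω = (i, j)} (fun _ => (1:ℝ)) := by
        funext ω
        by_cases h : p ω = (i, j) <;> simp [hφ, h, Set.indicator_apply]
      rw [hrw, integral_indicator_const (1:ℝ) hs, smul_eq_mul, mul_one, measureReal_def, hpunif i j hij,
        ENNReal.toReal_div, ENNReal.toReal_one, ENNReal.toReal_natCast]
    have hval2 : ∫ ω, φ₂ (τ ω) ∂ℙ = 1 / ((n - m).factorial : ℝ) := by
      have hs : MeasurableSet {ω | τ ω = σ} := hτmeas (measurableSet_singleton _)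
      have hrw : (fun ω => φ₂ (τ ω)) = Set.indicator {ω | τ ω = σ} (fun _ => (1:ℝ)) := by
        funext ω
        by_cases h : τ ω = σ <;> simp [hφ₂, h, Set.indicator_apply]
      rw [hrw, integral_indicator_const (1:ℝ) hs, smul_eq_mul, mul_one, measureReal_def, hτunif σ,
        ENNReal.toReal_div, ENNReal.toReal_natCast, ENNReal.toReal_one]
    have hval3 : ∫ ω, ψ₂ (XX ω) ∂ℙ
        = 16 * (e (c i) (c (σ i)) + e (c j) (c (σ j)) + e (c i) (c (σ j)) + e (c j) (c (σ i))) := by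
      have hrw : (fun ω => ψ₂ (XX ω)) = fun ω =>
          16 * (|X (c i) (c (σ i)) ω|^3 + |X (c j) (c (σ j)) ω|^3
            + |X (c i) (c (σ j)) ω|^3 + |X (c j) (c (σ i)) ω|^3) := rfl
      have i12 : Integrable (fun ω => |X (c i) (c (σ i)) ω|^3 + |X (c j) (c (σ j)) ω|^3) ℙ :=
        (heInt (c i) (c (σ i))).add (heInt (c j) (c (σ j)))
      have i123 : Integrable (fun ω => |X (c i) (c (σ i)) ω|^3 + |X (c j) (c (σ j)) ω|^3
          + |X (c i) (c (σ j)) ω|^3) ℙ := i12.add (heInt (c i) (c (σ j)))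
      rw [hrw, integral_const_mul,
        integral_add i123 (heInt (c j) (c (σ i))),
        integral_add i12 (heInt (c i) (c (σ j))),
        integral_add (heInt (c i) (c (σ i))) (heInt (c j) (c (σ j)))]
    calc ∫ ω, Set.indicator (A ((i, j), σ)) (g ((i, j), σ)) ω ∂ℙ
        = ∫ ω, φ (p ω) * ψ (Y ω) ∂ℙ := by rw [heq1]
      _ = (∫ ω, φ (p ω) ∂ℙ) * ((∫ ω, φ₂ (τ ω) ∂ℙ) * ∫ ω, ψ₂ (XX ω) ∂ℙ) := by
          rw [step1, step2]
      _ = ((1 / (((n - m) * (n - m - 1) : ℕ) : ℝ)) * (1 / ((n - m).factorial : ℝ)) * 16) *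
          (e (c i) (c (σ i)) + e (c j) (c (σ j)) + e (c i) (c (σ j)) + e (c j) (c (σ i))) := by
          rw [hval1, hval2, hval3]
          ring
  -- combinatorial bound
  have hT : ∑ a : Fin (n - m), ∑ b : Fin (n - m), e (c a) (c b) ≤ (n : ℝ) * γ := by
    have hinj : Function.Injective c := Fin.castLE_injective _
    have hrow : ∀ f : Fin n → ℝ, (∀ x, 0 ≤ f x) →
        ∑ b : Fin (n - m), f (c b) ≤ ∑ x : Fin n, f x := by
      intro f hf
      rw [← Finset.sum_image (g := c) (f := f)
        (fun x _ y _ h => hinj h)]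
      exact Finset.sum_le_sum_of_subset_of_nonneg (Finset.subset_univ _)
        (fun x _ _ => hf x)
    have h1 : ∑ a : Fin (n - m), ∑ b : Fin (n - m), e (c a) (c b)
        ≤ ∑ x : Fin n, ∑ y : Fin n, e x y := by
      calc ∑ a : Fin (n - m), ∑ b : Fin (n - m), e (c a) (c b)
          ≤ ∑ a : Fin (n - m), ∑ y : Fin n, e (c a) y :=
            Finset.sum_le_sum fun a _ => hrow (fun y => e (c a) y) (fun y => he0 _ _)
        _ ≤ ∑ x : Fin n, ∑ y : Fin n, e x y :=
            hrow (fun x => ∑ y : Fin n, e x y)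
              (fun x => Finset.sum_nonneg fun y _ => he0 _ _)
    have hnn : (n : ℝ) ≠ 0 := by positivity
    have h2 : (n : ℝ) * γ = ∑ x : Fin n, ∑ y : Fin n, e x y := by
      rw [hγ, he, ← mul_assoc, mul_one_div, div_self hnn, one_mul]
    rw [h2]
    exact h1
  have hHval : ∫ ω, H ω ∂ℙ ≤ 64 * ((n:ℝ) * γ) / (((n - m : ℕ):ℝ) * (((n - m : ℕ):ℝ) - 1)) := by
    set R : Fin (n - m) → ℝ := fun a => ∑ k : Fin (n - m), e (c a) (c k) with hR
    set E : V → ℝ := fun v => e (c v.1.1) (c (v.2 v.1.1)) + e (c v.1.2) (c (v.2 v.1.2))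
      + e (c v.1.1) (c (v.2 v.1.2)) + e (c v.1.2) (c (v.2 v.1.1)) with hE
    set C : ℝ := (1 / (((n - m) * (n - m - 1) : ℕ) : ℝ)) * (1 / ((n - m).factorial : ℝ)) * 16
      with hC
    have hE0 : ∀ v, 0 ≤ E v := fun v =>
      add_nonneg (add_nonneg (add_nonneg (he0 _ _) (he0 _ _)) (he0 _ _)) (he0 _ _)
    have key : ∀ i j : Fin (n - m), (∑ σ : Equiv.Perm (Fin (n - m)), E ((i, j), σ))
        = ((n - m - 1).factorial : ℝ) * (2 * R i + 2 * R j) := by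
      intro i j
      have : ∀ σ : Equiv.Perm (Fin (n - m)), E ((i, j), σ)
          = e (c i) (c (σ i)) + e (c j) (c (σ j)) + e (c i) (c (σ j)) + e (c j) (c (σ i)) :=
        fun σ => rfl
      simp only [this]
      rw [Finset.sum_add_distrib, Finset.sum_add_distrib, Finset.sum_add_distrib,
        perm_sum_apply i (fun k => e (c i) (c k)), perm_sum_apply j (fun k => e (c j) (c k)),
        perm_sum_apply j (fun k => e (c i) (c k)), perm_sum_apply i (fun k => e (c j) (c k)),
        Fintype.card_fin, hR]
      ring
    have hsumV : ∑ v : V, E v = ((n - m - 1).factorial : ℝ)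
        * (4 * ((n - m : ℕ):ℝ) * ∑ a : Fin (n - m), R a) := by
      rw [Fintype.sum_prod_type, Fintype.sum_prod_type]
      rw [Finset.sum_congr rfl fun i (_ : i ∈ Finset.univ) =>
        Finset.sum_congr rfl fun j (_ : j ∈ Finset.univ) => key i j]
      simp only [mul_add, Finset.sum_add_distrib, Finset.sum_const, Finset.card_univ,
        Fintype.card_fin, nsmul_eq_mul, ← Finset.mul_sum]
      ring
    have hC0 : 0 ≤ C := by
      rw [hC]
      positivity
    have hfac0 : (0:ℝ) ≤ ((n - m - 1).factorial : ℝ) := by positivity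
    have hHeq : ∫ ω, H ω ∂ℙ = ∑ v ∈ Svt, ∫ ω, Set.indicator (A v) (g v) ω ∂ℙ := by
      rw [hH]
      exact integral_finset_sum Svt (fun v _ => (hgInt v).indicator (hAmeas v))
    have hfacpos : (0:ℝ) < ((n - m).factorial : ℝ) :=
      Nat.cast_pos.mpr (Nat.factorial_pos _)
    have hNN1pos : (0:ℝ) < (((n - m) * (n - m - 1) : ℕ) : ℝ) := by
      have : 0 < (n - m) * (n - m - 1) := by
        have h1 : 0 < n - m := by omega
        have h2 : 0 < n - m - 1 := by omega
        positivity
      exact_mod_cast this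
    have hfacrel : ((n - m).factorial : ℝ) = ((n - m : ℕ):ℝ) * ((n - m - 1).factorial : ℝ) := by
      have := Nat.mul_factorial_pred (show n - m ≠ 0 by omega)
      exact_mod_cast this.symm
    calc ∫ ω, H ω ∂ℙ
        = ∑ v ∈ Svt, C * E v := by
          rw [hHeq]
          exact Finset.sum_congr rfl hIv
      _ = C * ∑ v ∈ Svt, E v := by rw [Finset.mul_sum]
      _ ≤ C * ∑ v : V, E v := by
          apply mul_le_mul_of_nonneg_left _ hC0
          exact Finset.sum_le_sum_of_subset_of_nonneg (hSvt ▸ Finset.filter_subset _ _)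
            (fun v _ _ => hE0 v)
      _ = C * (((n - m - 1).factorial : ℝ) * (4 * ((n - m : ℕ):ℝ) * ∑ a : Fin (n - m), R a)) := by
          rw [hsumV]
      _ ≤ C * (((n - m - 1).factorial : ℝ) * (4 * ((n - m : ℕ):ℝ) * ((n:ℝ) * γ))) := by
          apply mul_le_mul_of_nonneg_left _ hC0
          apply mul_le_mul_of_nonneg_left _ hfac0
          apply mul_le_mul_of_nonneg_left _ (by positivity)
          show ∑ a : Fin (n - m), R a ≤ (n : ℝ) * γ
          simpa only [hR] using hT
      _ = 64 * ((n:ℝ) * γ) / (((n - m : ℕ):ℝ) * (((n - m : ℕ):ℝ) - 1)) := by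
          rw [hC]
          have hcastmul : (((n - m) * (n - m - 1) : ℕ) : ℝ)
              = ((n - m : ℕ):ℝ) * (((n - m : ℕ):ℝ) - 1) := by
            have h1 : (1:ℕ) ≤ n - m := by omega
            push_cast [Nat.cast_sub h1]
            ring
          rw [hcastmul, hfacrel]
          have hNpos' : (0:ℝ) < ((n - m : ℕ):ℝ) := by
            have : (0:ℕ) < n - m := by omega
            exact_mod_cast this
          have hN1pos' : (0:ℝ) < ((n - m : ℕ):ℝ) - 1 := by
            have : (1:ℕ) < n - m := by omega
            have : (1:ℝ) < ((n - m : ℕ):ℝ) := by exact_mod_cast this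
            linarith
          have hfp : (0:ℝ) < ((n - m - 1).factorial : ℝ) :=
            Nat.cast_pos.mpr (Nat.factorial_pos _)
          field_simp
          ring
  -- casts
  have hcast1 : ((n : ℝ) - m) = ((n - m : ℕ) : ℝ) := by
    rw [Nat.cast_sub (by omega)]
  have hcast2 : ((n : ℝ) - m - 1) = ((n - m : ℕ) : ℝ) - 1 := by rw [hcast1]
  have hγ0 : 0 ≤ γ := by
    rw [hγ]
    have : ∀ i j : Fin n, 0 ≤ ∫ ω, |X i j ω| ^ 3 ∂ℙ :=
      fun i j => integral_nonneg fun ω => by positivity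
    positivity
  have hNpos : (0:ℝ) < ((n - m : ℕ):ℝ) := by
    have : (0:ℕ) < n - m := by omega
    exact_mod_cast this
  have hN1pos : (0:ℝ) < ((n - m : ℕ):ℝ) - 1 := by
    have : (1:ℕ) < n - m := by omega
    have : (1:ℝ) < ((n - m : ℕ):ℝ) := by exact_mod_cast this
    linarith
  have part1 : ∫ ω, |truncS' n m X τ p ω - truncS n m X τ ω| ^ 3 ∂ℙ
      ≤ (64 * n / (((n : ℝ) - m) * ((n : ℝ) - m - 1))) * γ := by
    refine le_trans (le_trans hIle hHval) (le_of_eq ?_)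
    rw [hcast1]
    ring
  refine ⟨part1, ?_⟩
  have hI0 : 0 ≤ ∫ ω, |truncS' n m X τ p ω - truncS n m X τ ω| ^ 3 ∂ℙ :=
    integral_nonneg fun ω => by positivity
  set I : ℝ := ∫ ω, |truncS' n m X τ p ω - truncS n m X τ ω| ^ 3 ∂ℙ with hI
  have hbound : I ≤ 64 * ((n:ℝ) * γ) / (((n - m : ℕ):ℝ) * (((n - m : ℕ):ℝ) - 1)) :=
    le_trans hIle hHval
  have hn4 : (0:ℝ) < (n:ℝ) - 4 := by
    have : (4:ℕ) < n := by omega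
    have : (4:ℝ) < (n:ℝ) := by exact_mod_cast this
    linarith
  have hNge : (n:ℝ) - 4 ≤ ((n - m : ℕ):ℝ) := by
    rw [← hcast1]
    have : (m:ℝ) ≤ 4 := by exact_mod_cast hm4
    linarith
  rw [hcast2, div_div_eq_mul_div]
  calc I * (((n - m : ℕ):ℝ) - 1) / 2
      ≤ (64 * ((n:ℝ) * γ) / (((n - m : ℕ):ℝ) * (((n - m : ℕ):ℝ) - 1)))
        * (((n - m : ℕ):ℝ) - 1) / 2 := by
        apply div_le_div_of_nonneg_right ?_ (by norm_num)
        exact mul_le_mul_of_nonneg_right hbound (by linarith)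
    _ = 32 * ((n:ℝ) * γ) / ((n - m : ℕ):ℝ) := by
        field_simp
        ring
    _ ≤ 32 * ((n:ℝ) * γ) / ((n:ℝ) - 4) := by
        apply div_le_div_of_nonneg_left (by positivity) hn4 hNge
    _ = 32 * (n:ℝ) * γ / ((n:ℝ) - 4) := by ring
end

section
/- Let X = {X_ij : 1 ≤ i,j ≤ n} be an n×n array of independent real random variables with n ≥ 2, all row and column sums of the means zero, let π be a uniform random permutation of {1,…,n} independent of X, W = Σ_{i=1}^n X_{iπ(i)}, let (I,J) be a uniform pair of distinct indices in {1,…,n} independent of X and π, and W' = W − X_{Iπ(I)} − X_{Jπ(J)} + X_{Iπ(J)} + X_{Jπ(I)}. Then (W,W') is an exchangeable pair and E(W'−W | W) = −λW + R with λ = 2/(n−1) and R = (2/(n(n−1))) E( Σ_{i,j=1}^n X_ij | W ). -/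
open MeasureTheory ProbabilityTheory
open scoped ENNReal

/-- The combinatorial sum `W = ∑ i, X_{i π(i)}`. -/
noncomputable def permSum {Ω : Type*} (n : ℕ) (X : Fin n → Fin n → Ω → ℝ)
    (π : Ω → Equiv.Perm (Fin n)) (ω : Ω) : ℝ :=
  ∑ i, X i (π ω i) ω

/-- `W' = W - X_{I π(I)} - X_{J π(J)} + X_{I π(J)} + X_{J π(I)}`, where `(I, J) = p`. -/
noncomputable def permSum' {Ω : Type*} (n : ℕ) (X : Fin n → Fin n → Ω → ℝ)
    (π : Ω → Equiv.Perm (Fin n)) (p : Ω → Fin n × Fin n) (ω : Ω) : ℝ :=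
  permSum n X π ω
    - X (p ω).1 (π ω (p ω).1) ω - X (p ω).2 (π ω (p ω).2) ω
    + X (p ω).1 (π ω (p ω).2) ω + X (p ω).2 (π ω (p ω).1) ω

namespace CSEP

noncomputable def G (n : ℕ) (σ : Equiv.Perm (Fin n)) (x : Fin n × Fin n → ℝ) : ℝ :=
  ∑ i, x (i, σ i)

noncomputable def F (n : ℕ) (q : Fin n × Fin n) (σ : Equiv.Perm (Fin n))
    (x : Fin n × Fin n → ℝ) : ℝ :=
  G n σ x - x (q.1, σ q.1) - x (q.2, σ q.2) + x (q.1, σ q.2) + x (q.2, σ q.1)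

lemma measurable_G (n : ℕ) (σ : Equiv.Perm (Fin n)) : Measurable (G n σ) :=
  Finset.measurable_sum _ fun i _ => measurable_pi_apply (i, σ i)

lemma measurable_F (n : ℕ) (q : Fin n × Fin n) (σ : Equiv.Perm (Fin n)) :
    Measurable (F n q σ) := by
  unfold F
  exact ((((measurable_G n σ).sub (measurable_pi_apply _)).sub
    (measurable_pi_apply _)).add (measurable_pi_apply _)).add (measurable_pi_apply _)

lemma F_eq_G_swap (n : ℕ) (q : Fin n × Fin n) (σ : Equiv.Perm (Fin n))
    (x : Fin n × Fin n → ℝ) :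
    F n q σ x = G n (σ * Equiv.swap q.1 q.2) x := by
  rcases eq_or_ne q.1 q.2 with h | h
  · simp only [F, G, h, Equiv.swap_self, Equiv.Perm.mul_apply, Equiv.refl_apply]
    ring
  · have key : ∀ i : Fin n, x (i, σ (Equiv.swap q.1 q.2 i))
        = x (i, σ i) + (if i = q.1 then x (q.1, σ q.2) - x (q.1, σ q.1) else 0)
          + (if i = q.2 then x (q.2, σ q.1) - x (q.2, σ q.2) else 0) := by
      intro i
      by_cases h1 : i = q.1
      · subst h1
        rw [Equiv.swap_apply_left]
        simp [h, h.symm]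
      · by_cases h2 : i = q.2
        · subst h2
          rw [Equiv.swap_apply_right]
          simp [h1]
        · rw [Equiv.swap_apply_of_ne_of_ne h1 h2]
          simp [h1, h2]
    have hG : G n (σ * Equiv.swap q.1 q.2) x = ∑ i, x (i, σ (Equiv.swap q.1 q.2 i)) := rfl
    rw [hG]
    simp only [key]
    rw [Finset.sum_add_distrib, Finset.sum_add_distrib, Finset.sum_ite_eq' Finset.univ q.1,
      Finset.sum_ite_eq' Finset.univ q.2]
    simp only [Finset.mem_univ, if_true]
    simp only [F, G]
    ring

lemma G_swap_swap (n : ℕ) (q : Fin n × Fin n) (σ : Equiv.Perm (Fin n))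
    (x : Fin n × Fin n → ℝ) :
    F n q (σ * Equiv.swap q.1 q.2) x = G n σ x := by
  rw [F_eq_G_swap, mul_assoc, Equiv.swap_mul_self, mul_one]

lemma measurable_eval (n : ℕ) (a b : Fin n) :
    Measurable (fun z : (Fin n × Fin n → ℝ) × Equiv.Perm (Fin n) => z.1 (a, z.2 b)) := by
  have h : (fun z : (Fin n × Fin n → ℝ) × Equiv.Perm (Fin n) => z.1 (a, z.2 b))
      = fun z => ∑ k, if z.2 b = k then z.1 (a, k) else 0 := by
    funext z; rw [Finset.sum_ite_eq]; simp
  rw [h]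
  refine Finset.measurable_sum _ fun k _ => Measurable.ite ?_
    ((measurable_pi_apply (a, k)).comp measurable_fst) measurable_const
  exact measurable_snd (show MeasurableSet {σ : Equiv.Perm (Fin n) | σ b = k} from trivial)

lemma measurable_G2 (n : ℕ) :
    Measurable (fun z : (Fin n × Fin n → ℝ) × Equiv.Perm (Fin n) => G n z.2 z.1) :=
  Finset.measurable_sum _ fun i _ => measurable_eval n i i

end CSEP
open MeasureTheory ProbabilityTheory CSEP
open scoped ENNReal

/-- **Construction of the exchangeable pair for the full combinatorial sum
(equation (3.3)):** `(W, W')` is exchangeable and `E(W' - W | W) = -λ W + R` with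
`λ = 2/(n-1)` and `R = (2/(n(n-1))) E(∑_{i,j} X_{ij} | W)`. -/
theorem combinatorial_sum_exchangeable_pair
    {Ω : Type*} [MeasureSpace Ω] [IsProbabilityMeasure (ℙ : Measure Ω)]
    (n : ℕ) (hn : 2 ≤ n)
    (X : Fin n → Fin n → Ω → ℝ) (c : Fin n → Fin n → ℝ)
    (hmeas : ∀ i j, Measurable (X i j))
    (hint : ∀ i j, Integrable (X i j) ℙ)
    (hindep : iIndepFun (fun q : Fin n × Fin n => X q.1 q.2) ℙ)
    (hmean : ∀ i j, ∫ ω, X i j ω ∂ℙ = c i j)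
    (hrow : ∀ i, ∑ j, c i j = 0)
    (hcol : ∀ j, ∑ i, c i j = 0)
    (π : Ω → Equiv.Perm (Fin n)) (hπmeas : Measurable π)
    (hπunif : ∀ σ : Equiv.Perm (Fin n), ℙ {ω | π ω = σ} = 1 / (n.factorial : ℝ≥0∞))
    (hπindep : IndepFun π (fun ω (q : Fin n × Fin n) => X q.1 q.2 ω) ℙ)
    (p : Ω → Fin n × Fin n) (hpmeas : Measurable p)
    (hpunif : ∀ i j : Fin n, i ≠ j →
      ℙ {ω | p ω = (i, j)} = 1 / ((n * (n - 1) : ℕ) : ℝ≥0∞))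
    (hpindep : IndepFun p
      (fun ω => ((fun q : Fin n × Fin n => X q.1 q.2 ω), π ω)) ℙ) :
    IdentDistrib (fun ω => (permSum n X π ω, permSum' n X π p ω))
        (fun ω => (permSum' n X π p ω, permSum n X π ω)) ℙ ℙ
    ∧ ℙ[fun ω => permSum' n X π p ω - permSum n X π ω
          | MeasurableSpace.comap (permSum n X π) inferInstance]
        =ᵐ[ℙ] fun ω =>
          -(2 / ((n : ℝ) - 1)) * permSum n X π ω
          + (2 / ((n : ℝ) * ((n : ℝ) - 1)))
            * ((ℙ[fun ω' => ∑ i, ∑ j, X i j ω'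
                | MeasurableSpace.comap (permSum n X π) inferInstance]) ω) := by
  classical
  -- basic measurability / integrability
  have measXπ : ∀ a b : Fin n, Measurable fun ω => X a (π ω b) ω := by
    intro a b
    have h : (fun ω => X a (π ω b) ω) = fun ω => ∑ k, if π ω b = k then X a k ω else 0 := by
      funext ω; rw [Finset.sum_ite_eq]; simp
    rw [h]
    refine Finset.measurable_sum _ fun k _ => Measurable.ite ?_ (hmeas a k) measurable_const
    exact hπmeas (show MeasurableSet {σ : Equiv.Perm (Fin n) | σ b = k} from trivial)
  have intXπ : ∀ a b : Fin n, Integrable (fun ω => X a (π ω b) ω) ℙ := by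
    intro a b
    have h : (fun ω => X a (π ω b) ω)
        = fun ω => ∑ k, ({ω' | π ω' b = k}).indicator (X a k) ω := by
      funext ω
      simp only [Set.indicator_apply, Set.mem_setOf_eq]
      rw [Finset.sum_ite_eq]; simp
    rw [h]
    exact integrable_finset_sum _ fun k _ => (hint a k).indicator
      (hπmeas (show MeasurableSet {σ : Equiv.Perm (Fin n) | σ b = k} from trivial))
  have measP : ∀ a b : Fin n × Fin n → Fin n,
      Measurable fun ω => X (a (p ω)) (π ω (b (p ω))) ω := by
    intro a b
    have h : (fun ω => X (a (p ω)) (π ω (b (p ω))) ω)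
        = fun ω => ∑ q : Fin n × Fin n, if p ω = q then X (a q) (π ω (b q)) ω else 0 := by
      funext ω; rw [Finset.sum_ite_eq]; simp
    rw [h]
    exact Finset.measurable_sum _ fun q _ => Measurable.ite
      (hpmeas (measurableSet_singleton q)) (measXπ (a q) (b q)) measurable_const
  have intP : ∀ a b : Fin n × Fin n → Fin n,
      Integrable (fun ω => X (a (p ω)) (π ω (b (p ω))) ω) ℙ := by
    intro a b
    have h : (fun ω => X (a (p ω)) (π ω (b (p ω))) ω)
        = fun ω => ∑ q : Fin n × Fin n,
          ({ω' | p ω' = q}).indicator (fun ω' => X (a q) (π ω' (b q)) ω') ω := by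
      funext ω
      simp only [Set.indicator_apply, Set.mem_setOf_eq]
      rw [Finset.sum_ite_eq]; simp
    rw [h]
    exact integrable_finset_sum _ fun q _ =>
      (intXπ (a q) (b q)).indicator (hpmeas (measurableSet_singleton q))
  have hWmeas : Measurable (permSum n X π) := by
    unfold permSum
    exact Finset.measurable_sum _ fun i _ => measXπ i i
  have hW'meas : Measurable (permSum' n X π p) := by
    unfold permSum'
    exact (((hWmeas.sub (measP Prod.fst Prod.fst)).sub (measP Prod.snd Prod.snd)).add
      (measP Prod.fst Prod.snd)).add (measP Prod.snd Prod.fst)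
  have hWint : Integrable (permSum n X π) ℙ := by
    unfold permSum
    exact integrable_finset_sum _ fun i _ => intXπ i i
  have hW'int : Integrable (permSum' n X π p) ℙ := by
    unfold permSum'
    exact (((hWint.sub (intP Prod.fst Prod.fst)).sub (intP Prod.snd Prod.snd)).add
      (intP Prod.fst Prod.snd)).add (intP Prod.snd Prod.fst)
  constructor
  · -- Part 1: exchangeability
    set Xv : Ω → (Fin n × Fin n → ℝ) := fun ω q => X q.1 q.2 ω with hXvdef
    have hπunif' : ∀ σ : Equiv.Perm (Fin n),
        ℙ (π ⁻¹' {σ}) = 1 / (n.factorial : ℝ≥0∞) := fun σ => hπunif σ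
    refine ⟨(hWmeas.prodMk hW'meas).aemeasurable, (hW'meas.prodMk hWmeas).aemeasurable, ?_⟩
    refine Measure.ext fun A hA => ?_
    rw [Measure.map_apply (hWmeas.prodMk hW'meas) hA,
      Measure.map_apply (hW'meas.prodMk hWmeas) hA]
    have hpart : ∀ S : Set Ω, MeasurableSet S →
        ℙ S = ∑ y : (Fin n × Fin n) × Equiv.Perm (Fin n),
          ℙ (S ∩ (p ⁻¹' {y.1} ∩ π ⁻¹' {y.2})) := by
      intro S hS
      have hU : S = ⋃ y : (Fin n × Fin n) × Equiv.Perm (Fin n),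
          S ∩ (p ⁻¹' {y.1} ∩ π ⁻¹' {y.2}) := by
        ext ω
        simp only [Set.mem_iUnion, Set.mem_inter_iff, Set.mem_preimage, Set.mem_singleton_iff]
        exact ⟨fun h => ⟨(p ω, π ω), h, rfl, rfl⟩, fun ⟨y, h, _, _⟩ => h⟩
      conv_lhs => rw [hU]
      rw [measure_iUnion ?_ ?_]
      · exact tsum_fintype _
      · intro y y' hyy'
        rw [Function.onFun, Set.disjoint_left]
        rintro ω ⟨_, h1, h2⟩ ⟨_, h1', h2'⟩
        simp only [Set.mem_preimage, Set.mem_singleton_iff] at h1 h2 h1' h2'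
        exact hyy' (Prod.ext (h1.symm.trans h1') (h2.symm.trans h2'))
      · exact fun y => hS.inter ((hpmeas (measurableSet_singleton _)).inter (hπmeas trivial))
    rw [hpart _ ((hWmeas.prodMk hW'meas) hA), hpart _ ((hW'meas.prodMk hWmeas) hA)]
    -- rewrite each term of the partition sum
    have hsetgen : ∀ (u : Ω → ℝ × ℝ)
        (Φ : (Fin n × Fin n) → Equiv.Perm (Fin n) → (Fin n × Fin n → ℝ) → ℝ × ℝ),
        (∀ ω, u ω = Φ (p ω) (π ω) (Xv ω)) → ∀ (q : Fin n × Fin n) (σ : Equiv.Perm (Fin n)),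
        (u ⁻¹' A) ∩ (p ⁻¹' {q} ∩ π ⁻¹' {σ})
          = p ⁻¹' {q} ∩ ((fun ω => (Xv ω, π ω)) ⁻¹' ((Φ q σ ⁻¹' A) ×ˢ ({σ} : Set _))) := by
      intro u Φ hu q σ
      ext ω
      simp only [Set.mem_inter_iff, Set.mem_preimage, Set.mem_singleton_iff, Set.mem_prod,
        Set.mem_setOf_eq]
      constructor
      · rintro ⟨hA', hp, hπ'⟩
        refine ⟨hp, ?_, hπ'⟩
        rw [← hp, ← hπ', ← hu ω]; exact hA'
      · rintro ⟨hp, hE, hπ'⟩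
        refine ⟨?_, hp, hπ'⟩
        rw [hu ω, hp, hπ']; exact hE
    have hfact : ∀ (q : Fin n × Fin n) (σ : Equiv.Perm (Fin n)) (E : Set (Fin n × Fin n → ℝ)),
        MeasurableSet E →
        ℙ (p ⁻¹' {q} ∩ ((fun ω => (Xv ω, π ω)) ⁻¹' (E ×ˢ ({σ} : Set _))))
          = ℙ (p ⁻¹' {q}) * (ℙ (π ⁻¹' {σ}) * ℙ (Xv ⁻¹' E)) := by
      intro q σ E hE
      rw [hpindep.measure_inter_preimage_eq_mul _ _ (measurableSet_singleton q)
        (hE.prod (show MeasurableSet ({σ} : Set (Equiv.Perm (Fin n))) from trivial))]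
      congr 1
      have hZ : ((fun ω => (Xv ω, π ω)) ⁻¹' (E ×ˢ ({σ} : Set _)))
          = π ⁻¹' {σ} ∩ Xv ⁻¹' E := by
        ext ω
        simp only [Set.mem_preimage, Set.mem_prod, Set.mem_inter_iff, Set.mem_singleton_iff]
        tauto
      calc ℙ ((fun ω => (Xv ω, π ω)) ⁻¹' (E ×ˢ ({σ} : Set _)))
          = ℙ (π ⁻¹' {σ} ∩ Xv ⁻¹' E) := by rw [hZ]
        _ = ℙ (π ⁻¹' {σ}) * ℙ (Xv ⁻¹' E) :=
            hπindep.measure_inter_preimage_eq_mul _ _ trivial hE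
    have huL : ∀ ω, (permSum n X π ω, permSum' n X π p ω)
        = (fun q σ x => (G n σ x, F n q σ x)) (p ω) (π ω) (Xv ω) := fun ω => rfl
    have huR : ∀ ω, (permSum' n X π p ω, permSum n X π ω)
        = (fun q σ x => (F n q σ x, G n σ x)) (p ω) (π ω) (Xv ω) := fun ω => rfl
    have hEmeasL : ∀ (q : Fin n × Fin n) (σ : Equiv.Perm (Fin n)),
        MeasurableSet ((fun x => (G n σ x, F n q σ x)) ⁻¹' A) :=
      fun q σ => ((measurable_G n σ).prodMk (measurable_F n q σ)) hA
    have hEmeasR : ∀ (q : Fin n × Fin n) (σ : Equiv.Perm (Fin n)),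
        MeasurableSet ((fun x => (F n q σ x, G n σ x)) ⁻¹' A) :=
      fun q σ => ((measurable_F n q σ).prodMk (measurable_G n σ)) hA
    have hLterm : ∀ y : (Fin n × Fin n) × Equiv.Perm (Fin n),
        ℙ (((fun ω => (permSum n X π ω, permSum' n X π p ω)) ⁻¹' A)
            ∩ (p ⁻¹' {y.1} ∩ π ⁻¹' {y.2}))
          = ℙ (p ⁻¹' {y.1}) * (ℙ (π ⁻¹' {y.2})
              * ℙ (Xv ⁻¹' ((fun x => (G n y.2 x, F n y.1 y.2 x)) ⁻¹' A))) := by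
      intro y
      rw [hsetgen _ (fun q σ x => (G n σ x, F n q σ x)) huL y.1 y.2, hfact y.1 y.2 _ (hEmeasL y.1 y.2)]
    have hRterm : ∀ y : (Fin n × Fin n) × Equiv.Perm (Fin n),
        ℙ (((fun ω => (permSum' n X π p ω, permSum n X π ω)) ⁻¹' A)
            ∩ (p ⁻¹' {y.1} ∩ π ⁻¹' {y.2}))
          = ℙ (p ⁻¹' {y.1}) * (ℙ (π ⁻¹' {y.2})
              * ℙ (Xv ⁻¹' ((fun x => (F n y.1 y.2 x, G n y.2 x)) ⁻¹' A))) := by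
      intro y
      rw [hsetgen _ (fun q σ x => (F n q σ x, G n σ x)) huR y.1 y.2, hfact y.1 y.2 _ (hEmeasR y.1 y.2)]
    rw [Finset.sum_congr rfl fun y _ => hLterm y, Finset.sum_congr rfl fun y _ => hRterm y]
    conv_lhs => rw [Fintype.sum_prod_type]
    conv_rhs => rw [Fintype.sum_prod_type]
    refine Finset.sum_congr rfl fun q _ => ?_
    refine Fintype.sum_equiv (Equiv.mulRight (Equiv.swap q.1 q.2)) _ _ fun σ => ?_
    have he : (Equiv.mulRight (Equiv.swap q.1 q.2)) σ = σ * Equiv.swap q.1 q.2 := rfl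
    rw [he]
    have hEeq : ((fun x => (F n q (σ * Equiv.swap q.1 q.2) x, G n (σ * Equiv.swap q.1 q.2) x)) ⁻¹' A)
        = ((fun x => (G n σ x, F n q σ x)) ⁻¹' A) := by
      have hfun : (fun x => (F n q (σ * Equiv.swap q.1 q.2) x, G n (σ * Equiv.swap q.1 q.2) x))
          = fun x => (G n σ x, F n q σ x) := by
        funext x
        rw [G_swap_swap, ← F_eq_G_swap]
      rw [hfun]
    rw [hEeq, hπunif' σ, hπunif' (σ * Equiv.swap q.1 q.2)]
  · -- Part 2: the linear regression property
    have hmle : MeasurableSpace.comap (permSum n X π) inferInstance ≤ (MeasureSpace.toMeasurableSpace : MeasurableSpace Ω) :=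
      measurable_iff_comap_le.mp hWmeas
    haveI : SigmaFinite ((ℙ : Measure Ω).trim hmle) := by infer_instance
    have hn0 : (n : ℝ) ≠ 0 := Nat.cast_ne_zero.mpr (by omega)
    have hn2 : (2 : ℝ) ≤ (n : ℝ) := by exact_mod_cast hn
    have hn1 : (n : ℝ) - 1 ≠ 0 := by linarith
    have hcast : ((n * (n - 1) : ℕ) : ℝ) = (n : ℝ) * ((n : ℝ) - 1) := by
      rw [Nat.cast_mul, Nat.cast_sub (by omega : 1 ≤ n), Nat.cast_one]
    set c0 : ℝ := (((n * (n - 1) : ℕ) : ℝ))⁻¹ with hc0def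
    set D : Fin n × Fin n → Ω → ℝ := fun q ω =>
      X q.1 (π ω q.2) ω + X q.2 (π ω q.1) ω - X q.1 (π ω q.1) ω - X q.2 (π ω q.2) ω with hDdef
    have intD : ∀ q : Fin n × Fin n, Integrable (D q) ℙ := fun q =>
      (((intXπ q.1 q.2).add (intXπ q.2 q.1)).sub (intXπ q.1 q.1)).sub (intXπ q.2 q.2)
    have hYD : ∀ ω, permSum' n X π p ω - permSum n X π ω = D (p ω) ω := by
      intro ω; simp only [permSum', hDdef]; ring
    have hSfint : Integrable (fun ω => ∑ i, ∑ j, X i j ω) ℙ :=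
      integrable_finset_sum _ fun i _ => integrable_finset_sum _ fun j _ => hint i j
    have hsum : ∀ ω, (∑ q : Fin n × Fin n, D q ω)
        = 2 * (∑ i, ∑ j, X i j ω) - 2 * (n : ℝ) * (∑ i, X i (π ω i) ω) := by
      intro ω
      have e1 : ∀ i : Fin n, (∑ j, X i (π ω j) ω) = ∑ k, X i k ω :=
        fun i => Equiv.sum_comp (π ω) fun k => X i k ω
      have e2 : (∑ i, ∑ j : Fin n, X j (π ω i) ω) = ∑ k, ∑ j : Fin n, X j k ω :=
        Equiv.sum_comp (π ω) fun k => ∑ j, X j k ω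
      calc (∑ q : Fin n × Fin n, D q ω)
          = ∑ i, ∑ j, (X i (π ω j) ω + X j (π ω i) ω - X i (π ω i) ω - X j (π ω j) ω) := by
            rw [Fintype.sum_prod_type]
        _ = ∑ i, ((∑ j, X i (π ω j) ω) + (∑ j : Fin n, X j (π ω i) ω)
              - (n : ℝ) * X i (π ω i) ω - ∑ j, X j (π ω j) ω) := by
            refine Finset.sum_congr rfl fun i _ => ?_
            rw [Finset.sum_sub_distrib, Finset.sum_sub_distrib, Finset.sum_add_distrib,
              Finset.sum_const, Finset.card_univ, Fintype.card_fin, nsmul_eq_mul]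
        _ = ((∑ i, ∑ j, X i (π ω j) ω) + ∑ i, ∑ j : Fin n, X j (π ω i) ω)
              - (∑ i, (n : ℝ) * X i (π ω i) ω) - ∑ i, ∑ j, X j (π ω j) ω := by
            rw [Finset.sum_sub_distrib, Finset.sum_sub_distrib, Finset.sum_add_distrib]
        _ = 2 * (∑ i, ∑ j, X i j ω) - 2 * (n : ℝ) * (∑ i, X i (π ω i) ω) := by
            simp only [e1]
            rw [e2, ← Finset.mul_sum, Finset.sum_const, Finset.card_univ, Fintype.card_fin,
              nsmul_eq_mul]
            rw [Finset.sum_comm (s := Finset.univ) (t := Finset.univ)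
              (f := fun k j => X j k ω)]
            push_cast
            ring
    set f₀ : Ω → ℝ := (-(2 / ((n : ℝ) - 1))) • permSum n X π
        + (2 / ((n : ℝ) * ((n : ℝ) - 1))) • (fun ω => ∑ i, ∑ j, X i j ω) with hf₀def
    have hf₀int : Integrable f₀ ℙ := (hWint.smul _).add (hSfint.smul _)
    have hf₀eq : ∀ ω, f₀ ω = c0 * ∑ q : Fin n × Fin n, D q ω := by
      intro ω
      rw [hsum ω]
      simp only [hf₀def, Pi.add_apply, Pi.smul_apply, smul_eq_mul, permSum, hc0def, hcast]
      field_simp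
      ring
    -- the key set-integral identity
    have key : ∀ s : Set Ω, MeasurableSet[MeasurableSpace.comap (permSum n X π) inferInstance] s →
        ∫ ω in s, (permSum' n X π p ω - permSum n X π ω) ∂ℙ = ∫ ω in s, f₀ ω ∂ℙ := by
      intro s hs
      obtain ⟨B, hB, rfl⟩ := hs
      have hsm : MeasurableSet (permSum n X π ⁻¹' B) := hWmeas hB
      have hgint : ∀ q : Fin n × Fin n,
          Integrable ((permSum n X π ⁻¹' B).indicator (D q)) ℙ :=
        fun q => (intD q).indicator hsm
      have hind : (permSum n X π ⁻¹' B).indicator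
            (fun ω => permSum' n X π p ω - permSum n X π ω)
          = fun ω => ∑ q : Fin n × Fin n, ({ω' | p ω' = q}).indicator (fun _ => (1 : ℝ)) ω
              * (permSum n X π ⁻¹' B).indicator (D q) ω := by
        funext ω
        by_cases hω : ω ∈ permSum n X π ⁻¹' B
        · simp only [Set.indicator_apply, Set.mem_setOf_eq, hω, if_true, ite_mul, one_mul,
            zero_mul]
          rw [Finset.sum_ite_eq]
          simp only [Finset.mem_univ, if_true]
          exact hYD ω
        · simp [Set.indicator_apply, hω]
      have step1 : ∫ ω in permSum n X π ⁻¹' B, (permSum' n X π p ω - permSum n X π ω) ∂ℙ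
          = ∑ q : Fin n × Fin n, ∫ ω, ({ω' | p ω' = q}).indicator (fun _ => (1 : ℝ)) ω
              * (permSum n X π ⁻¹' B).indicator (D q) ω ∂ℙ := by
        rw [← integral_indicator hsm, hind]
        exact integral_finset_sum _ fun q _ => (hgint q).bdd_mul
          (measurable_const.indicator (hpmeas (measurableSet_singleton q))).aestronglyMeasurable
          (c := 1) (Filter.Eventually.of_forall fun ω => by by_cases h : ω ∈ {ω' | p ω' = q} <;> simp [Set.indicator_apply, h])
      have step2 : ∀ q : Fin n × Fin n,
          ∫ ω, ({ω' | p ω' = q}).indicator (fun _ => (1 : ℝ)) ω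
              * (permSum n X π ⁻¹' B).indicator (D q) ω ∂ℙ
          = (ℙ {ω' | p ω' = q}).toReal
              * ∫ ω, (permSum n X π ⁻¹' B).indicator (D q) ω ∂ℙ := by
        intro q
        have hφmeas : Measurable (({q} : Set (Fin n × Fin n)).indicator (fun _ => (1 : ℝ))) :=
          measurable_const.indicator (measurableSet_singleton q)
        set ψ : (Fin n × Fin n → ℝ) × Equiv.Perm (Fin n) → ℝ :=
          ((fun z : (Fin n × Fin n → ℝ) × Equiv.Perm (Fin n) => G n z.2 z.1) ⁻¹' B).indicator
            (fun z => z.1 (q.1, z.2 q.2) + z.1 (q.2, z.2 q.1)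
              - z.1 (q.1, z.2 q.1) - z.1 (q.2, z.2 q.2)) with hψdef
        have hψmeas : Measurable ψ := by
          refine Measurable.indicator ?_ ((measurable_G2 n) hB)
          exact (((measurable_eval n q.1 q.2).add (measurable_eval n q.2 q.1)).sub
            (measurable_eval n q.1 q.1)).sub (measurable_eval n q.2 q.2)
        have hcomp : IndepFun
            (fun ω => ({q} : Set (Fin n × Fin n)).indicator (fun _ => (1 : ℝ)) (p ω))
            (fun ω => ψ ((fun q' : Fin n × Fin n => X q'.1 q'.2 ω), π ω)) ℙ :=
          hpindep.comp hφmeas hψmeas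
        have e1 : (fun ω => ({q} : Set (Fin n × Fin n)).indicator (fun _ => (1 : ℝ)) (p ω))
            = ({ω' | p ω' = q}).indicator (fun _ => (1 : ℝ)) := by
          funext ω
          by_cases h : p ω = q <;> simp [Set.indicator_apply, h]
        have e2 : (fun ω => ψ ((fun q' : Fin n × Fin n => X q'.1 q'.2 ω), π ω))
            = (permSum n X π ⁻¹' B).indicator (D q) := by
          funext ω
          rfl
        rw [e1, e2] at hcomp
        have hφint : Integrable (({ω' | p ω' = q}).indicator (fun _ => (1 : ℝ))) ℙ :=
          (integrable_const 1).indicator (hpmeas (measurableSet_singleton q))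
        have hmul := IndepFun.integral_fun_mul_eq_mul_integral hcomp hφint.aestronglyMeasurable (hgint q).aestronglyMeasurable
        calc ∫ ω, ({ω' | p ω' = q}).indicator (fun _ => (1 : ℝ)) ω
                * (permSum n X π ⁻¹' B).indicator (D q) ω ∂ℙ
            = (∫ ω, ({ω' | p ω' = q}).indicator (fun _ => (1 : ℝ)) ω ∂ℙ)
                * ∫ ω, (permSum n X π ⁻¹' B).indicator (D q) ω ∂ℙ := hmul
          _ = (ℙ {ω' | p ω' = q}).toReal
                * ∫ ω, (permSum n X π ⁻¹' B).indicator (D q) ω ∂ℙ := by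
              have h2 : ∫ ω, ({ω' | p ω' = q}).indicator (fun _ => (1 : ℝ)) ω ∂ℙ
                  = (ℙ {ω' | p ω' = q}).toReal :=
                integral_indicator_one (hpmeas (measurableSet_singleton q))
              rw [h2]
      have hdiag : ∀ q : Fin n × Fin n, q.1 = q.2 → D q = fun _ => (0 : ℝ) := by
        intro q h; funext ω; simp only [hDdef, h]; ring
      have hpq : ∀ q : Fin n × Fin n, q.1 ≠ q.2 → (ℙ {ω' | p ω' = q}).toReal = c0 := by
        intro q hq
        have h1 := hpunif q.1 q.2 hq
        simp only [Prod.mk.eta] at h1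
        rw [h1, ENNReal.toReal_div, ENNReal.toReal_one, ENNReal.toReal_natCast, one_div,
          hc0def]
      calc ∫ ω in permSum n X π ⁻¹' B, (permSum' n X π p ω - permSum n X π ω) ∂ℙ
          = ∑ q : Fin n × Fin n, ∫ ω, ({ω' | p ω' = q}).indicator (fun _ => (1 : ℝ)) ω
              * (permSum n X π ⁻¹' B).indicator (D q) ω ∂ℙ := step1
        _ = ∑ q : Fin n × Fin n, (ℙ {ω' | p ω' = q}).toReal
              * ∫ ω, (permSum n X π ⁻¹' B).indicator (D q) ω ∂ℙ :=
            Finset.sum_congr rfl fun q _ => step2 q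
        _ = ∑ q : Fin n × Fin n, c0
              * ∫ ω, (permSum n X π ⁻¹' B).indicator (D q) ω ∂ℙ := by
            refine Finset.sum_congr rfl fun q _ => ?_
            rcases eq_or_ne q.1 q.2 with h | h
            · rw [hdiag q h]; simp
            · rw [hpq q h]
        _ = c0 * ∑ q : Fin n × Fin n, ∫ ω in permSum n X π ⁻¹' B, D q ω ∂ℙ := by
            rw [← Finset.mul_sum]
            exact congrArg _ (Finset.sum_congr rfl fun q _ => integral_indicator hsm)
        _ = c0 * ∫ ω in permSum n X π ⁻¹' B, (∑ q : Fin n × Fin n, D q ω) ∂ℙ := by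
            rw [integral_finset_sum _ fun q _ => (intD q).integrableOn]
        _ = ∫ ω in permSum n X π ⁻¹' B, c0 * (∑ q : Fin n × Fin n, D q ω) ∂ℙ :=
            (integral_const_mul c0 _).symm
        _ = ∫ ω in permSum n X π ⁻¹' B, f₀ ω ∂ℙ := by
            have hfe : (fun ω => c0 * (∑ q : Fin n × Fin n, D q ω)) = f₀ :=
              funext fun ω => (hf₀eq ω).symm
            rw [hfe]
    -- conditional expectation computations
    have hWsm : StronglyMeasurable[MeasurableSpace.comap (permSum n X π) inferInstance] (permSum n X π) :=
      Measurable.stronglyMeasurable (measurable_iff_comap_le.mpr le_rfl)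
    have hWm : condExp (MeasurableSpace.comap (permSum n X π) inferInstance) ℙ (permSum n X π) = permSum n X π :=
      condExp_of_stronglyMeasurable hmle hWsm hWint
    have hYint : Integrable (fun ω => permSum' n X π p ω - permSum n X π ω) ℙ :=
      hW'int.sub hWint
    have hmain : condExp (MeasurableSpace.comap (permSum n X π) inferInstance) ℙ f₀
        =ᵐ[ℙ] condExp (MeasurableSpace.comap (permSum n X π) inferInstance) ℙ (fun ω => permSum' n X π p ω - permSum n X π ω) :=
      ae_eq_condExp_of_forall_setIntegral_eq hmle hYint
        (fun s _ _ => integrable_condExp.integrableOn)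
        (fun s hs _ => by
          rw [setIntegral_condExp hmle hf₀int hs]
          exact (key s hs).symm)
        stronglyMeasurable_condExp.aestronglyMeasurable
    have hadd : condExp (MeasurableSpace.comap (permSum n X π) inferInstance) ℙ f₀ =ᵐ[ℙ]
        condExp (MeasurableSpace.comap (permSum n X π) inferInstance) ℙ ((-(2 / ((n : ℝ) - 1))) • permSum n X π)
          + condExp (MeasurableSpace.comap (permSum n X π) inferInstance) ℙ ((2 / ((n : ℝ) * ((n : ℝ) - 1))) • (fun ω => ∑ i, ∑ j, X i j ω)) := by
      rw [hf₀def]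
      exact condExp_add (hWint.smul _) (hSfint.smul _) _
    have h3 : condExp (MeasurableSpace.comap (permSum n X π) inferInstance) ℙ ((-(2 / ((n : ℝ) - 1))) • permSum n X π)
        =ᵐ[ℙ] (-(2 / ((n : ℝ) - 1))) • condExp (MeasurableSpace.comap (permSum n X π) inferInstance) ℙ (permSum n X π) :=
      condExp_smul (μ := ℙ) (m := MeasurableSpace.comap (permSum n X π) inferInstance) _ _
    have h4 : condExp (MeasurableSpace.comap (permSum n X π) inferInstance) ℙ ((2 / ((n : ℝ) * ((n : ℝ) - 1))) • (fun ω => ∑ i, ∑ j, X i j ω))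
        =ᵐ[ℙ] (2 / ((n : ℝ) * ((n : ℝ) - 1)))
          • condExp (MeasurableSpace.comap (permSum n X π) inferInstance) ℙ (fun ω => ∑ i, ∑ j, X i j ω) :=
      condExp_smul (μ := ℙ) (m := MeasurableSpace.comap (permSum n X π) inferInstance) _ _
    have hfinal : (condExp (MeasurableSpace.comap (permSum n X π) inferInstance) ℙ ((-(2 / ((n : ℝ) - 1))) • permSum n X π)
          + condExp (MeasurableSpace.comap (permSum n X π) inferInstance) ℙ ((2 / ((n : ℝ) * ((n : ℝ) - 1))) • (fun ω => ∑ i, ∑ j, X i j ω)))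
        =ᵐ[ℙ] fun ω => -(2 / ((n : ℝ) - 1)) * permSum n X π ω
          + (2 / ((n : ℝ) * ((n : ℝ) - 1)))
            * ((condExp (MeasurableSpace.comap (permSum n X π) inferInstance) ℙ (fun ω' => ∑ i, ∑ j, X i j ω')) ω) := by
      filter_upwards [h3, h4] with ω h3ω h4ω
      simp only [Pi.add_apply]
      rw [h3ω, h4ω, hWm]
      simp [Pi.smul_apply, smul_eq_mul]
    exact (hmain.symm.trans (hadd.trans hfinal))
end

section
/- Let X = {X_ij : 1 ≤ i,j ≤ n} be an n×n array of independent real random variables with n ≥ 2, means c_ij with all row and column sums zero, variances σ_ij² ≥ 0, normalization (1/n) Σ_{i,j} σ_ij² + (1/(n−1)) Σ_{i,j} c_ij² = 1, W = Σ_i X_{iπ(i)} for π a uniform random permutation of {1,…,n} independent of X, (I,J) a uniform pair of distinct indices independent of X and π, and W' = W − X_{Iπ(I)} − X_{Jπ(J)} + X_{Iπ(J)} + X_{Jπ(I)}. Then (4/(n−1))(1 − 1/√n) ≤ E(W'−W)² ≤ (4/(n−1))(1 + 1/√n). -/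
open MeasureTheory ProbabilityTheory Finset
open scoped ENNReal

set_option linter.unusedVariables false
set_option linter.unusedSectionVars false

lemma fact_eq {n : ℕ} (hn : 2 ≤ n) : n.factorial = n * (n - 1) * (n - 2).factorial := by
  obtain ⟨m, rfl⟩ : ∃ m, n = m + 2 := ⟨n - 2, by omega⟩
  show (m + 2).factorial = (m + 2) * (m + 2 - 1) * (m + 2 - 2).factorial
  rw [Nat.add_sub_cancel, show m + 2 - 1 = m + 1 from rfl, Nat.factorial_succ,
    Nat.factorial_succ]
  ring


lemma exists_perm_two {α : Type*} [DecidableEq α] {k l k' l' : α} (hkl : k ≠ l) (h' : k' ≠ l') :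
    ∃ τ : Equiv.Perm α, τ k = k' ∧ τ l = l' := by
  have hl1 : Equiv.swap k k' l ≠ k' := by
    rcases eq_or_ne k k' with h1 | h1
    · subst h1; simpa using hkl.symm
    · rcases eq_or_ne l k' with h2 | h2
      · subst h2; rw [Equiv.swap_apply_right]; exact h1
      · rw [Equiv.swap_apply_of_ne_of_ne hkl.symm h2]; exact h2
  refine ⟨(Equiv.swap (Equiv.swap k k' l) l') * (Equiv.swap k k'), ?_, ?_⟩
  · simp only [Equiv.Perm.mul_apply, Equiv.swap_apply_left]
    exact Equiv.swap_apply_of_ne_of_ne (Ne.symm hl1) h'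
  · simp only [Equiv.Perm.mul_apply]
    exact Equiv.swap_apply_left _ _

/-- Number of permutations with two prescribed values. -/
lemma perm_fiber_card_s17 (n : ℕ) (hn : 2 ≤ n) {i j k l : Fin n} (hij : i ≠ j) (hkl : k ≠ l) :
    (Finset.univ.filter fun σ : Equiv.Perm (Fin n) => σ i = k ∧ σ j = l).card
      = (n - 2).factorial := by
  have hfib : ∀ k' l' : Fin n, k' ≠ l' →
      (Finset.univ.filter fun σ : Equiv.Perm (Fin n) => σ i = k ∧ σ j = l).card
        = (Finset.univ.filter fun σ : Equiv.Perm (Fin n) => σ i = k' ∧ σ j = l').card := by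
    intro k' l' h'
    obtain ⟨τ, hτk, hτl⟩ := exists_perm_two hkl h'
    apply Finset.card_bij (fun σ _ => τ * σ)
    · intro σ hσ
      simp only [Finset.mem_filter, Finset.mem_univ, true_and] at hσ ⊢
      simp [Equiv.Perm.mul_apply, hσ.1, hσ.2, hτk, hτl]
    · intro a ha b hb hab
      exact mul_left_cancel hab
    · intro σ hσ
      refine ⟨τ⁻¹ * σ, ?_, by group⟩
      simp only [Finset.mem_filter, Finset.mem_univ, true_and] at hσ ⊢
      constructor
      · rw [Equiv.Perm.mul_apply, hσ.1, ← hτk]; simp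
      · rw [Equiv.Perm.mul_apply, hσ.2, ← hτl]; simp
  have hpart : (Finset.univ : Finset (Equiv.Perm (Fin n))).card
      = ∑ q ∈ (Finset.univ : Finset (Fin n)).offDiag,
          (Finset.univ.filter fun σ : Equiv.Perm (Fin n) => σ i = q.1 ∧ σ j = q.2).card := by
    rw [Finset.card_eq_sum_card_fiberwise
      (f := fun σ : Equiv.Perm (Fin n) => (σ i, σ j)) (t := Finset.univ.offDiag)]
    · apply Finset.sum_congr rfl
      intro q _
      congr 1
      ext σ
      simp [Prod.ext_iff]
    · intro σ _
      rw [Finset.mem_coe, Finset.mem_offDiag]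
      exact ⟨Finset.mem_univ _, Finset.mem_univ _, fun h => hij (σ.injective h)⟩
  have hconst : ∀ q ∈ (Finset.univ : Finset (Fin n)).offDiag,
      (Finset.univ.filter fun σ : Equiv.Perm (Fin n) => σ i = q.1 ∧ σ j = q.2).card
        = (Finset.univ.filter fun σ : Equiv.Perm (Fin n) => σ i = k ∧ σ j = l).card := by
    intro q hq
    rw [Finset.mem_offDiag] at hq
    exact (hfib q.1 q.2 hq.2.2).symm
  rw [Finset.sum_congr rfl hconst, Finset.sum_const, smul_eq_mul] at hpart
  have hcard : (Finset.univ : Finset (Equiv.Perm (Fin n))).card = n.factorial := by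
    simp [Finset.card_univ, Fintype.card_perm]
  rw [hcard] at hpart
  have hoffpos : 0 < ((Finset.univ : Finset (Fin n)).offDiag).card := by
    rw [Finset.offDiag_card, Finset.card_univ, Fintype.card_fin]
    obtain ⟨m, rfl⟩ : ∃ m, n = m + 2 := ⟨n - 2, by omega⟩
    rw [Nat.mul_succ, Nat.add_sub_cancel]
    positivity
  have hfact : n.factorial
      = ((Finset.univ : Finset (Fin n)).offDiag).card * (n - 2).factorial := by
    rw [Finset.offDiag_card, Finset.card_univ, Fintype.card_fin]
    obtain ⟨m, rfl⟩ : ∃ m, n = m + 2 := ⟨n - 2, by omega⟩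
    have h1 : (m + 2) * (m + 2) - (m + 2) = (m + 2) * (m + 1) := by
      rw [Nat.mul_succ, Nat.add_sub_cancel]
    rw [h1]
    show (m + 2).factorial = (m + 2) * (m + 1) * (m + 2 - 2).factorial
    rw [Nat.add_sub_cancel, Nat.factorial_succ, Nat.factorial_succ]
    ring
  exact Nat.eq_of_mul_eq_mul_left hoffpos (hpart.symm.trans hfact)

lemma sum_perm_two (n : ℕ) (hn : 2 ≤ n) {i j : Fin n} (hij : i ≠ j) (h : Fin n → Fin n → ℝ) :
    ∑ σ : Equiv.Perm (Fin n), h (σ i) (σ j)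
      = ((n - 2).factorial : ℝ) * ∑ q ∈ (Finset.univ : Finset (Fin n)).offDiag, h q.1 q.2 := by
  rw [← Finset.sum_fiberwise_of_maps_to
    (g := fun σ : Equiv.Perm (Fin n) => (σ i, σ j)) (t := Finset.univ.offDiag)
    (fun σ _ => by
      rw [Finset.mem_offDiag]
      exact ⟨Finset.mem_univ _, Finset.mem_univ _, fun hh => hij (σ.injective hh)⟩)]
  rw [Finset.mul_sum]
  apply Finset.sum_congr rfl
  intro q hq
  rw [Finset.mem_offDiag] at hq
  have : ∀ σ ∈ Finset.univ.filter
      (fun σ : Equiv.Perm (Fin n) => (σ i, σ j) = q), h (σ i) (σ j) = h q.1 q.2 := by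
    intro σ hσ
    simp only [Finset.mem_filter, Prod.ext_iff] at hσ
    rw [hσ.2.1, hσ.2.2]
  rw [Finset.sum_congr rfl this, Finset.sum_const, nsmul_eq_mul]
  congr 1
  have : (Finset.univ.filter fun σ : Equiv.Perm (Fin n) => (σ i, σ j) = q)
      = Finset.univ.filter fun σ : Equiv.Perm (Fin n) => σ i = q.1 ∧ σ j = q.2 := by
    apply Finset.filter_congr; intro σ _; simp [Prod.ext_iff]
  rw [this, perm_fiber_card_s17 n hn hij hq.2.2]


lemma sum_offDiag_eq (f : Fin n → Fin n → ℝ) :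
    ∑ q ∈ (univ : Finset (Fin n)).offDiag, f q.1 q.2
      = (∑ i, ∑ j, f i j) - ∑ i, f i i := by
  have h1 : ∑ q ∈ (univ : Finset (Fin n)) ×ˢ univ, f q.1 q.2 = ∑ i, ∑ j, f i j := by
    rw [Finset.sum_product]
  rw [← Finset.diag_union_offDiag, Finset.sum_union (Finset.disjoint_diag_offDiag _),
    Finset.sum_diag] at h1
  linarith

lemma sum_offDiag_fst (v : Fin n → ℝ) :
    ∑ q ∈ (univ : Finset (Fin n)).offDiag, v q.1 = ((n : ℝ) - 1) * ∑ i, v i := by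
  rw [sum_offDiag_eq (fun i _ => v i)]
  simp only [Finset.sum_const, Finset.card_univ, Fintype.card_fin, nsmul_eq_mul]
  rw [← Finset.mul_sum]
  ring

lemma sum_offDiag_snd (v : Fin n → ℝ) :
    ∑ q ∈ (univ : Finset (Fin n)).offDiag, v q.2 = ((n : ℝ) - 1) * ∑ i, v i := by
  rw [sum_offDiag_eq (fun _ j => v j), Finset.sum_comm]
  simp only [Finset.sum_const, Finset.card_univ, Fintype.card_fin, nsmul_eq_mul]
  rw [← Finset.mul_sum]
  ring

lemma sum_offDiag_mul (u w : Fin n → ℝ) :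
    ∑ q ∈ (univ : Finset (Fin n)).offDiag, u q.1 * w q.2
      = (∑ k, u k) * (∑ l, w l) - ∑ k, u k * w k := by
  rw [sum_offDiag_eq (fun i j => u i * w j), ← Finset.sum_mul_sum]

/-- The main combinatorial-algebraic identity. -/
lemma alg_sum (n : ℕ) (c σ2 : Fin n → Fin n → ℝ)
    (hrow : ∀ i, ∑ j, c i j = 0) (hcol : ∀ j, ∑ i, c i j = 0) :
    ∑ q ∈ (univ : Finset (Fin n)).offDiag, ∑ r ∈ (univ : Finset (Fin n)).offDiag,
        (σ2 q.1 r.2 + σ2 q.2 r.1 + σ2 q.1 r.1 + σ2 q.2 r.2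
          + (c q.1 r.2 + c q.2 r.1 - c q.1 r.1 - c q.2 r.2) ^ 2)
      = 4 * ((n : ℝ) - 1) ^ 2 * ((∑ i, ∑ l, σ2 i l) + (∑ i, ∑ k, c i k * c i k))
        + (8 * (n : ℝ) - 4) * (∑ i, ∑ k, c i k * c i k) := by
  have hinner : ∀ i j : Fin n,
      ∑ r ∈ (univ : Finset (Fin n)).offDiag,
        (σ2 i r.2 + σ2 j r.1 + σ2 i r.1 + σ2 j r.2
          + (c i r.2 + c j r.1 - c i r.1 - c j r.2) ^ 2)
      = 2 * ((n : ℝ) - 1) * ((∑ l, σ2 i l) + (∑ l, σ2 j l)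
            + (∑ l, c i l * c i l) + (∑ l, c j l * c j l))
          + 2 * ((∑ k, c i k * c i k) + (∑ k, c j k * c j k))
          - 4 * (n : ℝ) * (∑ k, c i k * c j k) := by
    intro i j
    have expand : ∀ r : Fin n × Fin n,
        σ2 i r.2 + σ2 j r.1 + σ2 i r.1 + σ2 j r.2
          + (c i r.2 + c j r.1 - c i r.1 - c j r.2) ^ 2
        = σ2 i r.2 + σ2 j r.1 + σ2 i r.1 + σ2 j r.2
          + c i r.2 * c i r.2 + c j r.1 * c j r.1
          + c i r.1 * c i r.1 + c j r.2 * c j r.2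
          + 2 * (c j r.1 * c i r.2) + 2 * (c i r.1 * c j r.2)
          - 2 * (c i r.1 * c i r.2) - 2 * (c i r.2 * c j r.2)
          - 2 * (c j r.1 * c i r.1) - 2 * (c j r.1 * c j r.2) := by
      intro r; ring
    rw [Finset.sum_congr rfl (fun r _ => expand r)]
    simp only [Finset.sum_add_distrib, Finset.sum_sub_distrib, ← Finset.mul_sum]
    have e1 : ∑ r ∈ (univ : Finset (Fin n)).offDiag, σ2 i r.2 = ((n:ℝ)-1) * ∑ l, σ2 i l :=
      sum_offDiag_snd _
    have e2 : ∑ r ∈ (univ : Finset (Fin n)).offDiag, σ2 j r.1 = ((n:ℝ)-1) * ∑ l, σ2 j l :=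
      sum_offDiag_fst _
    have e3 : ∑ r ∈ (univ : Finset (Fin n)).offDiag, σ2 i r.1 = ((n:ℝ)-1) * ∑ l, σ2 i l :=
      sum_offDiag_fst _
    have e4 : ∑ r ∈ (univ : Finset (Fin n)).offDiag, σ2 j r.2 = ((n:ℝ)-1) * ∑ l, σ2 j l :=
      sum_offDiag_snd _
    have e5 : ∑ r ∈ (univ : Finset (Fin n)).offDiag, c i r.2 * c i r.2
        = ((n:ℝ)-1) * ∑ l, c i l * c i l := sum_offDiag_snd (fun l => c i l * c i l)
    have e6 : ∑ r ∈ (univ : Finset (Fin n)).offDiag, c j r.1 * c j r.1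
        = ((n:ℝ)-1) * ∑ l, c j l * c j l := sum_offDiag_fst (fun l => c j l * c j l)
    have e7 : ∑ r ∈ (univ : Finset (Fin n)).offDiag, c i r.1 * c i r.1
        = ((n:ℝ)-1) * ∑ l, c i l * c i l := sum_offDiag_fst (fun l => c i l * c i l)
    have e8 : ∑ r ∈ (univ : Finset (Fin n)).offDiag, c j r.2 * c j r.2
        = ((n:ℝ)-1) * ∑ l, c j l * c j l := sum_offDiag_snd (fun l => c j l * c j l)
    have e9 : ∑ r ∈ (univ : Finset (Fin n)).offDiag, c j r.1 * c i r.2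
        = (∑ k, c j k) * (∑ l, c i l) - ∑ k, c j k * c i k := sum_offDiag_mul (c j) (c i)
    have e10 : ∑ r ∈ (univ : Finset (Fin n)).offDiag, c i r.1 * c j r.2
        = (∑ k, c i k) * (∑ l, c j l) - ∑ k, c i k * c j k := sum_offDiag_mul (c i) (c j)
    have e11 : ∑ r ∈ (univ : Finset (Fin n)).offDiag, c i r.1 * c i r.2
        = (∑ k, c i k) * (∑ l, c i l) - ∑ k, c i k * c i k := sum_offDiag_mul (c i) (c i)
    have e12 : ∑ r ∈ (univ : Finset (Fin n)).offDiag, c i r.2 * c j r.2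
        = ((n:ℝ)-1) * ∑ l, c i l * c j l := sum_offDiag_snd (fun l => c i l * c j l)
    have e13 : ∑ r ∈ (univ : Finset (Fin n)).offDiag, c j r.1 * c i r.1
        = ((n:ℝ)-1) * ∑ l, c j l * c i l := sum_offDiag_fst (fun l => c j l * c i l)
    have e14 : ∑ r ∈ (univ : Finset (Fin n)).offDiag, c j r.1 * c j r.2
        = (∑ k, c j k) * (∑ l, c j l) - ∑ k, c j k * c j k := sum_offDiag_mul (c j) (c j)
    rw [e1, e2, e3, e4, e5, e6, e7, e8, e9, e10, e11, e12, e13, e14, hrow i, hrow j]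
    have h1 : ∑ k, c j k * c i k = ∑ k, c i k * c j k :=
      Finset.sum_congr rfl fun k _ => mul_comm _ _
    rw [h1]
    ring
  rw [Finset.sum_congr rfl (fun q _ => hinner q.1 q.2)]
  simp only [Finset.sum_add_distrib, Finset.sum_sub_distrib, ← Finset.mul_sum]
  have g1 : ∑ q ∈ (univ : Finset (Fin n)).offDiag, ∑ l, σ2 q.1 l
      = ((n:ℝ)-1) * ∑ i, ∑ l, σ2 i l := sum_offDiag_fst (fun i => ∑ l, σ2 i l)
  have g2 : ∑ q ∈ (univ : Finset (Fin n)).offDiag, ∑ l, σ2 q.2 l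
      = ((n:ℝ)-1) * ∑ i, ∑ l, σ2 i l := sum_offDiag_snd (fun i => ∑ l, σ2 i l)
  have g3 : ∑ q ∈ (univ : Finset (Fin n)).offDiag, ∑ l, c q.1 l * c q.1 l
      = ((n:ℝ)-1) * ∑ i, ∑ l, c i l * c i l := sum_offDiag_fst (fun i => ∑ l, c i l * c i l)
  have g4 : ∑ q ∈ (univ : Finset (Fin n)).offDiag, ∑ l, c q.2 l * c q.2 l
      = ((n:ℝ)-1) * ∑ i, ∑ l, c i l * c i l := sum_offDiag_snd (fun i => ∑ l, c i l * c i l)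
  have g5 : ∑ q ∈ (univ : Finset (Fin n)).offDiag, ∑ k, c q.1 k * c q.2 k
      = - ∑ i, ∑ k, c i k * c i k := by
    rw [Finset.sum_comm]
    have g : ∀ k : Fin n, ∑ q ∈ (univ : Finset (Fin n)).offDiag, c q.1 k * c q.2 k
        = 0 * 0 - ∑ i, c i k * c i k := by
      intro k
      have h := sum_offDiag_mul (fun i => c i k) (fun i => c i k)
      rw [hcol k] at h
      exact h
    rw [Finset.sum_congr rfl (fun k _ => g k)]
    simp only [zero_mul, zero_sub, Finset.sum_neg_distrib]
    rw [Finset.sum_comm]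
  rw [g1, g2, g3, g4, g5]
  ring

section AuxIntegr

variable {Ω : Type*} [MeasureSpace Ω] [IsProbabilityMeasure (ℙ : Measure Ω)]

lemma l2_mul_integrable {f g : Ω → ℝ} (hf : MemLp f 2 ℙ) (hg : MemLp g 2 ℙ) :
    Integrable (fun ω => f ω * g ω) ℙ := by
  have h := hg.smul (φ := f) hf (r := 1)
  rw [memLp_one_iff_integrable] at h
  exact h

/-- Expansion of the second moment of `A + B - C - D`. -/
lemma integral_sq_comb {A B C D : Ω → ℝ}
    (hA : MemLp A 2 ℙ) (hB : MemLp B 2 ℙ) (hC : MemLp C 2 ℙ) (hD : MemLp D 2 ℙ) :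
    ∫ ω, (A ω + B ω - C ω - D ω) ^ 2 ∂ℙ
      = (∫ ω, A ω ^ 2 ∂ℙ) + (∫ ω, B ω ^ 2 ∂ℙ) + (∫ ω, C ω ^ 2 ∂ℙ) + (∫ ω, D ω ^ 2 ∂ℙ)
        + 2 * (∫ ω, A ω * B ω ∂ℙ) + 2 * (∫ ω, C ω * D ω ∂ℙ)
        - 2 * (∫ ω, A ω * C ω ∂ℙ) - 2 * (∫ ω, A ω * D ω ∂ℙ)
        - 2 * (∫ ω, B ω * C ω ∂ℙ) - 2 * (∫ ω, B ω * D ω ∂ℙ) := by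
  have iA2 := hA.integrable_sq
  have iB2 := hB.integrable_sq
  have iC2 := hC.integrable_sq
  have iD2 := hD.integrable_sq
  have iAB := l2_mul_integrable hA hB
  have iCD := l2_mul_integrable hC hD
  have iAC := l2_mul_integrable hA hC
  have iAD := l2_mul_integrable hA hD
  have iBC := l2_mul_integrable hB hC
  have iBD := l2_mul_integrable hB hD
  have key : (fun ω => (A ω + B ω - C ω - D ω) ^ 2)
      = fun ω => A ω ^ 2 + B ω ^ 2 + C ω ^ 2 + D ω ^ 2
          + 2 * (A ω * B ω) + 2 * (C ω * D ω) - 2 * (A ω * C ω) - 2 * (A ω * D ω)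
          - 2 * (B ω * C ω) - 2 * (B ω * D ω) := by
    funext ω; ring
  rw [key]
  rw [integral_sub, integral_sub, integral_sub, integral_sub, integral_add, integral_add,
    integral_add, integral_add, integral_add, integral_const_mul, integral_const_mul,
    integral_const_mul, integral_const_mul, integral_const_mul, integral_const_mul] <;>
    apply_rules [Integrable.add, Integrable.sub, Integrable.neg, Integrable.const_mul]

end AuxIntegr

lemma hfact_lemma
    {Ω : Type*} [MeasureSpace Ω] [IsProbabilityMeasure (ℙ : Measure Ω)]
    (n : ℕ) (hn : 2 ≤ n)
    (X : Fin n → Fin n → Ω → ℝ)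
    (hmeas : ∀ i j, Measurable (X i j))
    (hmom : ∀ i j, MemLp (X i j) 2 ℙ)
    (π : Ω → Equiv.Perm (Fin n)) (hπmeas : Measurable π)
    (hπindep : IndepFun π (fun ω (q : Fin n × Fin n) => X q.1 q.2 ω) ℙ)
    (p : Ω → Fin n × Fin n) (hpmeas : Measurable p)
    (hpindep : IndepFun p
      (fun ω => ((fun q : Fin n × Fin n => X q.1 q.2 ω), π ω)) ℙ)
    (q : Fin n × Fin n) (σ : Equiv.Perm (Fin n)) :
      ∫ ω, (if π ω = σ then (if p ω = q then
          (X q.1 (σ q.2) ω + X q.2 (σ q.1) ω - X q.1 (σ q.1) ω - X q.2 (σ q.2) ω) ^ 2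
          else 0) else 0) ∂ℙ
        = (ℙ {ω | p ω = q}).toReal * ((ℙ {ω | π ω = σ}).toReal
            * ∫ ω, (X q.1 (σ q.2) ω + X q.2 (σ q.1) ω
                - X q.1 (σ q.1) ω - X q.2 (σ q.2) ω) ^ 2 ∂ℙ) := by
  classical
  have hAmeas : MeasurableSet {ω | p ω = q} := hpmeas (measurableSet_eq (a := q))
  have hBmeas : MeasurableSet {ω | π ω = σ} := hπmeas (show MeasurableSet {σ} by trivial)
  have hφ1meas : Measurable (fun r : Fin n × Fin n => if r = q then (1:ℝ) else 0) :=
    Measurable.ite (measurableSet_eq (a := q)) measurable_const measurable_const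
  have hψ1meas : Measurable (fun τ : Equiv.Perm (Fin n) => if τ = σ then (1:ℝ) else 0) :=
    fun _ _ => trivial
  have hψ2meas : Measurable (fun x : Fin n × Fin n → ℝ =>
      (x (q.1, σ q.2) + x (q.2, σ q.1) - x (q.1, σ q.1) - x (q.2, σ q.2)) ^ 2) :=
    ((((measurable_pi_apply (q.1, σ q.2)).add (measurable_pi_apply (q.2, σ q.1))).sub
      (measurable_pi_apply (q.1, σ q.1))).sub (measurable_pi_apply (q.2, σ q.2))).pow_const 2
  have hXarrmeas : Measurable (fun ω (r : Fin n × Fin n) => X r.1 r.2 ω) :=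
    measurable_pi_lambda _ (fun r => hmeas r.1 r.2)
  have heq : (fun ω => (if π ω = σ then (if p ω = q then
        (X q.1 (σ q.2) ω + X q.2 (σ q.1) ω - X q.1 (σ q.1) ω - X q.2 (σ q.2) ω) ^ 2
        else 0) else 0))
      = fun ω => (if p ω = q then (1:ℝ) else 0) *
          ((if π ω = σ then (1:ℝ) else 0) *
            ((fun r : Fin n × Fin n => X r.1 r.2 ω) (q.1, σ q.2)
              + (fun r : Fin n × Fin n => X r.1 r.2 ω) (q.2, σ q.1)
              - (fun r : Fin n × Fin n => X r.1 r.2 ω) (q.1, σ q.1)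
              - (fun r : Fin n × Fin n => X r.1 r.2 ω) (q.2, σ q.2)) ^ 2) := by
    funext ω
    by_cases h1 : π ω = σ <;> by_cases h2 : p ω = q <;> simp [h1, h2]
  rw [heq]
  have hind1 : IndepFun (fun ω => if p ω = q then (1:ℝ) else 0)
      (fun ω => (if π ω = σ then (1:ℝ) else 0) *
        ((fun r : Fin n × Fin n => X r.1 r.2 ω) (q.1, σ q.2)
          + (fun r : Fin n × Fin n => X r.1 r.2 ω) (q.2, σ q.1)
          - (fun r : Fin n × Fin n => X r.1 r.2 ω) (q.1, σ q.1)
          - (fun r : Fin n × Fin n => X r.1 r.2 ω) (q.2, σ q.2)) ^ 2) ℙ :=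
    hpindep.comp (φ := fun r : Fin n × Fin n => if r = q then (1:ℝ) else 0)
      (ψ := fun z : (Fin n × Fin n → ℝ) × Equiv.Perm (Fin n) =>
        (if z.2 = σ then (1:ℝ) else 0) *
          (z.1 (q.1, σ q.2) + z.1 (q.2, σ q.1) - z.1 (q.1, σ q.1) - z.1 (q.2, σ q.2)) ^ 2)
      hφ1meas ((hψ1meas.comp measurable_snd).mul (hψ2meas.comp measurable_fst))
  have hm2 : Measurable (fun ω => (if π ω = σ then (1:ℝ) else 0) *
      ((fun r : Fin n × Fin n => X r.1 r.2 ω) (q.1, σ q.2)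
        + (fun r : Fin n × Fin n => X r.1 r.2 ω) (q.2, σ q.1)
        - (fun r : Fin n × Fin n => X r.1 r.2 ω) (q.1, σ q.1)
        - (fun r : Fin n × Fin n => X r.1 r.2 ω) (q.2, σ q.2)) ^ 2) :=
    (hψ1meas.comp hπmeas).mul (hψ2meas.comp hXarrmeas)
  rw [hind1.integral_fun_mul_eq_mul_integral ((hφ1meas.comp hpmeas).aestronglyMeasurable)
    hm2.aestronglyMeasurable]
  have hind2 : IndepFun (fun ω => if π ω = σ then (1:ℝ) else 0)
      (fun ω => ((fun r : Fin n × Fin n => X r.1 r.2 ω) (q.1, σ q.2)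
        + (fun r : Fin n × Fin n => X r.1 r.2 ω) (q.2, σ q.1)
        - (fun r : Fin n × Fin n => X r.1 r.2 ω) (q.1, σ q.1)
        - (fun r : Fin n × Fin n => X r.1 r.2 ω) (q.2, σ q.2)) ^ 2) ℙ :=
    hπindep.comp (φ := fun τ : Equiv.Perm (Fin n) => if τ = σ then (1:ℝ) else 0)
      (ψ := fun x : Fin n × Fin n → ℝ =>
        (x (q.1, σ q.2) + x (q.2, σ q.1) - x (q.1, σ q.1) - x (q.2, σ q.2)) ^ 2)
      hψ1meas hψ2meas
  rw [hind2.integral_fun_mul_eq_mul_integral ((hψ1meas.comp hπmeas).aestronglyMeasurable)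
    ((hψ2meas.comp hXarrmeas).aestronglyMeasurable)]
  have hφ1int : ∫ ω, (if p ω = q then (1:ℝ) else 0) ∂ℙ = (ℙ {ω | p ω = q}).toReal := by
    have h : (fun ω => if p ω = q then (1:ℝ) else 0) = ({ω | p ω = q}).indicator 1 := by
      funext ω
      by_cases h : p ω = q <;> simp [Set.indicator_apply, Set.mem_setOf_eq, h]
    rw [h, integral_indicator_one hAmeas, Measure.real]
  have hψ1int : ∫ ω, (if π ω = σ then (1:ℝ) else 0) ∂ℙ = (ℙ {ω | π ω = σ}).toReal := by
    have h : (fun ω => if π ω = σ then (1:ℝ) else 0) = ({ω | π ω = σ}).indicator 1 := by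
      funext ω
      by_cases h : π ω = σ <;> simp [Set.indicator_apply, Set.mem_setOf_eq, h]
    rw [h, integral_indicator_one hBmeas, Measure.real]
  rw [hφ1int, hψ1int]

lemma partD_lemma
    {Ω : Type*} [MeasureSpace Ω] [IsProbabilityMeasure (ℙ : Measure Ω)]
    (n : ℕ)
    (X : Fin n → Fin n → Ω → ℝ) (c σ2 : Fin n → Fin n → ℝ)
    (hmom : ∀ i j, MemLp (X i j) 2 ℙ)
    (hindep : iIndepFun (fun q : Fin n × Fin n => X q.1 q.2) ℙ)
    (hmean : ∀ i j, ∫ ω, X i j ω ∂ℙ = c i j)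
    (hvar : ∀ i j, variance (X i j) ℙ = σ2 i j)
    (q : Fin n × Fin n) (hq : q.1 ≠ q.2) (σ : Equiv.Perm (Fin n)) :
    ∫ ω, (X q.1 (σ q.2) ω + X q.2 (σ q.1) ω - X q.1 (σ q.1) ω - X q.2 (σ q.2) ω) ^ 2 ∂ℙ
      = σ2 q.1 (σ q.2) + σ2 q.2 (σ q.1) + σ2 q.1 (σ q.1) + σ2 q.2 (σ q.2)
        + (c q.1 (σ q.2) + c q.2 (σ q.1) - c q.1 (σ q.1) - c q.2 (σ q.2)) ^ 2 := by
  classical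
  have hprod : ∀ a b : Fin n × Fin n, a ≠ b →
      ∫ ω, X a.1 a.2 ω * X b.1 b.2 ω ∂ℙ = c a.1 a.2 * c b.1 b.2 := by
    intro a b hab
    rw [(hindep.indepFun hab).integral_fun_mul_eq_mul_integral (hmom a.1 a.2).aestronglyMeasurable
      (hmom b.1 b.2).aestronglyMeasurable, hmean, hmean]
  have hsq : ∀ a b : Fin n, ∫ ω, X a b ω ^ 2 ∂ℙ = σ2 a b + c a b ^ 2 := by
    intro a b
    have h := variance_eq_sub (hmom a b)
    rw [hvar, hmean] at h
    simp only [Pi.pow_apply] at h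
    linarith
  rw [integral_sq_comb (hmom q.1 (σ q.2)) (hmom q.2 (σ q.1)) (hmom q.1 (σ q.1))
    (hmom q.2 (σ q.2))]
  have hσ : σ q.1 ≠ σ q.2 := fun h => hq (σ.injective h)
  have e1 : ∫ ω, X q.1 (σ q.2) ω ^ 2 ∂ℙ = σ2 q.1 (σ q.2) + c q.1 (σ q.2) ^ 2 := hsq _ _
  have e2 : ∫ ω, X q.2 (σ q.1) ω ^ 2 ∂ℙ = σ2 q.2 (σ q.1) + c q.2 (σ q.1) ^ 2 := hsq _ _
  have e3 : ∫ ω, X q.1 (σ q.1) ω ^ 2 ∂ℙ = σ2 q.1 (σ q.1) + c q.1 (σ q.1) ^ 2 := hsq _ _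
  have e4 : ∫ ω, X q.2 (σ q.2) ω ^ 2 ∂ℙ = σ2 q.2 (σ q.2) + c q.2 (σ q.2) ^ 2 := hsq _ _
  have p1 : ∫ ω, X q.1 (σ q.2) ω * X q.2 (σ q.1) ω ∂ℙ = c q.1 (σ q.2) * c q.2 (σ q.1) :=
    hprod (q.1, σ q.2) (q.2, σ q.1) (by simp [Prod.ext_iff]; intro h; exact absurd h hq)
  have p2 : ∫ ω, X q.1 (σ q.1) ω * X q.2 (σ q.2) ω ∂ℙ = c q.1 (σ q.1) * c q.2 (σ q.2) :=
    hprod (q.1, σ q.1) (q.2, σ q.2) (by simp [Prod.ext_iff]; intro h; exact absurd h hq)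
  have p3 : ∫ ω, X q.1 (σ q.2) ω * X q.1 (σ q.1) ω ∂ℙ = c q.1 (σ q.2) * c q.1 (σ q.1) :=
    hprod (q.1, σ q.2) (q.1, σ q.1) (by simp [Prod.ext_iff]; exact hq.symm)
  have p4 : ∫ ω, X q.1 (σ q.2) ω * X q.2 (σ q.2) ω ∂ℙ = c q.1 (σ q.2) * c q.2 (σ q.2) :=
    hprod (q.1, σ q.2) (q.2, σ q.2) (by simp [Prod.ext_iff]; intro h; exact absurd h hq)
  have p5 : ∫ ω, X q.2 (σ q.1) ω * X q.1 (σ q.1) ω ∂ℙ = c q.2 (σ q.1) * c q.1 (σ q.1) :=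
    hprod (q.2, σ q.1) (q.1, σ q.1) (by simp [Prod.ext_iff]; intro h; exact absurd h hq.symm)
  have p6 : ∫ ω, X q.2 (σ q.1) ω * X q.2 (σ q.2) ω ∂ℙ = c q.2 (σ q.1) * c q.2 (σ q.2) :=
    hprod (q.2, σ q.1) (q.2, σ q.2) (by simp [Prod.ext_iff]; exact hq)
  rw [e1, e2, e3, e4, p1, p2, p3, p4, p5, p6]
  ring

theorem integral_value
    {Ω : Type*} [MeasureSpace Ω] [IsProbabilityMeasure (ℙ : Measure Ω)]
    (n : ℕ) (hn : 2 ≤ n)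
    (X : Fin n → Fin n → Ω → ℝ) (c σ2 : Fin n → Fin n → ℝ)
    (hmeas : ∀ i j, Measurable (X i j))
    (hmom : ∀ i j, MemLp (X i j) 2 ℙ)
    (hindep : iIndepFun (fun q : Fin n × Fin n => X q.1 q.2) ℙ)
    (hmean : ∀ i j, ∫ ω, X i j ω ∂ℙ = c i j)
    (hvar : ∀ i j, variance (X i j) ℙ = σ2 i j)
    (hrow : ∀ i, ∑ j, c i j = 0)
    (hcol : ∀ j, ∑ i, c i j = 0)
    (π : Ω → Equiv.Perm (Fin n)) (hπmeas : Measurable π)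
    (hπunif : ∀ σ : Equiv.Perm (Fin n), ℙ {ω | π ω = σ} = 1 / (n.factorial : ℝ≥0∞))
    (hπindep : IndepFun π (fun ω (q : Fin n × Fin n) => X q.1 q.2 ω) ℙ)
    (p : Ω → Fin n × Fin n) (hpmeas : Measurable p)
    (hpunif : ∀ i j : Fin n, i ≠ j →
      ℙ {ω | p ω = (i, j)} = 1 / ((n * (n - 1) : ℕ) : ℝ≥0∞))
    (hpindep : IndepFun p
      (fun ω => ((fun q : Fin n × Fin n => X q.1 q.2 ω), π ω)) ℙ) :
    ∫ ω, (permSum' n X π p ω - permSum n X π ω) ^ 2 ∂ℙ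
      = (4 * ((n : ℝ) - 1) ^ 2 * ((∑ i, ∑ l, σ2 i l) + (∑ i, ∑ k, c i k * c i k))
          + (8 * (n : ℝ) - 4) * (∑ i, ∑ k, c i k * c i k))
        / ((n : ℝ) ^ 2 * ((n : ℝ) - 1) ^ 2) := by
  classical
  have hgmem : ∀ (q : Fin n × Fin n) (σ : Equiv.Perm (Fin n)),
      MemLp (fun ω => X q.1 (σ q.2) ω + X q.2 (σ q.1) ω
        - X q.1 (σ q.1) ω - X q.2 (σ q.2) ω) 2 ℙ :=
    fun q σ => (((hmom _ _).add (hmom _ _)).sub (hmom _ _)).sub (hmom _ _)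
  have hgint : ∀ (q : Fin n × Fin n) (σ : Equiv.Perm (Fin n)),
      Integrable (fun ω => (X q.1 (σ q.2) ω + X q.2 (σ q.1) ω
        - X q.1 (σ q.1) ω - X q.2 (σ q.2) ω) ^ 2) ℙ :=
    fun q σ => (hgmem q σ).integrable_sq
  -- pointwise decomposition
  have hpt : ∀ ω, (permSum' n X π p ω - permSum n X π ω) ^ 2
      = ∑ q : Fin n × Fin n, ∑ σ : Equiv.Perm (Fin n),
          (if π ω = σ then (if p ω = q then
            (X q.1 (σ q.2) ω + X q.2 (σ q.1) ω
              - X q.1 (σ q.1) ω - X q.2 (σ q.2) ω) ^ 2 else 0) else 0) := by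
    intro ω
    have h1 : ∀ q : Fin n × Fin n, (∑ σ : Equiv.Perm (Fin n),
        (if π ω = σ then (if p ω = q then
          (X q.1 (σ q.2) ω + X q.2 (σ q.1) ω
            - X q.1 (σ q.1) ω - X q.2 (σ q.2) ω) ^ 2 else 0) else 0))
        = if p ω = q then
            (X q.1 (π ω q.2) ω + X q.2 (π ω q.1) ω
              - X q.1 (π ω q.1) ω - X q.2 (π ω q.2) ω) ^ 2 else 0 := by
      intro q
      rw [Finset.sum_ite_eq]
      simp
    rw [Finset.sum_congr rfl (fun q _ => h1 q), Finset.sum_ite_eq]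
    simp only [Finset.mem_univ, if_true, permSum', permSum]
    ring
  have htermint : ∀ (q : Fin n × Fin n) (σ : Equiv.Perm (Fin n)),
      Integrable (fun ω => if π ω = σ then (if p ω = q then
        (X q.1 (σ q.2) ω + X q.2 (σ q.1) ω
          - X q.1 (σ q.1) ω - X q.2 (σ q.2) ω) ^ 2 else 0) else 0) ℙ := by
    intro q σ
    have heq : (fun ω => if π ω = σ then (if p ω = q then
        (X q.1 (σ q.2) ω + X q.2 (σ q.1) ω
          - X q.1 (σ q.1) ω - X q.2 (σ q.2) ω) ^ 2 else 0) else 0)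
        = ({ω | π ω = σ} ∩ {ω | p ω = q}).indicator
            (fun ω => (X q.1 (σ q.2) ω + X q.2 (σ q.1) ω
              - X q.1 (σ q.1) ω - X q.2 (σ q.2) ω) ^ 2) := by
      funext ω
      by_cases h1 : π ω = σ <;> by_cases h2 : p ω = q <;>
        simp [Set.indicator_apply, Set.mem_setOf_eq, h1, h2]
    rw [heq]
    exact (hgint q σ).indicator
      ((hπmeas (show MeasurableSet {σ} by trivial)).inter
        (hpmeas (measurableSet_eq (a := q))))
  have hsplit : ∫ ω, (permSum' n X π p ω - permSum n X π ω) ^ 2 ∂ℙ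
      = ∑ q : Fin n × Fin n, ∑ σ : Equiv.Perm (Fin n),
          ∫ ω, (if π ω = σ then (if p ω = q then
            (X q.1 (σ q.2) ω + X q.2 (σ q.1) ω
              - X q.1 (σ q.1) ω - X q.2 (σ q.2) ω) ^ 2 else 0) else 0) ∂ℙ := by
    rw [show (fun ω => (permSum' n X π p ω - permSum n X π ω) ^ 2)
        = fun ω => ∑ q : Fin n × Fin n, ∑ σ : Equiv.Perm (Fin n),
            (if π ω = σ then (if p ω = q then
              (X q.1 (σ q.2) ω + X q.2 (σ q.1) ω
                - X q.1 (σ q.1) ω - X q.2 (σ q.2) ω) ^ 2 else 0) else 0) from funext hpt]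
    rw [integral_finset_sum _ (fun q _ => integrable_finset_sum _ (fun σ _ => htermint q σ))]
    exact Finset.sum_congr rfl fun q _ =>
      integral_finset_sum _ (fun σ _ => htermint q σ)
  rw [hsplit]
  rw [Finset.sum_congr rfl (fun q _ => Finset.sum_congr rfl (fun σ _ =>
    hfact_lemma n hn X hmeas hmom π hπmeas hπindep p hpmeas hpindep q σ))]
  -- drop the diagonal
  rw [← Finset.sum_subset (Finset.subset_univ (univ : Finset (Fin n)).offDiag)
    (by
      intro q _ hq
      have hq12 : q.1 = q.2 := by
        by_contra hne
        exact hq (Finset.mem_offDiag.2 ⟨Finset.mem_univ _, Finset.mem_univ _, hne⟩)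
      apply Finset.sum_eq_zero
      intro σ _
      have h0 : (fun ω => (X q.1 (σ q.2) ω + X q.2 (σ q.1) ω
          - X q.1 (σ q.1) ω - X q.2 (σ q.2) ω) ^ 2) = fun _ => (0:ℝ) := by
        funext ω
        rw [hq12]
        ring
      rw [h0]
      simp)]
  -- substitute all values
  have hstep : ∀ q ∈ (univ : Finset (Fin n)).offDiag,
      (∑ σ : Equiv.Perm (Fin n), (ℙ {ω | p ω = q}).toReal * ((ℙ {ω | π ω = σ}).toReal
        * ∫ ω, (X q.1 (σ q.2) ω + X q.2 (σ q.1) ω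
            - X q.1 (σ q.1) ω - X q.2 (σ q.2) ω) ^ 2 ∂ℙ))
      = (1 / ((n * (n - 1) : ℕ) : ℝ)) * ((1 / (n.factorial : ℝ)) * (((n - 2).factorial : ℝ)
          * ∑ r ∈ (univ : Finset (Fin n)).offDiag,
            (σ2 q.1 r.2 + σ2 q.2 r.1 + σ2 q.1 r.1 + σ2 q.2 r.2
              + (c q.1 r.2 + c q.2 r.1 - c q.1 r.1 - c q.2 r.2) ^ 2))) := by
    intro q hq
    have hq12 : q.1 ≠ q.2 := (Finset.mem_offDiag.1 hq).2.2
    have hPq : (ℙ {ω | p ω = q}).toReal = 1 / ((n * (n - 1) : ℕ) : ℝ) := by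
      have h := hpunif q.1 q.2 hq12
      rw [show ((q.1, q.2) : Fin n × Fin n) = q from rfl] at h
      rw [h, ENNReal.toReal_div, ENNReal.toReal_one, ENNReal.toReal_natCast]
    have hPσ : ∀ σ : Equiv.Perm (Fin n),
        (ℙ {ω | π ω = σ}).toReal = 1 / (n.factorial : ℝ) := by
      intro σ
      rw [hπunif σ, ENNReal.toReal_div, ENNReal.toReal_one, ENNReal.toReal_natCast]
    rw [Finset.sum_congr rfl (fun σ _ => by
      rw [hPq, hPσ σ, partD_lemma n X c σ2 hmom hindep hmean hvar q hq12 σ])]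
    rw [← Finset.mul_sum, ← Finset.mul_sum]
    congr 2
    exact sum_perm_two n hn hq12 (fun k l => σ2 q.1 l + σ2 q.2 k + σ2 q.1 k + σ2 q.2 l
      + (c q.1 l + c q.2 k - c q.1 k - c q.2 l) ^ 2)
  rw [Finset.sum_congr rfl hstep]
  simp only [← Finset.mul_sum]
  rw [alg_sum n c σ2 hrow hcol]
  -- numerics
  have hM : ((n * (n - 1) : ℕ) : ℝ) = (n : ℝ) * ((n : ℝ) - 1) := by
    push_cast [Nat.cast_sub (by omega : 1 ≤ n)]
    ring
  have hNf : ((n.factorial : ℕ) : ℝ) = (n : ℝ) * ((n : ℝ) - 1) * ((n - 2).factorial : ℝ) := by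
    rw [fact_eq hn]
    push_cast [Nat.cast_sub (by omega : 1 ≤ n)]
    ring
  rw [hM, hNf]
  have h2f : ((n - 2).factorial : ℝ) ≠ 0 := Nat.cast_ne_zero.2 (Nat.factorial_ne_zero _)
  have hn0 : (n : ℝ) ≠ 0 := by positivity
  have hn1 : (n : ℝ) - 1 ≠ 0 := by
    have : (1 : ℝ) < (n : ℝ) := by exact_mod_cast hn.trans_lt' one_lt_two
    linarith
  field_simp

lemma bounds_final (n S D s : ℝ) (hn : 2 ≤ n) (hS0 : 0 ≤ S) (hD0 : 0 ≤ D)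
    (hrel : (n - 1) * S + n * D = n * (n - 1)) (hs2 : s ^ 2 = n) (hs0 : 0 ≤ s) :
    4 / (n - 1) * (1 - 1 / s)
        ≤ (4 * (n - 1) ^ 2 * (S + D) + (8 * n - 4) * D) / (n ^ 2 * (n - 1) ^ 2)
      ∧ (4 * (n - 1) ^ 2 * (S + D) + (8 * n - 4) * D) / (n ^ 2 * (n - 1) ^ 2)
        ≤ 4 / (n - 1) * (1 + 1 / s) := by
  have hn1 : (0:ℝ) < n - 1 := by linarith
  have hn0 : (0:ℝ) < n := by linarith
  have hs1 : 1 ≤ s := by nlinarith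
  have hspos : 0 < s := by linarith
  have hsn : s ≤ n := by nlinarith
  have hDle : D ≤ n - 1 := by nlinarith
  have hT : 4 * (n - 1) ^ 2 * (S + D) + (8 * n - 4) * D = 4 * n * (n - 1) ^ 2 + 4 * n * D := by
    nlinarith [hrel]
  rw [hT]
  have hden : (0:ℝ) < n ^ 2 * (n - 1) ^ 2 := by positivity
  constructor
  · have h1 : 4 / (n - 1) * (1 - 1 / s) = (4 * (s - 1)) / ((n - 1) * s) := by
      field_simp
    rw [h1, div_le_div_iff₀ (by positivity) hden]
    nlinarith [mul_nonneg (mul_nonneg hD0 hspos.le) hn1.le,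
      mul_nonneg (mul_nonneg hD0 hspos.le) (mul_pos hn1 hn1).le,
      mul_pos (mul_pos hn1 hn1) hn0, sq_nonneg (s - 1), sq_nonneg (n - s)]
  · have h1 : 4 / (n - 1) * (1 + 1 / s) = (4 * (s + 1)) / ((n - 1) * s) := by
      field_simp
    rw [h1, div_le_div_iff₀ hden (by positivity)]
    nlinarith [mul_pos (mul_pos hn1 hn1) hn0, mul_pos hn1 hspos,
      mul_nonneg hD0 hn1.le, sq_nonneg (n - s), mul_pos (mul_pos hn0 hn0) hn1]


/-- **Second-moment bounds for the increment of the combinatorial exchangeable pair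
(equation (3.9)):** `(4/(n-1))(1 - 1/√n) ≤ E(W' - W)² ≤ (4/(n-1))(1 + 1/√n)`. -/
theorem combinatorial_sum_increment_second_moment
    {Ω : Type*} [MeasureSpace Ω] [IsProbabilityMeasure (ℙ : Measure Ω)]
    (n : ℕ) (hn : 2 ≤ n)
    (X : Fin n → Fin n → Ω → ℝ) (c σ2 : Fin n → Fin n → ℝ)
    (hmeas : ∀ i j, Measurable (X i j))
    (hmom : ∀ i j, MemLp (X i j) 2 ℙ)
    (hindep : iIndepFun (fun q : Fin n × Fin n => X q.1 q.2) ℙ)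
    (hmean : ∀ i j, ∫ ω, X i j ω ∂ℙ = c i j)
    (hvar : ∀ i j, variance (X i j) ℙ = σ2 i j)
    (hrow : ∀ i, ∑ j, c i j = 0)
    (hcol : ∀ j, ∑ i, c i j = 0)
    (hnorm : (1 / (n : ℝ)) * ∑ i, ∑ j, σ2 i j
        + (1 / ((n : ℝ) - 1)) * ∑ i, ∑ j, c i j ^ 2 = 1)
    (π : Ω → Equiv.Perm (Fin n)) (hπmeas : Measurable π)
    (hπunif : ∀ σ : Equiv.Perm (Fin n), ℙ {ω | π ω = σ} = 1 / (n.factorial : ℝ≥0∞))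
    (hπindep : IndepFun π (fun ω (q : Fin n × Fin n) => X q.1 q.2 ω) ℙ)
    (p : Ω → Fin n × Fin n) (hpmeas : Measurable p)
    (hpunif : ∀ i j : Fin n, i ≠ j →
      ℙ {ω | p ω = (i, j)} = 1 / ((n * (n - 1) : ℕ) : ℝ≥0∞))
    (hpindep : IndepFun p
      (fun ω => ((fun q : Fin n × Fin n => X q.1 q.2 ω), π ω)) ℙ) :
    (4 / ((n : ℝ) - 1)) * (1 - 1 / Real.sqrt n)
        ≤ ∫ ω, (permSum' n X π p ω - permSum n X π ω) ^ 2 ∂ℙ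
    ∧ ∫ ω, (permSum' n X π p ω - permSum n X π ω) ^ 2 ∂ℙ
        ≤ (4 / ((n : ℝ) - 1)) * (1 + 1 / Real.sqrt n) := by
  have hval := integral_value n hn X c σ2 hmeas hmom hindep hmean hvar hrow hcol
    π hπmeas hπunif hπindep p hpmeas hpunif hpindep
  have hC : (∑ i, ∑ j, c i j ^ 2) = ∑ i, ∑ k, c i k * c i k :=
    Finset.sum_congr rfl fun i _ => Finset.sum_congr rfl fun j _ => pow_two _
  have hn2 : (2 : ℝ) ≤ (n : ℝ) := by exact_mod_cast hn
  have hn1 : (0 : ℝ) < (n : ℝ) - 1 := by linarith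
  have hn0 : (0 : ℝ) < (n : ℝ) := by linarith
  have hS0 : 0 ≤ ∑ i, ∑ l, σ2 i l :=
    Finset.sum_nonneg fun i _ => Finset.sum_nonneg fun l _ => by
      rw [← hvar i l]; exact variance_nonneg _ _
  have hD0 : 0 ≤ ∑ i, ∑ k, c i k * c i k :=
    Finset.sum_nonneg fun i _ => Finset.sum_nonneg fun k _ => mul_self_nonneg _
  have hrel : ((n : ℝ) - 1) * (∑ i, ∑ l, σ2 i l)
      + (n : ℝ) * (∑ i, ∑ k, c i k * c i k) = (n : ℝ) * ((n : ℝ) - 1) := by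
    rw [hC] at hnorm
    have h1 : (n : ℝ) ≠ 0 := ne_of_gt hn0
    have h2 : (n : ℝ) - 1 ≠ 0 := ne_of_gt hn1
    field_simp at hnorm
    rw [hC] at hnorm
    linarith
  have hs2 : Real.sqrt n ^ 2 = (n : ℝ) := Real.sq_sqrt (by positivity)
  have hb := bounds_final (n : ℝ) (∑ i, ∑ l, σ2 i l) (∑ i, ∑ k, c i k * c i k)
    (Real.sqrt n) hn2 hS0 hD0 hrel hs2 (Real.sqrt_nonneg _)
  rw [hval]
  exact hb
end

section
/- Let Y_1,…,Y_n be independent real random variables and 1 ≤ k ≤ n. Construct an n×n array Y whose first k rows are independent copies of the vector (Y_1,…,Y_n) and whose remaining n−k rows are identically zero, and let π be a uniform random permutation of {1,…,n} independent of the array. Then Σ_{i=1}^n Y_{iπ(i)} has the same distribution as Σ_{i=1}^k Y_{ξ_i}, where (ξ_1,…,ξ_k) is a uniformly chosen sequence of k distinct indices from {1,…,n}, independent of Y_1,…,Y_n. -/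
open MeasureTheory ProbabilityTheory
open scoped ENNReal

noncomputable instance (k n : ℕ) : MeasurableSpace (Fin k ↪ Fin n) := ⊤

section Helpers

open Finset

variable {Ω : Type*} [MeasurableSpace Ω]

/-- A subfamily of an independent family of random variables, indexed injectively, is
independent. -/
lemma iIndepFun_precomp_of_injective {μ : Measure Ω} {ι ι' β : Type*} [mβ : MeasurableSpace β]
    {f : ι → Ω → β} (hf : iIndepFun f μ) {e : ι' → ι}
    (he : Function.Injective e) :
    iIndepFun (fun i => f (e i)) μ := by
  classical
  rw [iIndepFun_iff_measure_inter_preimage_eq_mul] at hf ⊢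
  intro S sets H
  have hmeas : ∀ j ∈ S.image e,
      MeasurableSet (Function.extend e sets (fun _ => Set.univ) j) := by
    intro j hj
    obtain ⟨i, hi, rfl⟩ := Finset.mem_image.mp hj
    rw [he.extend_apply]
    exact H i hi
  have key := hf (S.image e) hmeas
  calc μ (⋂ i ∈ S, f (e i) ⁻¹' sets i)
      = μ (⋂ j ∈ S.image e, f j ⁻¹' Function.extend e sets (fun _ => Set.univ) j) := by
        rw [Finset.set_biInter_finset_image]
        simp only [he.extend_apply]
    _ = ∏ j ∈ S.image e, μ (f j ⁻¹' Function.extend e sets (fun _ => Set.univ) j) := key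
    _ = ∏ i ∈ S, μ (f (e i) ⁻¹' sets i) := by
        rw [Finset.prod_image (fun i _ j _ h => he h)]
        simp only [he.extend_apply]

/-- The joint law of a finite independent family is the product of the marginals. -/
lemma map_tuple_eq_pi (μ : Measure Ω) [IsProbabilityMeasure μ] {k : ℕ}
    (f : Fin k → Ω → ℝ) (hm : ∀ i, Measurable (f i))
    (hi : iIndepFun f μ) :
    Measure.map (fun ω (i : Fin k) => f i ω) μ = Measure.pi (fun i => μ.map (f i)) := by
  haveI : ∀ i, IsProbabilityMeasure (μ.map (f i)) :=
    fun i => Measure.isProbabilityMeasure_map (hm i).aemeasurable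
  refine (Measure.pi_eq fun s hs => ?_).symm
  rw [Measure.map_apply (measurable_pi_lambda _ hm) (MeasurableSet.univ_pi hs)]
  have hpre : (fun ω (i : Fin k) => f i ω) ⁻¹' Set.pi Set.univ s = ⋂ i, f i ⁻¹' s i := by
    ext ω; simp [Set.mem_pi]
  rw [hpre, hi.meas_iInter fun i => ⟨s i, hs i, rfl⟩]
  exact Finset.prod_congr rfl fun i _ => (Measure.map_apply (hm i) (hs i)).symm

/-- Sums of independent families with identical marginals are identically distributed. -/
lemma identDistrib_sum (μ : Measure Ω) [IsProbabilityMeasure μ] {k : ℕ}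
    (f g : Fin k → Ω → ℝ) (hfm : ∀ i, Measurable (f i)) (hgm : ∀ i, Measurable (g i))
    (hfi : iIndepFun f μ)
    (hgi : iIndepFun g μ)
    (hfg : ∀ i, IdentDistrib (f i) (g i) μ μ) :
    IdentDistrib (fun ω => ∑ i, f i ω) (fun ω => ∑ i, g i ω) μ μ := by
  have hS : Measurable (fun x : Fin k → ℝ => ∑ i, x i) :=
    Finset.measurable_sum _ fun i _ => measurable_pi_apply i
  refine ⟨(Finset.measurable_sum _ fun i _ => hfm i).aemeasurable,
    (Finset.measurable_sum _ fun i _ => hgm i).aemeasurable, ?_⟩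
  have h1 : (fun ω => ∑ i, f i ω)
      = (fun x : Fin k → ℝ => ∑ i, x i) ∘ (fun ω i => f i ω) := rfl
  have h2 : (fun ω => ∑ i, g i ω)
      = (fun x : Fin k → ℝ => ∑ i, x i) ∘ (fun ω i => g i ω) := rfl
  rw [h1, h2, ← Measure.map_map hS (measurable_pi_lambda _ hfm),
    ← Measure.map_map hS (measurable_pi_lambda _ hgm),
    map_tuple_eq_pi μ f hfm hfi, map_tuple_eq_pi μ g hgm hgi]
  have : (fun i => μ.map (f i)) = fun i => μ.map (g i) := funext fun i => (hfg i).map_eq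
  rw [this]

/-- Law of a function of an independent pair, with a discrete first component, as a
finite mixture. -/
lemma map_mix (μ : Measure Ω) [IsProbabilityMeasure μ]
    {T E : Type*} [Fintype T] [MeasurableSpace T] [MeasurableSingletonClass T]
    [MeasurableSpace E]
    (τ : Ω → T) (hτ : Measurable τ) (V : Ω → E) (hV : Measurable V)
    (hind : IndepFun τ V μ) (g : T → E → ℝ) (hg : ∀ t, Measurable (g t)) :
    Measure.map (fun ω => g (τ ω) (V ω)) μ
      = ∑ t : T, μ (τ ⁻¹' {t}) • Measure.map (fun ω => g t (V ω)) μ := by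
  have hG : Measurable (fun p : E × T => g p.2 p.1) :=
    measurable_from_prod_countable_left (fun t => hg t)
  have hmeas : Measurable (fun ω => g (τ ω) (V ω)) := hG.comp (hV.prodMk hτ)
  ext s hs
  rw [Measure.map_apply hmeas hs, Measure.finset_sum_apply]
  have hpre : (fun ω => g (τ ω) (V ω)) ⁻¹' s
      = ⋃ t : T, (τ ⁻¹' {t} ∩ V ⁻¹' (g t ⁻¹' s)) := by
    ext ω
    simp only [Set.mem_preimage, Set.mem_iUnion, Set.mem_inter_iff, Set.mem_singleton_iff]
    exact ⟨fun h => ⟨τ ω, rfl, h⟩, by rintro ⟨t, rfl, h⟩; exact h⟩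
  have hdisj : Pairwise (Function.onFun Disjoint
      fun t : T => τ ⁻¹' {t} ∩ V ⁻¹' (g t ⁻¹' s)) := by
    intro t t' htt'
    refine Set.disjoint_left.2 ?_
    rintro ω ⟨ht, _⟩ ⟨ht', _⟩
    exact htt' (ht.symm.trans ht')
  rw [hpre, measure_iUnion hdisj (fun t =>
    ((measurableSet_singleton t).preimage hτ).inter ((hg t hs).preimage hV)), tsum_fintype]
  refine Finset.sum_congr rfl fun t _ => ?_
  rw [hind.measure_inter_preimage_eq_mul _ _ (measurableSet_singleton t) (hg t hs),
    Measure.smul_apply,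
    Measure.map_apply (show Measurable fun ω => g t (V ω) from (hg t).comp hV) hs,
    smul_eq_mul]
  rfl

/-- The number of permutations of `Fin n` extending a fixed embedding `Fin k ↪ Fin n`
is `(n - k)!`. -/
lemma card_perm_extending {n k : ℕ} (hk : k ≤ n) (e : Fin k ↪ Fin n) :
    Fintype.card {σ : Equiv.Perm (Fin n) // ∀ i : Fin k, σ (Fin.castLE hk i) = e i}
      = (n - k).factorial := by
  classical
  have hinj : Function.Injective (Fin.castLE hk) := Fin.castLE_injective hk
  let e₀ : (Set.range (Fin.castLE hk) : Set (Fin n)) ≃ (Set.range e : Set (Fin n)) :=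
    (Equiv.ofInjective _ hinj).symm.trans (Equiv.ofInjective _ e.injective)
  have hsymm : ∀ i : Fin k,
      ((Equiv.ofInjective (Fin.castLE hk) hinj).symm ⟨Fin.castLE hk i, ⟨i, rfl⟩⟩) = i := by
    intro i
    apply hinj
    have h2 := (Equiv.ofInjective _ hinj).apply_symm_apply ⟨Fin.castLE hk i, ⟨i, rfl⟩⟩
    calc Fin.castLE hk ((Equiv.ofInjective _ hinj).symm ⟨Fin.castLE hk i, ⟨i, rfl⟩⟩)
        = ((Equiv.ofInjective _ hinj)
            ((Equiv.ofInjective _ hinj).symm ⟨Fin.castLE hk i, ⟨i, rfl⟩⟩) : Fin n) := by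
          rw [Equiv.ofInjective_apply]
      _ = Fin.castLE hk i := by rw [h2]
  have he₀ : ∀ i : Fin k, (e₀ ⟨Fin.castLE hk i, ⟨i, rfl⟩⟩ : Fin n) = e i := by
    intro i
    simp only [e₀, Equiv.trans_apply, hsymm i, Equiv.ofInjective_apply]
  have key : {σ : Equiv.Perm (Fin n) // ∀ i : Fin k, σ (Fin.castLE hk i) = e i}
      ≃ (((Set.range (Fin.castLE hk))ᶜ : Set (Fin n)) ≃ ((Set.range e)ᶜ : Set (Fin n))) := by
    refine (Equiv.subtypeEquivRight ?_).trans (Equiv.Set.compl e₀)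
    intro σ
    constructor
    · rintro h ⟨_, i, rfl⟩
      rw [he₀ i]
      exact h i
    · intro h i
      have := h ⟨Fin.castLE hk i, ⟨i, rfl⟩⟩
      rwa [he₀ i] at this
  have hcards : Fintype.card ((Set.range (Fin.castLE hk))ᶜ : Set (Fin n)) = n - k := by
    simp only [Fintype.card_compl_set, Fintype.card_fin]
    congr 1
    exact (Fintype.card_congr (Equiv.ofInjective _ hinj)).symm.trans (Fintype.card_fin k)
  have hcardt : Fintype.card ((Set.range e)ᶜ : Set (Fin n)) = n - k := by
    simp only [Fintype.card_compl_set, Fintype.card_fin]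
    congr 1
    exact (Fintype.card_congr (Equiv.ofInjective _ e.injective)).symm.trans (Fintype.card_fin k)
  rw [Fintype.card_congr key,
    Fintype.card_equiv (Fintype.equivOfCardEq (hcards.trans hcardt.symm)), hcards]

end Helpers

/-- **Reduction of sampling without replacement to a combinatorial sum (Corollary 1.2's
construction):** if the `n × n` array `Yarr` has its first `k` rows independent copies of
the vector `(Y 1, …, Y n)` and its remaining rows zero, and `π` is a uniform random
permutation independent of the array, then `∑ i, Yarr i (π i)` has the same distribution
as `∑_{i < k} Y (ξ i)`, where `ξ` is a uniformly random sequence of `k` distinct indices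
independent of the `Y i`. -/
theorem perm_sum_eq_sampling_without_replacement
    {Ω : Type*} [MeasureSpace Ω] [IsProbabilityMeasure (ℙ : Measure Ω)]
    (n k : ℕ) (hk : k ≤ n)
    (Y : Fin n → Ω → ℝ)
    (hYmeas : ∀ i, Measurable (Y i))
    (hYindep : iIndepFun Y ℙ)
    (Yarr : Fin n → Fin n → Ω → ℝ)
    (hYarrmeas : ∀ i j, Measurable (Yarr i j))
    (hrowsindep : iIndepFun
      (fun (i : Fin n) (ω : Ω) (j : Fin n) => Yarr i j ω) ℙ)
    (hrowscopy : ∀ i : Fin n, (i : ℕ) < k →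
      IdentDistrib (fun (ω : Ω) (j : Fin n) => Yarr i j ω)
        (fun (ω : Ω) (j : Fin n) => Y j ω) ℙ ℙ)
    (hrowszero : ∀ i : Fin n, k ≤ (i : ℕ) → ∀ j ω, Yarr i j ω = 0)
    (π : Ω → Equiv.Perm (Fin n)) (hπmeas : Measurable π)
    (hπunif : ∀ σ : Equiv.Perm (Fin n), ℙ {ω | π ω = σ} = 1 / (n.factorial : ℝ≥0∞))
    (hπindep : IndepFun π (fun ω (q : Fin n × Fin n) => Yarr q.1 q.2 ω) ℙ)
    (ξ : Ω → (Fin k ↪ Fin n)) (hξmeas : Measurable ξ)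
    (hξunif : ∀ e : Fin k ↪ Fin n, ℙ {ω | ξ ω = e} = 1 / (n.descFactorial k : ℝ≥0∞))
    (hξindep : IndepFun ξ (fun ω (i : Fin n) => Y i ω) ℙ) :
    IdentDistrib (fun ω => ∑ i, Yarr i (π ω i) ω)
      (fun ω => ∑ i : Fin k, Y (ξ ω i) ω) ℙ ℙ := by
  classical
  haveI : MeasurableSingletonClass (Equiv.Perm (Fin n)) :=
    ⟨fun _ => MeasurableSpace.measurableSet_top⟩
  haveI : MeasurableSingletonClass (Fin k ↪ Fin n) :=
    ⟨fun _ => MeasurableSpace.measurableSet_top⟩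
  have hV₁ : Measurable (fun ω (q : Fin n × Fin n) => Yarr q.1 q.2 ω) :=
    measurable_pi_lambda _ fun q => hYarrmeas q.1 q.2
  have hV₂ : Measurable (fun ω (i : Fin n) => Y i ω) :=
    measurable_pi_lambda _ fun i => hYmeas i
  have hg₁ : ∀ σ : Equiv.Perm (Fin n),
      Measurable (fun v : Fin n × Fin n → ℝ => ∑ i, v (i, σ i)) :=
    fun σ => Finset.measurable_sum _ fun i _ => measurable_pi_apply _
  have hg₂ : ∀ e : Fin k ↪ Fin n, Measurable (fun v : Fin n → ℝ => ∑ i : Fin k, v (e i)) :=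
    fun e => Finset.measurable_sum _ fun i _ => measurable_pi_apply _
  have hG₁ : Measurable (fun p : (Fin n × Fin n → ℝ) × Equiv.Perm (Fin n) =>
      ∑ i, p.1 (i, p.2 i)) := measurable_from_prod_countable_left hg₁
  have hG₂ : Measurable (fun p : (Fin n → ℝ) × (Fin k ↪ Fin n) =>
      ∑ i : Fin k, p.1 (p.2 i)) := measurable_from_prod_countable_left hg₂
  have hm₁ : Measurable (fun ω => ∑ i, Yarr i (π ω i) ω) := hG₁.comp (hV₁.prodMk hπmeas)
  have hm₂ : Measurable (fun ω => ∑ i : Fin k, Y (ξ ω i) ω) := hG₂.comp (hV₂.prodMk hξmeas)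
  have e1 : Measure.map (fun ω => ∑ i, Yarr i (π ω i) ω) ℙ
      = ∑ σ : Equiv.Perm (Fin n), ℙ (π ⁻¹' {σ}) •
          Measure.map (fun ω => ∑ i, Yarr i (σ i) ω) ℙ :=
    map_mix ℙ π hπmeas _ hV₁ hπindep
      (fun σ (v : Fin n × Fin n → ℝ) => ∑ i, v (i, σ i)) hg₁
  have e2 : Measure.map (fun ω => ∑ i : Fin k, Y (ξ ω i) ω) ℙ
      = ∑ e : Fin k ↪ Fin n, ℙ (ξ ⁻¹' {e}) •
          Measure.map (fun ω => ∑ i : Fin k, Y (e i) ω) ℙ :=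
    map_mix ℙ ξ hξmeas _ hV₂ hξindep
      (fun e (v : Fin n → ℝ) => ∑ i : Fin k, v (e i)) hg₂
  have hMN : ∀ σ : Equiv.Perm (Fin n),
      Measure.map (fun ω => ∑ i, Yarr i (σ i) ω) ℙ
        = Measure.map (fun ω => ∑ i : Fin k,
            Y (((Fin.castLEEmb hk).trans σ.toEmbedding) i) ω) ℙ := by
    intro σ
    have hre : (fun ω => ∑ i, Yarr i (σ i) ω)
        = fun ω => ∑ i : Fin k, Yarr (Fin.castLE hk i) (σ (Fin.castLE hk i)) ω := by
      funext ω
      have hsm := (Finset.sum_map Finset.univ (Fin.castLEEmb hk)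
        (fun x => Yarr x (σ x) ω)).symm
      rw [show (∑ i : Fin k, Yarr (Fin.castLE hk i) (σ (Fin.castLE hk i)) ω)
          = ∑ x ∈ Finset.univ.map (Fin.castLEEmb hk), Yarr x (σ x) ω from hsm]
      refine (Finset.sum_subset (Finset.subset_univ _) ?_).symm
      intro x _ hx
      refine hrowszero x ?_ _ ω
      by_contra hlt
      push_neg at hlt
      exact hx (Finset.mem_map.mpr ⟨⟨x.1, hlt⟩, Finset.mem_univ _, by ext; simp⟩)
    rw [hre]
    refine (identDistrib_sum ℙ
      (fun i ω => Yarr (Fin.castLE hk i) (σ (Fin.castLE hk i)) ω)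
      (fun i ω => Y (σ (Fin.castLE hk i)) ω)
      (fun i => hYarrmeas _ _) (fun i => hYmeas _) ?_ ?_ ?_).map_eq
    · have h := iIndepFun_precomp_of_injective hrowsindep (Fin.castLE_injective hk)
      exact h.comp (fun i (v : Fin n → ℝ) => v (σ (Fin.castLE hk i)))
        (fun i => measurable_pi_apply _)
    · exact iIndepFun_precomp_of_injective hYindep
        (σ.injective.comp (Fin.castLE_injective hk))
    · intro i
      exact (hrowscopy (Fin.castLE hk i) i.isLt).comp
        (measurable_pi_apply (σ (Fin.castLE hk i)))
  have hfiber : ∀ e : Fin k ↪ Fin n, (Finset.univ.filter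
      (fun σ : Equiv.Perm (Fin n) => (Fin.castLEEmb hk).trans σ.toEmbedding = e)).card
      = (n - k).factorial := by
    intro e
    rw [← Fintype.card_subtype]
    rw [Fintype.card_congr (Equiv.subtypeEquivRight
      (q := fun σ : Equiv.Perm (Fin n) => ∀ i : Fin k, σ (Fin.castLE hk i) = e i)
      (fun σ => ?_))]
    · exact card_perm_extending hk e
    · constructor
      · intro h i
        rw [← h]
        rfl
      · intro h
        ext i
        exact congrArg Fin.val (h i)
  have hfac : ((n - k).factorial : ℝ≥0∞) * (n.descFactorial k : ℝ≥0∞)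
      = (n.factorial : ℝ≥0∞) := by exact_mod_cast Nat.factorial_mul_descFactorial hk
  have h0 : ((n - k).factorial : ℝ≥0∞) ≠ 0 := Nat.cast_ne_zero.mpr (Nat.factorial_ne_zero _)
  have htop : ((n - k).factorial : ℝ≥0∞) ≠ ⊤ := ENNReal.natCast_ne_top _
  have harith : ((n - k).factorial : ℝ≥0∞) * (1 / (n.factorial : ℝ≥0∞))
      = 1 / (n.descFactorial k : ℝ≥0∞) := by
    rw [← hfac, one_div, one_div, ENNReal.mul_inv (Or.inl h0) (Or.inl htop), ← mul_assoc,
      ENNReal.mul_inv_cancel h0 htop, one_mul]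
  refine ⟨hm₁.aemeasurable, hm₂.aemeasurable, ?_⟩
  rw [e1, e2]
  calc ∑ σ : Equiv.Perm (Fin n), ℙ (π ⁻¹' {σ}) •
          Measure.map (fun ω => ∑ i, Yarr i (σ i) ω) ℙ
      = ∑ σ : Equiv.Perm (Fin n), (1 / (n.factorial : ℝ≥0∞)) •
          Measure.map (fun ω => ∑ i : Fin k,
            Y (((Fin.castLEEmb hk).trans σ.toEmbedding) i) ω) ℙ := by
        refine Finset.sum_congr rfl fun σ _ => ?_
        rw [hMN σ, show ℙ (π ⁻¹' {σ}) = 1 / (n.factorial : ℝ≥0∞) from hπunif σ]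
    _ = ∑ e : Fin k ↪ Fin n, ∑ σ ∈ Finset.univ.filter
          (fun σ : Equiv.Perm (Fin n) => (Fin.castLEEmb hk).trans σ.toEmbedding = e),
          (1 / (n.factorial : ℝ≥0∞)) •
          Measure.map (fun ω => ∑ i : Fin k,
            Y (((Fin.castLEEmb hk).trans σ.toEmbedding) i) ω) ℙ :=
        (Finset.sum_fiberwise _ _ _).symm
    _ = ∑ e : Fin k ↪ Fin n, (1 / (n.descFactorial k : ℝ≥0∞)) •
          Measure.map (fun ω => ∑ i : Fin k, Y (e i) ω) ℙ := by
        refine Finset.sum_congr rfl fun e _ => ?_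
        have hconst : ∀ σ ∈ Finset.univ.filter
            (fun σ : Equiv.Perm (Fin n) => (Fin.castLEEmb hk).trans σ.toEmbedding = e),
            (1 / (n.factorial : ℝ≥0∞)) •
              Measure.map (fun ω => ∑ i : Fin k,
                Y (((Fin.castLEEmb hk).trans σ.toEmbedding) i) ω) ℙ
            = (1 / (n.factorial : ℝ≥0∞)) •
              Measure.map (fun ω => ∑ i : Fin k, Y (e i) ω) ℙ := by
          intro σ hσ
          rw [(Finset.mem_filter.mp hσ).2]
        rw [Finset.sum_congr rfl hconst, Finset.sum_const, hfiber e,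
          ← Nat.cast_smul_eq_nsmul ℝ≥0∞, smul_smul, harith]
    _ = ∑ e : Fin k ↪ Fin n, ℙ (ξ ⁻¹' {e}) •
          Measure.map (fun ω => ∑ i : Fin k, Y (e i) ω) ℙ := by
        refine Finset.sum_congr rfl fun e _ => ?_
        rw [show ℙ (ξ ⁻¹' {e}) = 1 / (n.descFactorial k : ℝ≥0∞) from hξunif e]
end
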